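/- arXiv:2011.07051 — 7 statements merged into one kernel-verified Lean document; each statement's English description precedes it below -/
import Mathlib

section
/- Let Ω be a standard Borel probability space and let S, Z, N, W be random variables on Ω taking values in standard Borel spaces. Suppose (a) Z is conditionally independent of N given S; (b) Z is conditionally independent of W given the pair (S, N); and (c) S is independent of the pair (W, N). Then the pair (Z, S) is independent of the pair (W, N). -/
open MeasureTheory ProbabilityTheory

section StmtAux

/-- Pull-out property for the conditional expectation, in integral form. -/
private lemma aux_integral_mul_condexp {Ω : Type*} {m : MeasurableSpace Ω}
    [mΩ : MeasurableSpace Ω] {μ : Measure Ω} [IsFiniteMeasure μ] (hm : m ≤ mΩ)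
    {f g : Ω → ℝ} (hf : StronglyMeasurable[m] f) {c : ℝ}
    (hfc : ∀ᵐ x ∂μ, ‖f x‖ ≤ c) (hg : Integrable g μ) :
    ∫ x, f x * (μ[g|m]) x ∂μ = ∫ x, f x * g x ∂μ := by
  have hfg : Integrable (f * g) μ :=
    hg.bdd_mul ((hf.mono hm).aestronglyMeasurable) hfc
  have h1 : μ[f * g|m] =ᵐ[μ] f * μ[g|m] := condExp_mul_of_stronglyMeasurable_left hf hfg hg
  calc ∫ x, f x * (μ[g|m]) x ∂μ = ∫ x, (μ[f * g|m]) x ∂μ := (integral_congr_ae h1).symm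
    _ = ∫ x, f x * g x ∂μ := integral_condExp hm (f := f * g)

private lemma aux_sup_eq_generateFrom {Ω : Type*} (m1 m2 : MeasurableSpace Ω) :
    m1 ⊔ m2 = MeasurableSpace.generateFrom
      {t | ∃ B D, MeasurableSet[m1] B ∧ MeasurableSet[m2] D ∧ t = B ∩ D} := by
  refine le_antisymm (sup_le ?_ ?_) (MeasurableSpace.generateFrom_le ?_)
  · intro B hB
    exact MeasurableSpace.measurableSet_generateFrom
      ⟨B, Set.univ, hB, MeasurableSet.univ, by simp⟩
  · intro D hD
    exact MeasurableSpace.measurableSet_generateFrom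
      ⟨Set.univ, D, MeasurableSet.univ, hD, by simp⟩
  · rintro t ⟨B, D, hB, hD, rfl⟩
    exact ((le_sup_left : m1 ≤ m1 ⊔ m2) _ hB).inter ((le_sup_right : m2 ≤ m1 ⊔ m2) _ hD)

/-- If `σ(A) ⫫ m2 | m1` (in conditional-expectation form), then conditioning on `m1 ⊔ m2`
is a.e. the same as conditioning on `m1`. -/
private lemma aux_condexp_sup {Ω : Type*} {m1 m2 : MeasurableSpace Ω}
    [mΩ : MeasurableSpace Ω] {μ : Measure Ω} [IsProbabilityMeasure μ]
    (hm1 : m1 ≤ mΩ) (hm2 : m2 ≤ mΩ)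
    {A : Set Ω} (hA : MeasurableSet[mΩ] A)
    (h : ∀ D, MeasurableSet[m2] D → (μ⟦A ∩ D | m1⟧) =ᵐ[μ]
        fun ω => (μ⟦A | m1⟧) ω * (μ⟦D | m1⟧) ω) :
    (μ⟦A | m1 ⊔ m2⟧) =ᵐ[μ] (μ⟦A | m1⟧) := by
  have hm : m1 ⊔ m2 ≤ mΩ := sup_le hm1 hm2
  set f : Ω → ℝ := A.indicator (fun _ => (1:ℝ)) with hf_def
  have hf_int : Integrable f μ := (integrable_const (1:ℝ)).indicator hA
  have hg_int : Integrable (μ[f|m1]) μ := integrable_condExp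
  have hg1_bdd : ∀ᵐ x ∂μ, ‖(μ[f|m1]) x‖ ≤ (1:ℝ) := by
    have hb : ∀ᵐ x ∂μ, |f x| ≤ ((1 : NNReal) : ℝ) := by
      refine Filter.Eventually.of_forall fun x => ?_
      by_cases hx : x ∈ A <;> simp [hf_def, Set.indicator_apply, hx]
    filter_upwards [ae_bdd_condExp_of_ae_bdd hb] with x hx
    simpa [Real.norm_eq_abs] using hx
  have key : ∀ ⦃t⦄, MeasurableSet[m1 ⊔ m2] t →
      ∫ x in t, (μ[f|m1]) x ∂μ = ∫ x in t, f x ∂μ := by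
    refine MeasurableSpace.induction_on_inter (m := m1 ⊔ m2)
      (aux_sup_eq_generateFrom m1 m2) ?_ (by simp) ?_ ?_ ?_
    · -- π-system
      rintro t ⟨B, D, hB, hD, rfl⟩ t' ⟨B', D', hB', hD', rfl⟩ -
      exact ⟨B ∩ B', D ∩ D', hB.inter hB', hD.inter hD', by ext x; simp; tauto⟩
    · -- basic: t = B ∩ D
      rintro t ⟨B, D, hB, hD, rfl⟩
      have hBm : MeasurableSet[mΩ] B := hm1 _ hB
      have hDm : MeasurableSet[mΩ] D := hm2 _ hD
      set b : Ω → ℝ := B.indicator (fun _ => (1:ℝ)) with hb_def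
      set d : Ω → ℝ := D.indicator (fun _ => (1:ℝ)) with hd_def
      have hb_sm : StronglyMeasurable[m1] b := stronglyMeasurable_const.indicator hB
      have hb_bdd : ∀ᵐ x ∂μ, ‖b x‖ ≤ (1:ℝ) := by
        refine Filter.Eventually.of_forall fun x => ?_
        by_cases hx : x ∈ B <;> simp [hb_def, Set.indicator_apply, hx]
      have hbg_sm : StronglyMeasurable[m1] (fun x => b x * (μ[f|m1]) x) :=
        hb_sm.mul stronglyMeasurable_condExp
      have hbg_bdd : ∀ᵐ x ∂μ, ‖b x * (μ[f|m1]) x‖ ≤ (1:ℝ) := by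
        filter_upwards [hg1_bdd, hb_bdd] with x h1 h2
        calc ‖b x * (μ[f|m1]) x‖ = ‖b x‖ * ‖(μ[f|m1]) x‖ := norm_mul _ _
          _ ≤ 1 * 1 := mul_le_mul h2 h1 (norm_nonneg _) zero_le_one
          _ = 1 := one_mul 1
      have hd_int : Integrable d μ := (integrable_const (1:ℝ)).indicator hDm
      have hAD_int : Integrable ((A ∩ D).indicator (fun _ => (1:ℝ))) μ :=
        (integrable_const (1:ℝ)).indicator (hA.inter hDm)
      have L1 : ∫ x in B ∩ D, (μ[f|m1]) x ∂μ = ∫ x, (b x * (μ[f|m1]) x) * d x ∂μ := by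
        rw [← integral_indicator (hBm.inter hDm)]
        refine integral_congr_ae (Filter.Eventually.of_forall fun x => ?_)
        by_cases h1 : x ∈ B <;> by_cases h2 : x ∈ D <;>
          simp [hb_def, hd_def, Set.indicator_apply, h1, h2]
      have L2 : ∫ x, (b x * (μ[f|m1]) x) * d x ∂μ
          = ∫ x, (b x * (μ[f|m1]) x) * (μ[d|m1]) x ∂μ :=
        (aux_integral_mul_condexp hm1 hbg_sm hbg_bdd hd_int).symm
      have hAD := h D hD
      have L3 : ∫ x, (b x * (μ[f|m1]) x) * (μ[d|m1]) x ∂μ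
          = ∫ x, b x * (μ[(A ∩ D).indicator (fun _ => (1:ℝ))|m1]) x ∂μ := by
        refine integral_congr_ae ?_
        filter_upwards [hAD] with x hx
        rw [hx]; ring
      have L4 : ∫ x, b x * (μ[(A ∩ D).indicator (fun _ => (1:ℝ))|m1]) x ∂μ
          = ∫ x, b x * (A ∩ D).indicator (fun _ => (1:ℝ)) x ∂μ :=
        aux_integral_mul_condexp hm1 hb_sm hb_bdd hAD_int
      have L5 : ∫ x, b x * (A ∩ D).indicator (fun _ => (1:ℝ)) x ∂μ
          = ∫ x in B ∩ D, f x ∂μ := by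
        rw [← integral_indicator (hBm.inter hDm)]
        refine integral_congr_ae (Filter.Eventually.of_forall fun x => ?_)
        by_cases h1 : x ∈ B <;> by_cases h2 : x ∈ D <;> by_cases h3 : x ∈ A <;>
          simp [hb_def, hf_def, Set.indicator_apply, h1, h2, h3]
      rw [L1, L2, L3, L4, L5]
    · -- complement
      intro t ht hC
      have htm : MeasurableSet[mΩ] t := hm _ ht
      have e1 := integral_add_compl htm hg_int
      have e2 := integral_add_compl htm hf_int
      have e3 : ∫ x, (μ[f|m1]) x ∂μ = ∫ x, f x ∂μ := integral_condExp hm1 (f := f)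
      linarith
    · -- countable disjoint union
      intro g hdisj hgm hC
      rw [integral_iUnion (fun i => hm _ (hgm i)) hdisj hg_int.integrableOn,
        integral_iUnion (fun i => hm _ (hgm i)) hdisj hf_int.integrableOn]
      exact tsum_congr hC
  refine (ae_eq_condExp_of_forall_setIntegral_eq hm hf_int
    (fun s _ _ => hg_int.integrableOn) (fun s hs _ => key hs) ?_).symm
  exact ⟨μ[f|m1], stronglyMeasurable_condExp.mono le_sup_left, Filter.EventuallyEq.rfl⟩

private lemma aux_comap_prod {Ω α γ : Type*} {mα : MeasurableSpace α} {mγ : MeasurableSpace γ}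
    (S : Ω → α) (N : Ω → γ) :
    MeasurableSpace.comap (fun ω => (S ω, N ω)) inferInstance
      = MeasurableSpace.comap S mα ⊔ MeasurableSpace.comap N mγ := by
  rw [show (inferInstance : MeasurableSpace (α × γ))
      = mα.comap Prod.fst ⊔ mγ.comap Prod.snd from rfl,
    MeasurableSpace.comap_sup, MeasurableSpace.comap_comp, MeasurableSpace.comap_comp]
  rfl

private lemma aux_comap_eq_generateFrom {Ω α γ : Type*} {mα : MeasurableSpace α}
    {mγ : MeasurableSpace γ} (S : Ω → α) (N : Ω → γ) :
    MeasurableSpace.comap (fun ω => (S ω, N ω)) inferInstance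
      = MeasurableSpace.generateFrom
        {t | ∃ A B, MeasurableSet A ∧ MeasurableSet B ∧ t = S ⁻¹' A ∩ N ⁻¹' B} := by
  conv_lhs => rw [show (inferInstance : MeasurableSpace (α × γ))
      = MeasurableSpace.generateFrom
        (Set.image2 (· ×ˢ ·) { s : Set α | MeasurableSet s } { t : Set γ | MeasurableSet t })
      from generateFrom_prod.symm]
  rw [MeasurableSpace.comap_generateFrom]
  congr 1
  ext t
  constructor
  · rintro ⟨u, ⟨A, hA, B, hB, rfl⟩, rfl⟩
    exact ⟨A, B, hA, hB, (Set.mk_preimage_prod S N).symm⟩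
  · rintro ⟨A, B, hA, hB, rfl⟩
    exact ⟨A ×ˢ B, ⟨A, hA, B, hB, rfl⟩, Set.mk_preimage_prod S N⟩

/-- The main measure computation. -/
private lemma aux_main {Ω : Type*} {m1 m2 : MeasurableSpace Ω}
    [mΩ : MeasurableSpace Ω] {μ : Measure Ω} [IsProbabilityMeasure μ]
    (hm1 : m1 ≤ mΩ) (hm2 : m2 ≤ mΩ) (hm1le2 : m1 ≤ m2)
    {Za Sb Wc Nd : Set Ω}
    (hZam : MeasurableSet[mΩ] Za) (hSbm : MeasurableSet[mΩ] Sb)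
    (hWcm : MeasurableSet[mΩ] Wc) (hNdm : MeasurableSet[mΩ] Nd)
    (hSbm1 : MeasurableSet[m1] Sb) (hEm2 : MeasurableSet[m2] (Sb ∩ Nd))
    (F1 : (μ⟦Za ∩ Wc | m2⟧) =ᵐ[μ] fun ω => (μ⟦Za | m2⟧) ω * (μ⟦Wc | m2⟧) ω)
    (F3 : (μ⟦Za | m2⟧) =ᵐ[μ] (μ⟦Za | m1⟧))
    (F4 : (μ⟦Wc ∩ Nd | m1⟧) =ᵐ[μ] fun _ => (μ (Wc ∩ Nd)).toReal) :
    μ ((Za ∩ Sb) ∩ (Wc ∩ Nd)) = μ (Za ∩ Sb) * μ (Wc ∩ Nd) := by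
  have hind_int : ∀ t : Set Ω, MeasurableSet[mΩ] t →
      Integrable (t.indicator (fun _ => (1:ℝ))) μ :=
    fun t ht => (integrable_const (1:ℝ)).indicator ht
  have hind_bdd : ∀ (t : Set Ω) (x : Ω), ‖t.indicator (fun _ => (1:ℝ)) x‖ ≤ (1:ℝ) := by
    intro t x
    by_cases hx : x ∈ t <;> simp [Set.indicator_apply, hx]
  set iE : Ω → ℝ := (Sb ∩ Nd).indicator (fun _ => (1:ℝ)) with hiE_def
  set g1 : Ω → ℝ := μ⟦Za | m1⟧ with hg1_def
  have hg1_bdd : ∀ᵐ x ∂μ, ‖g1 x‖ ≤ (1:ℝ) := by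
    have hb1 : ∀ᵐ x ∂μ, |Za.indicator (fun _ => (1:ℝ)) x| ≤ ((1 : NNReal) : ℝ) := by
      refine Filter.Eventually.of_forall fun x => ?_
      by_cases hx : x ∈ Za <;> simp [Set.indicator_apply, hx]
    filter_upwards [ae_bdd_condExp_of_ae_bdd hb1] with x hx
    simpa [Real.norm_eq_abs] using hx
  have hiE_sm : StronglyMeasurable[m2] iE := stronglyMeasurable_const.indicator hEm2
  have hiE_bdd : ∀ᵐ x ∂μ, ‖iE x‖ ≤ (1:ℝ) :=
    Filter.Eventually.of_forall fun x => hind_bdd _ x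
  have hiEg1_sm : StronglyMeasurable[m2] (fun x => iE x * g1 x) :=
    hiE_sm.mul (stronglyMeasurable_condExp.mono hm1le2)
  have hiEg1_bdd : ∀ᵐ x ∂μ, ‖iE x * g1 x‖ ≤ (1:ℝ) := by
    filter_upwards [hg1_bdd] with x h1
    calc ‖iE x * g1 x‖ = ‖iE x‖ * ‖g1 x‖ := norm_mul _ _
      _ ≤ 1 * 1 := mul_le_mul (hind_bdd _ x) h1 (norm_nonneg _) zero_le_one
      _ = 1 := one_mul 1
  have hSbg1_sm : StronglyMeasurable[m1]
      (fun x => Sb.indicator (fun _ => (1:ℝ)) x * g1 x) :=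
    (stronglyMeasurable_const.indicator hSbm1).mul stronglyMeasurable_condExp
  have hSbg1_bdd : ∀ᵐ x ∂μ, ‖Sb.indicator (fun _ => (1:ℝ)) x * g1 x‖ ≤ (1:ℝ) := by
    filter_upwards [hg1_bdd] with x h1
    calc ‖Sb.indicator (fun _ => (1:ℝ)) x * g1 x‖
        = ‖Sb.indicator (fun _ => (1:ℝ)) x‖ * ‖g1 x‖ := norm_mul _ _
      _ ≤ 1 * 1 := mul_le_mul (hind_bdd _ x) h1 (norm_nonneg _) zero_le_one
      _ = 1 := one_mul 1
  have main : (μ ((Za ∩ Sb) ∩ (Wc ∩ Nd))).toReal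
      = (μ (Za ∩ Sb)).toReal * (μ (Wc ∩ Nd)).toReal := by
    calc (μ ((Za ∩ Sb) ∩ (Wc ∩ Nd))).toReal
        = ∫ x, ((Za ∩ Sb) ∩ (Wc ∩ Nd)).indicator (fun _ => (1:ℝ)) x ∂μ :=
          (integral_indicator_one ((hZam.inter hSbm).inter (hWcm.inter hNdm))).symm
      _ = ∫ x, iE x * (Za ∩ Wc).indicator (fun _ => (1:ℝ)) x ∂μ := by
          refine integral_congr_ae (Filter.Eventually.of_forall fun x => ?_)
          by_cases h1 : x ∈ Za <;> by_cases h2 : x ∈ Sb <;> by_cases h3 : x ∈ Wc <;>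
            by_cases h4 : x ∈ Nd <;>
            simp [hiE_def, Set.indicator_apply, h1, h2, h3, h4]
      _ = ∫ x, iE x * (μ⟦Za ∩ Wc | m2⟧) x ∂μ :=
          (aux_integral_mul_condexp hm2 hiE_sm hiE_bdd
            (hind_int _ (hZam.inter hWcm))).symm
      _ = ∫ x, (iE x * g1 x) * (μ⟦Wc | m2⟧) x ∂μ := by
          refine integral_congr_ae ?_
          filter_upwards [F1, F3] with x h1 h2
          rw [h1, h2]
          ring
      _ = ∫ x, (iE x * g1 x) * Wc.indicator (fun _ => (1:ℝ)) x ∂μ :=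
          aux_integral_mul_condexp hm2 hiEg1_sm hiEg1_bdd (hind_int _ hWcm)
      _ = ∫ x, (Sb.indicator (fun _ => (1:ℝ)) x * g1 x)
            * (Wc ∩ Nd).indicator (fun _ => (1:ℝ)) x ∂μ := by
          refine integral_congr_ae (Filter.Eventually.of_forall fun x => ?_)
          by_cases h2 : x ∈ Sb <;> by_cases h3 : x ∈ Wc <;> by_cases h4 : x ∈ Nd <;>
            simp [hiE_def, Set.indicator_apply, h2, h3, h4]
      _ = ∫ x, (Sb.indicator (fun _ => (1:ℝ)) x * g1 x) * (μ⟦Wc ∩ Nd | m1⟧) x ∂μ :=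
          (aux_integral_mul_condexp hm1 hSbg1_sm hSbg1_bdd
            (hind_int _ (hWcm.inter hNdm))).symm
      _ = ∫ x, (Sb.indicator (fun _ => (1:ℝ)) x * g1 x) * (μ (Wc ∩ Nd)).toReal ∂μ := by
          refine integral_congr_ae ?_
          filter_upwards [F4] with x hx
          rw [hx]
      _ = (∫ x, Sb.indicator (fun _ => (1:ℝ)) x * g1 x ∂μ) * (μ (Wc ∩ Nd)).toReal :=
          integral_mul_const _ _
      _ = (∫ x, Sb.indicator (fun _ => (1:ℝ)) x
            * Za.indicator (fun _ => (1:ℝ)) x ∂μ) * (μ (Wc ∩ Nd)).toReal := by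
          rw [hg1_def]
          rw [aux_integral_mul_condexp hm1 (stronglyMeasurable_const.indicator hSbm1)
            (Filter.Eventually.of_forall fun x => hind_bdd Sb x) (hind_int _ hZam)]
      _ = (μ (Za ∩ Sb)).toReal * (μ (Wc ∩ Nd)).toReal := by
          congr 1
          rw [← measureReal_def, ← integral_indicator_one (hZam.inter hSbm)]
          refine integral_congr_ae (Filter.Eventually.of_forall fun x => ?_)
          by_cases h1 : x ∈ Za <;> by_cases h2 : x ∈ Sb <;>
            simp [Set.indicator_apply, h1, h2]
  have h1ne : μ ((Za ∩ Sb) ∩ (Wc ∩ Nd)) ≠ ⊤ := measure_ne_top μ _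
  have h2ne : μ (Za ∩ Sb) * μ (Wc ∩ Nd) ≠ ⊤ :=
    ENNReal.mul_ne_top (measure_ne_top μ _) (measure_ne_top μ _)
  rw [← ENNReal.toReal_eq_toReal_iff' h1ne h2ne, ENNReal.toReal_mul]
  exact main

end StmtAux

/-- Contraction-style lemma: if `Z ⫫ N | S`, `Z ⫫ W | (S, N)` and `S ⫫ (W, N)`,
then `(Z, S) ⫫ (W, N)`. -/
theorem stmt2 {Ω α β γ δ : Type*} [MeasurableSpace Ω] [StandardBorelSpace Ω]
    [MeasurableSpace α] [StandardBorelSpace α]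
    [MeasurableSpace β] [StandardBorelSpace β]
    [MeasurableSpace γ] [StandardBorelSpace γ]
    [MeasurableSpace δ] [StandardBorelSpace δ]
    (μ : Measure Ω) [IsProbabilityMeasure μ]
    (S : Ω → α) (Z : Ω → β) (N : Ω → γ) (W : Ω → δ)
    (hS : Measurable S) (hZ : Measurable Z) (hN : Measurable N) (hW : Measurable W)
    (ha : CondIndepFun (MeasurableSpace.comap S inferInstance) hS.comap_le Z N μ)
    (hb : CondIndepFun (MeasurableSpace.comap (fun ω => (S ω, N ω)) inferInstance)
      (Measurable.comap_le (hS.prodMk hN)) Z W μ)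
    (hc : IndepFun S (fun ω => (W ω, N ω)) μ) :
    IndepFun (fun ω => (Z ω, S ω)) (fun ω => (W ω, N ω)) μ := by
  classical
  suffices hind : IndepSets
      {t | ∃ A B, MeasurableSet A ∧ MeasurableSet B ∧ t = Z ⁻¹' A ∩ S ⁻¹' B}
      {t | ∃ C D, MeasurableSet C ∧ MeasurableSet D ∧ t = W ⁻¹' C ∩ N ⁻¹' D} μ by
    have hpi1 : IsPiSystem
        {t | ∃ A B, MeasurableSet A ∧ MeasurableSet B ∧ t = Z ⁻¹' A ∩ S ⁻¹' B} := by
      rintro t ⟨A, B, hA, hB, rfl⟩ t' ⟨A', B', hA', hB', rfl⟩ -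
      exact ⟨A ∩ A', B ∩ B', hA.inter hA', hB.inter hB', by ext x; simp; tauto⟩
    have hpi2 : IsPiSystem
        {t | ∃ C D, MeasurableSet C ∧ MeasurableSet D ∧ t = W ⁻¹' C ∩ N ⁻¹' D} := by
      rintro t ⟨A, B, hA, hB, rfl⟩ t' ⟨A', B', hA', hB', rfl⟩ -
      exact ⟨A ∩ A', B ∩ B', hA.inter hA', hB.inter hB', by ext x; simp; tauto⟩
    exact IndepSets.indep (hZ.prodMk hS).comap_le (hW.prodMk hN).comap_le hpi1 hpi2
      (aux_comap_eq_generateFrom Z S) (aux_comap_eq_generateFrom W N) hind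
  rintro t1 t2 ⟨A, B, hA, hB, rfl⟩ ⟨C, D, hC, hD, rfl⟩
  refine Filter.Eventually.of_forall fun a => ?_
  simp only [Kernel.const_apply]
  -- conditional independence facts
  have F1 : (μ⟦Z ⁻¹' A ∩ W ⁻¹' C | MeasurableSpace.comap (fun ω => (S ω, N ω)) inferInstance⟧)
      =ᵐ[μ] fun ω =>
        (μ⟦Z ⁻¹' A | MeasurableSpace.comap (fun ω => (S ω, N ω)) inferInstance⟧) ω
        * (μ⟦W ⁻¹' C | MeasurableSpace.comap (fun ω => (S ω, N ω)) inferInstance⟧) ω :=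
    (condIndepFun_iff_condExp_inter_preimage_eq_mul hZ hW).mp hb A C hA hC
  have F3 : (μ⟦Z ⁻¹' A | MeasurableSpace.comap (fun ω => (S ω, N ω)) inferInstance⟧)
      =ᵐ[μ] (μ⟦Z ⁻¹' A | MeasurableSpace.comap S inferInstance⟧) := by
    rw [aux_comap_prod S N]
    refine aux_condexp_sup hS.comap_le hN.comap_le (hZ hA) ?_
    rintro E ⟨D', hD', rfl⟩
    exact (condIndepFun_iff_condExp_inter_preimage_eq_mul hZ hN).mp ha A D' hA hD'
  have hc' : Indep (MeasurableSpace.comap S inferInstance)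
      (MeasurableSpace.comap (fun ω => (W ω, N ω)) inferInstance) μ := hc
  have hWNm : MeasurableSet[MeasurableSpace.comap (fun ω => (W ω, N ω)) inferInstance]
      (W ⁻¹' C ∩ N ⁻¹' D) := ⟨C ×ˢ D, hC.prod hD, Set.mk_preimage_prod W N⟩
  have F4 : (μ⟦W ⁻¹' C ∩ N ⁻¹' D | MeasurableSpace.comap S inferInstance⟧)
      =ᵐ[μ] fun _ => (μ (W ⁻¹' C ∩ N ⁻¹' D)).toReal := by
    have h := condExp_indep_eq ((hW.prodMk hN).comap_le) hS.comap_le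
      (f := (W ⁻¹' C ∩ N ⁻¹' D).indicator (fun _ => (1:ℝ)))
      (stronglyMeasurable_const.indicator hWNm) hc'.symm
    refine h.trans (Filter.EventuallyEq.of_eq ?_)
    funext x
    exact integral_indicator_one ((hW hC).inter (hN hD))
  have hm1le2 : MeasurableSpace.comap S inferInstance
      ≤ MeasurableSpace.comap (fun ω => (S ω, N ω)) inferInstance := by
    rw [aux_comap_prod S N]
    exact le_sup_left
  exact aux_main hS.comap_le ((hS.prodMk hN).comap_le) hm1le2
    (hZ hA) (hS hB) (hW hC) (hN hD) ⟨B, hB, rfl⟩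
    ⟨B ×ˢ D, hB.prod hD, Set.mk_preimage_prod S N⟩ F1 F3 F4
end

section
/- Under assumptions (a)–(d), the IV estimand ϑ_IV := E[𝒵 X']⁻¹ E[𝒵 Y] = (α_IV, β_IV, γ_IV, δ_IV)' satisfies: α_IV = E[α]; β_IV = E[β | C = 1]; γ_IV = E[γ] + Cov(C̄, γ)/E[C̄]; and δ_IV = E[δ | C = 1] + Cov(C̄, δ | C = 1)/E[C̄ | C = 1], where Cov(C̄, δ | C = 1) denotes the covariance computed under the conditional distribution given {C = 1}. -/
open MeasureTheory ProbabilityTheory Matrix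

/-- Auxiliary: the sigma-algebra generated by the listed random variables. -/
def mRaux {Ω : Type*} (S Z C Cbar a b c d : Ω → ℝ) : MeasurableSpace Ω :=
  MeasurableSpace.comap (fun ω => (S ω, Z ω, C ω, Cbar ω, a ω, b ω, c ω, d ω)) inferInstance

/-- The naive IV estimand in the linear random-coefficients model:
`α_IV = E[α]`, `β_IV = E[β | C = 1]`, `γ_IV = E[γ] + Cov(C̄, γ)/E[C̄]`,
`δ_IV = E[δ | C = 1] + Cov(C̄, δ | C = 1)/E[C̄ | C = 1]`. -/
theorem stmt4 {Ω : Type*} [MeasurableSpace Ω] (μ : Measure Ω) [IsProbabilityMeasure μ]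
    (S Z C Cbar Dbar a b c d : Ω → ℝ)
    (hSmeas : Measurable S) (hZmeas : Measurable Z) (hCmeas : Measurable C)
    (hCbarMeas : Measurable Cbar) (hDbarMeas : Measurable Dbar)
    (hameas : Measurable a) (hbmeas : Measurable b)
    (hcmeas : Measurable c) (hdmeas : Measurable d)
    (hSfin : (Set.range S).Finite) (hSval : ∀ ω, S ω ∈ Set.Icc (0 : ℝ) 1)
    (hZval : ∀ ω, Z ω = 0 ∨ Z ω = 1) (hCval : ∀ ω, C ω = 0 ∨ C ω = 1)
    (hCbarVal : ∀ ω, Cbar ω ∈ Set.Icc (0 : ℝ) 1)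
    (hDbarVal : ∀ ω, Dbar ω ∈ Set.Icc (0 : ℝ) 1)
    (haInt : Integrable a μ) (hbInt : Integrable b μ)
    (hcInt : Integrable c μ) (hdInt : Integrable d μ)
    (D : Ω → ℝ) (hD : D = fun ω => C ω * Z ω)
    (Y : Ω → ℝ)
    (hY : Y = fun ω => a ω + b ω * D ω + c ω * Dbar ω + d ω * D ω * Dbar ω)
    (mR : MeasurableSpace Ω)
    (hmR : mR = MeasurableSpace.comap
      (fun ω => (S ω, Z ω, C ω, Cbar ω, a ω, b ω, c ω, d ω)) inferInstance)
    -- (a) E[D̄ | ℛ] = C̄ · S almost surely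
    (hCondExp : μ[Dbar | mR] =ᵐ[μ] fun ω => Cbar ω * S ω)
    -- (b) (Z, S) independent of (C, C̄, α, β, γ, δ)
    (hIndep : IndepFun (fun ω => (Z ω, S ω))
      (fun ω => (C ω, Cbar ω, a ω, b ω, c ω, d ω)) μ)
    (𝒵 X : Ω → Fin 4 → ℝ)
    (h𝒵 : 𝒵 = fun ω => ![1, Z ω, S ω, Z ω * S ω])
    (hX : X = fun ω => ![1, D ω, Dbar ω, D ω * Dbar ω])
    (M : Matrix (Fin 4) (Fin 4) ℝ)
    (hM : M = Matrix.of fun i j => ∫ ω, 𝒵 ω i * X ω j ∂μ)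
    -- (c) E[𝒵 X'] invertible
    (hMinv : IsUnit M)
    -- (d) positivity conditions
    (hCpos : 0 < μ {ω | C ω = 1})
    (hECbar : 0 < ∫ ω, Cbar ω ∂μ)
    (hECbarCond : 0 < ∫ ω, Cbar ω ∂(μ[|{ω | C ω = 1}]))
    (ϑ : Fin 4 → ℝ)
    (hϑ : ϑ = M⁻¹ *ᵥ (fun i => ∫ ω, 𝒵 ω i * Y ω ∂μ)) :
    ϑ 0 = ∫ ω, a ω ∂μ ∧
    ϑ 1 = ∫ ω, b ω ∂(μ[|{ω | C ω = 1}]) ∧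
    ϑ 2 = (∫ ω, c ω ∂μ)
        + ((∫ ω, Cbar ω * c ω ∂μ) - (∫ ω, Cbar ω ∂μ) * ∫ ω, c ω ∂μ)
          / ∫ ω, Cbar ω ∂μ ∧
    ϑ 3 = (∫ ω, d ω ∂(μ[|{ω | C ω = 1}]))
        + ((∫ ω, Cbar ω * d ω ∂(μ[|{ω | C ω = 1}]))
            - (∫ ω, Cbar ω ∂(μ[|{ω | C ω = 1}])) * ∫ ω, d ω ∂(μ[|{ω | C ω = 1}]))
          / ∫ ω, Cbar ω ∂(μ[|{ω | C ω = 1}]) := by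
  rw [hmR] at hCondExp
  replace hCondExp : μ[Dbar | mRaux S Z C Cbar a b c d] =ᵐ[μ] fun ω => Cbar ω * S ω := hCondExp
  clear hmR
  clear mR
  -- basic helpers
  have icongr : ∀ f g : Ω → ℝ, (∀ ω, f ω = g ω) → ∫ ω, f ω ∂μ = ∫ ω, g ω ∂μ := by
    intro f g h
    congr 1
    exact funext h
  -- bounds
  have hZb : ∀ ω, |Z ω| ≤ 1 := fun ω => by rcases hZval ω with h | h <;> simp [h]
  have hCb : ∀ ω, |C ω| ≤ 1 := fun ω => by rcases hCval ω with h | h <;> simp [h]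
  have hSb : ∀ ω, |S ω| ≤ 1 := fun ω => abs_le.mpr ⟨by linarith [(hSval ω).1], (hSval ω).2⟩
  have hCbarb : ∀ ω, |Cbar ω| ≤ 1 := fun ω =>
    abs_le.mpr ⟨by linarith [(hCbarVal ω).1], (hCbarVal ω).2⟩
  have hDbarb : ∀ ω, |Dbar ω| ≤ 1 := fun ω =>
    abs_le.mpr ⟨by linarith [(hDbarVal ω).1], (hDbarVal ω).2⟩
  have bmul : ∀ f g : Ω → ℝ, (∀ ω, |f ω| ≤ 1) → (∀ ω, |g ω| ≤ 1) →
      ∀ ω, |f ω * g ω| ≤ 1 := fun f g h1 h2 ω => by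
    rw [abs_mul]; exact mul_le_one₀ (h1 ω) (abs_nonneg _) (h2 ω)
  -- integrability helpers
  have ibd : ∀ f g : Ω → ℝ, Measurable f → (∀ ω, |f ω| ≤ 1) → Integrable g μ →
      Integrable (fun ω => f ω * g ω) μ := fun f g hf hb hg =>
    hg.bdd_mul (c := 1) hf.aestronglyMeasurable (Filter.Eventually.of_forall fun ω => by simpa using hb ω)
  have ibd1 : ∀ f : Ω → ℝ, Measurable f → (∀ ω, |f ω| ≤ 1) → Integrable f μ := by
    intro f hf hb
    simpa using ibd f (fun _ => 1) hf hb (integrable_const 1)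
  have ibd' : ∀ f g : Ω → ℝ, Measurable f → (∀ ω, |f ω| ≤ 1) → Integrable g μ →
      Integrable (fun ω => g ω * f ω) μ := fun f g hf hb hg =>
    (ibd f g hf hb hg).congr (Filter.Eventually.of_forall fun ω => mul_comm _ _)
  have hCint : Integrable C μ := ibd1 C hCmeas hCb
  have hCbarInt : Integrable Cbar μ := ibd1 Cbar hCbarMeas hCbarb
  have hDbarInt : Integrable Dbar μ := ibd1 Dbar hDbarMeas hDbarb
  -- the conditioning set
  set s : Set Ω := {ω | C ω = 1} with hsdef
  have hs : MeasurableSet s := hCmeas (measurableSet_singleton 1)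
  have hind : ∀ f : Ω → ℝ, ∀ ω, s.indicator f ω = C ω * f ω := by
    intro f ω
    rcases hCval ω with h | h
    · rw [Set.indicator_of_notMem, h, zero_mul]
      rw [hsdef]
      simp [h]
    · rw [Set.indicator_of_mem, h, one_mul]
      rw [hsdef]
      exact h
  -- constants
  set EC := ∫ ω, C ω ∂μ with hECdef
  set t0 := ∫ ω, a ω ∂μ with ht0
  set t1 := (∫ ω, C ω * b ω ∂μ) / EC with ht1
  set ECbar := ∫ ω, Cbar ω ∂μ with hECbardef
  set t2 := (∫ ω, Cbar ω * c ω ∂μ) / ECbar with ht2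
  set ECC := ∫ ω, C ω * Cbar ω ∂μ with hECCdef
  set t3 := (∫ ω, C ω * (Cbar ω * d ω) ∂μ) / ECC with ht3
  have hECs : EC = (μ s).toReal := by
    rw [hECdef]
    calc ∫ ω, C ω ∂μ = ∫ ω, s.indicator (fun _ => (1 : ℝ)) ω ∂μ :=
          icongr _ _ fun ω => by rw [hind (fun _ => (1 : ℝ)) ω]; ring
      _ = ∫ _ in s, (1 : ℝ) ∂μ := integral_indicator hs
      _ = (μ s).toReal := by rw [setIntegral_const]; simp [Measure.real]
  have hμspos : 0 < (μ s).toReal := ENNReal.toReal_pos hCpos.ne' (measure_ne_top μ s)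
  have hECpos : 0 < EC := hECs ▸ hμspos
  have hECne : EC ≠ 0 := ne_of_gt hECpos
  have hECbarne : ECbar ≠ 0 := ne_of_gt hECbar
  -- conditional integral formula
  have hcond : ∀ f : Ω → ℝ, Integrable f μ →
      ∫ ω, f ω ∂μ[|s] = (∫ ω, C ω * f ω ∂μ) / EC := by
    intro f hf
    calc ∫ ω, f ω ∂μ[|s] = ((μ s)⁻¹).toReal • ∫ ω, f ω ∂(μ.restrict s) :=
          integral_smul_measure _ _
      _ = (μ s).toReal⁻¹ * ∫ ω, s.indicator f ω ∂μ := by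
          rw [ENNReal.toReal_inv, ← integral_indicator hs, smul_eq_mul]
      _ = (∫ ω, C ω * f ω ∂μ) / EC := by
          rw [icongr _ _ (hind f), ← hECs]; ring
  have hECCpos : 0 < ECC := by
    rw [hcond Cbar hCbarInt] at hECbarCond
    have h := mul_pos hECbarCond hECpos
    rwa [div_mul_cancel₀ _ hECne] at h
  have hECCne : ECC ≠ 0 := ne_of_gt hECCpos
  -- zero-mean factors
  have hz0 : ∫ ω, (a ω - t0) ∂μ = 0 := by
    rw [integral_sub haInt (integrable_const _), integral_const]
    simp [← ht0]
  have hz1 : ∫ ω, C ω * (b ω - t1) ∂μ = 0 := by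
    have e : ∫ ω, C ω * (b ω - t1) ∂μ = ∫ ω, (C ω * b ω - C ω * t1) ∂μ :=
      icongr _ _ fun ω => by ring
    rw [e, integral_sub (ibd C b hCmeas hCb hbInt) (hCint.mul_const t1),
      integral_mul_const, ← hECdef, ht1]
    field_simp
    ring
  have hz2 : ∫ ω, Cbar ω * (c ω - t2) ∂μ = 0 := by
    have e : ∫ ω, Cbar ω * (c ω - t2) ∂μ = ∫ ω, (Cbar ω * c ω - Cbar ω * t2) ∂μ :=
      icongr _ _ fun ω => by ring
    rw [e, integral_sub (ibd Cbar c hCbarMeas hCbarb hcInt) (hCbarInt.mul_const t2),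
      integral_mul_const, ← hECbardef, ht2]
    field_simp
    ring
  have hz3 : ∫ ω, C ω * Cbar ω * (d ω - t3) ∂μ = 0 := by
    have e : ∫ ω, C ω * Cbar ω * (d ω - t3) ∂μ
        = ∫ ω, (C ω * (Cbar ω * d ω) - (C ω * Cbar ω) * t3) ∂μ :=
      icongr _ _ fun ω => by ring
    rw [e, integral_sub (ibd C (fun ω => Cbar ω * d ω) hCmeas hCb
        (ibd Cbar d hCbarMeas hCbarb hdInt))
      ((ibd1 (fun ω => C ω * Cbar ω) (hCmeas.mul hCbarMeas) (bmul C Cbar hCb hCbarb)).mul_const t3),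
      integral_mul_const, ← hECCdef, ht3]
    field_simp
    ring
  -- measurability w.r.t. mR
  have hTR : Measurable[mRaux S Z C Cbar a b c d]
      (fun ω => (S ω, Z ω, C ω, Cbar ω, a ω, b ω, c ω, d ω)) :=
    measurable_iff_comap_le.mpr (le_of_eq rfl)
  have hSR : Measurable[mRaux S Z C Cbar a b c d] S := measurable_fst.comp hTR
  have h2R : Measurable[mRaux S Z C Cbar a b c d] (fun ω => (Z ω, C ω, Cbar ω, a ω, b ω, c ω, d ω)) :=
    measurable_snd.comp hTR
  have hZR : Measurable[mRaux S Z C Cbar a b c d] Z := measurable_fst.comp h2R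
  have h3R : Measurable[mRaux S Z C Cbar a b c d] (fun ω => (C ω, Cbar ω, a ω, b ω, c ω, d ω)) :=
    measurable_snd.comp h2R
  have hCR : Measurable[mRaux S Z C Cbar a b c d] C := measurable_fst.comp h3R
  have h4R : Measurable[mRaux S Z C Cbar a b c d] (fun ω => (Cbar ω, a ω, b ω, c ω, d ω)) := measurable_snd.comp h3R
  have h5R : Measurable[mRaux S Z C Cbar a b c d] (fun ω => (a ω, b ω, c ω, d ω)) := measurable_snd.comp h4R
  have h6R : Measurable[mRaux S Z C Cbar a b c d] (fun ω => (b ω, c ω, d ω)) := measurable_snd.comp h5R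
  have h7R : Measurable[mRaux S Z C Cbar a b c d] (fun ω => (c ω, d ω)) := measurable_snd.comp h6R
  have hcR : Measurable[mRaux S Z C Cbar a b c d] c := measurable_fst.comp h7R
  have hdR : Measurable[mRaux S Z C Cbar a b c d] d := measurable_snd.comp h7R
  have hTmeas : Measurable (fun ω => (S ω, Z ω, C ω, Cbar ω, a ω, b ω, c ω, d ω)) :=
    hSmeas.prodMk (hZmeas.prodMk (hCmeas.prodMk (hCbarMeas.prodMk (hameas.prodMk
      (hbmeas.prodMk (hcmeas.prodMk hdmeas))))))
  have hle : mRaux S Z C Cbar a b c d ≤ (inferInstance : MeasurableSpace Ω) :=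
    measurable_iff_comap_le.mp hTmeas
  haveI : SigmaFinite (μ.trim hle) := inferInstance
  -- substitution of Dbar by Cbar * S
  have substD : ∀ g : Ω → ℝ, Measurable[mRaux S Z C Cbar a b c d] g → Integrable g μ →
      Integrable (fun ω => g ω * Dbar ω) μ →
      ∫ ω, g ω * Dbar ω ∂μ = ∫ ω, g ω * (Cbar ω * S ω) ∂μ := by
    intro g hgR hgInt hgDInt
    have h1 : μ[(fun ω => g ω * Dbar ω)|mRaux S Z C Cbar a b c d] =ᵐ[μ] fun ω => g ω * (μ[Dbar|mRaux S Z C Cbar a b c d]) ω :=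
      condExp_mul_of_stronglyMeasurable_left hgR.stronglyMeasurable hgDInt hDbarInt
    have h2 : μ[(fun ω => g ω * Dbar ω)|mRaux S Z C Cbar a b c d] =ᵐ[μ] fun ω => g ω * (Cbar ω * S ω) := by
      refine h1.trans ?_
      filter_upwards [hCondExp] with ω hω
      simp only [hω]
    calc ∫ ω, g ω * Dbar ω ∂μ
        = ∫ ω, (μ[(fun ω => g ω * Dbar ω)|mRaux S Z C Cbar a b c d]) ω ∂μ := (integral_condExp hle).symm
      _ = ∫ ω, g ω * (Cbar ω * S ω) ∂μ := integral_congr_ae h2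
  -- independence factorization
  have fact : ∀ (φ : ℝ × ℝ → ℝ) (ψ : ℝ × ℝ × ℝ × ℝ × ℝ × ℝ → ℝ), Measurable φ → Measurable ψ →
      Integrable (fun ω => φ (Z ω, S ω)) μ →
      Integrable (fun ω => ψ (C ω, Cbar ω, a ω, b ω, c ω, d ω)) μ →
      ∫ ω, φ (Z ω, S ω) * ψ (C ω, Cbar ω, a ω, b ω, c ω, d ω) ∂μ =
        (∫ ω, φ (Z ω, S ω) ∂μ) * ∫ ω, ψ (C ω, Cbar ω, a ω, b ω, c ω, d ω) ∂μ :=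
    fun φ ψ hφ hψ h1 h2 => (hIndep.comp hφ hψ).integral_mul_eq_mul_integral h1.aestronglyMeasurable h2.aestronglyMeasurable
  -- linearity helpers
  have iadd : ∀ f g : Ω → ℝ, Integrable f μ → Integrable g μ →
      ∫ ω, (f ω + g ω) ∂μ = ∫ ω, f ω ∂μ + ∫ ω, g ω ∂μ := fun f g hf hg => integral_add hf hg
  have iadd4 : ∀ f1 f2 f3 f4 : Ω → ℝ, Integrable f1 μ → Integrable f2 μ → Integrable f3 μ →
      Integrable f4 μ →
      ∫ ω, (f1 ω + f2 ω + f3 ω + f4 ω) ∂μ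
        = ∫ ω, f1 ω ∂μ + ∫ ω, f2 ω ∂μ + ∫ ω, f3 ω ∂μ + ∫ ω, f4 ω ∂μ := by
    intro f1 f2 f3 f4 h1 h2 h3 h4
    rw [iadd (fun ω => f1 ω + f2 ω + f3 ω) f4 ((h1.add h2).add h3) h4,
      iadd (fun ω => f1 ω + f2 ω) f3 (h1.add h2) h3, iadd f1 f2 h1 h2]
  -- THE MAIN COMPUTATION
  have main : ∀ φ : ℝ × ℝ → ℝ, Measurable φ → (∀ ω, |φ (Z ω, S ω)| ≤ 1) →
      (∫ ω, φ (Z ω, S ω) * 1 ∂μ) * t0 +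
      (∫ ω, φ (Z ω, S ω) * (C ω * Z ω) ∂μ) * t1 +
      (∫ ω, φ (Z ω, S ω) * Dbar ω ∂μ) * t2 +
      (∫ ω, φ (Z ω, S ω) * (C ω * Z ω * Dbar ω) ∂μ) * t3 =
      ∫ ω, φ (Z ω, S ω) *
        (a ω + b ω * (C ω * Z ω) + c ω * Dbar ω + d ω * (C ω * Z ω) * Dbar ω) ∂μ := by
    intro φ hφ hb
    have hφW : Measurable (fun ω => φ (Z ω, S ω)) := hφ.comp (hZmeas.prodMk hSmeas)
    have hφWint : Integrable (fun ω => φ (Z ω, S ω)) μ := ibd1 _ hφW hb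
    -- the four zero expectations
    have EG1 : ∫ ω, φ (Z ω, S ω) * (a ω - t0) ∂μ = 0 := by
      calc ∫ ω, φ (Z ω, S ω) * (a ω - t0) ∂μ
          = (∫ ω, φ (Z ω, S ω) ∂μ) * ∫ ω, (a ω - t0) ∂μ :=
            fact φ (fun v => v.2.2.1 - t0) hφ (by fun_prop) hφWint
              (haInt.sub (integrable_const _))
        _ = 0 := by rw [hz0, mul_zero]
    have EG2 : ∫ ω, (φ (Z ω, S ω) * Z ω) * (C ω * (b ω - t1)) ∂μ = 0 := by
      calc ∫ ω, (φ (Z ω, S ω) * Z ω) * (C ω * (b ω - t1)) ∂μ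
          = (∫ ω, φ (Z ω, S ω) * Z ω ∂μ) * ∫ ω, C ω * (b ω - t1) ∂μ :=
            fact (fun p => φ p * p.1) (fun v => v.1 * (v.2.2.2.1 - t1))
              (hφ.mul measurable_fst) (by fun_prop)
              (ibd1 _ (hφW.mul hZmeas) (bmul _ _ hb hZb))
              (ibd C _ hCmeas hCb (hbInt.sub (integrable_const _)))
        _ = 0 := by rw [hz1, mul_zero]
    have IG3 : Integrable (fun ω => φ (Z ω, S ω) * (c ω - t2)) μ :=
      ibd _ _ hφW hb (hcInt.sub (integrable_const _))
    have IG3D : Integrable (fun ω => (φ (Z ω, S ω) * (c ω - t2)) * Dbar ω) μ :=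
      ibd' Dbar _ hDbarMeas hDbarb IG3
    have EG3 : ∫ ω, (φ (Z ω, S ω) * (c ω - t2)) * Dbar ω ∂μ = 0 := by
      have hgR : Measurable[mRaux S Z C Cbar a b c d] (fun ω => φ (Z ω, S ω) * (c ω - t2)) :=
        (hφ.comp (hZR.prodMk hSR)).mul (hcR.sub measurable_const)
      calc ∫ ω, (φ (Z ω, S ω) * (c ω - t2)) * Dbar ω ∂μ
          = ∫ ω, (φ (Z ω, S ω) * (c ω - t2)) * (Cbar ω * S ω) ∂μ := substD _ hgR IG3 IG3D
        _ = ∫ ω, (φ (Z ω, S ω) * S ω) * (Cbar ω * (c ω - t2)) ∂μ :=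
            icongr _ _ fun ω => by ring
        _ = (∫ ω, φ (Z ω, S ω) * S ω ∂μ) * ∫ ω, Cbar ω * (c ω - t2) ∂μ :=
            fact (fun p => φ p * p.2) (fun v => v.2.1 * (v.2.2.2.2.1 - t2))
              (hφ.mul measurable_snd) (by fun_prop)
              (ibd1 _ (hφW.mul hSmeas) (bmul _ _ hb hSb))
              (ibd Cbar _ hCbarMeas hCbarb (hcInt.sub (integrable_const _)))
        _ = 0 := by rw [hz2, mul_zero]
    have IG4 : Integrable (fun ω => φ (Z ω, S ω) * (C ω * Z ω) * (d ω - t3)) μ :=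
      ibd (fun ω => φ (Z ω, S ω) * (C ω * Z ω)) _ (hφW.mul (hCmeas.mul hZmeas))
        (bmul _ _ hb (bmul C Z hCb hZb)) (hdInt.sub (integrable_const _))
    have IG4D : Integrable (fun ω => (φ (Z ω, S ω) * (C ω * Z ω) * (d ω - t3)) * Dbar ω) μ :=
      ibd' Dbar _ hDbarMeas hDbarb IG4
    have EG4 : ∫ ω, (φ (Z ω, S ω) * (C ω * Z ω) * (d ω - t3)) * Dbar ω ∂μ = 0 := by
      have hgR : Measurable[mRaux S Z C Cbar a b c d]
          (fun ω => φ (Z ω, S ω) * (C ω * Z ω) * (d ω - t3)) :=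
        ((hφ.comp (hZR.prodMk hSR)).mul (hCR.mul hZR)).mul (hdR.sub measurable_const)
      calc ∫ ω, (φ (Z ω, S ω) * (C ω * Z ω) * (d ω - t3)) * Dbar ω ∂μ
          = ∫ ω, (φ (Z ω, S ω) * (C ω * Z ω) * (d ω - t3)) * (Cbar ω * S ω) ∂μ :=
            substD _ hgR IG4 IG4D
        _ = ∫ ω, (φ (Z ω, S ω) * Z ω * S ω) * (C ω * Cbar ω * (d ω - t3)) ∂μ :=
            icongr _ _ fun ω => by ring
        _ = (∫ ω, φ (Z ω, S ω) * Z ω * S ω ∂μ) * ∫ ω, C ω * Cbar ω * (d ω - t3) ∂μ :=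
            fact (fun p => φ p * p.1 * p.2) (fun v => v.1 * v.2.1 * (v.2.2.2.2.2 - t3))
              ((hφ.mul measurable_fst).mul measurable_snd) (by fun_prop)
              (ibd1 _ ((hφW.mul hZmeas).mul hSmeas) (bmul _ _ (bmul _ _ hb hZb) hSb))
              (ibd (fun ω => C ω * Cbar ω) _ (hCmeas.mul hCbarMeas) (bmul C Cbar hCb hCbarb)
                (hdInt.sub (integrable_const _)))
        _ = 0 := by rw [hz3, mul_zero]
    -- integrability of the regressor pieces
    have IF1 : Integrable (fun ω => φ (Z ω, S ω) * 1) μ :=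
      ibd1 _ (hφW.mul measurable_const) (bmul _ _ hb (fun ω => by norm_num))
    have IF2 : Integrable (fun ω => φ (Z ω, S ω) * (C ω * Z ω)) μ :=
      ibd1 _ (hφW.mul (hCmeas.mul hZmeas)) (bmul _ _ hb (bmul C Z hCb hZb))
    have IF3 : Integrable (fun ω => φ (Z ω, S ω) * Dbar ω) μ :=
      ibd1 _ (hφW.mul hDbarMeas) (bmul _ _ hb hDbarb)
    have IF4 : Integrable (fun ω => φ (Z ω, S ω) * (C ω * Z ω * Dbar ω)) μ :=
      ibd1 _ (hφW.mul ((hCmeas.mul hZmeas).mul hDbarMeas))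
        (bmul _ _ hb (bmul _ Dbar (bmul C Z hCb hZb) hDbarb))
    have IG1 : Integrable (fun ω => φ (Z ω, S ω) * (a ω - t0)) μ :=
      ibd _ _ hφW hb (haInt.sub (integrable_const _))
    have IG2 : Integrable (fun ω => (φ (Z ω, S ω) * Z ω) * (C ω * (b ω - t1))) μ :=
      ibd (fun ω => φ (Z ω, S ω) * Z ω) _ (hφW.mul hZmeas) (bmul _ _ hb hZb)
        (ibd C _ hCmeas hCb (hbInt.sub (integrable_const _)))
    symm
    calc ∫ ω, φ (Z ω, S ω) *
          (a ω + b ω * (C ω * Z ω) + c ω * Dbar ω + d ω * (C ω * Z ω) * Dbar ω) ∂μ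
        = ∫ ω, ((φ (Z ω, S ω) * 1) * t0 + (φ (Z ω, S ω) * (C ω * Z ω)) * t1
            + (φ (Z ω, S ω) * Dbar ω) * t2 + (φ (Z ω, S ω) * (C ω * Z ω * Dbar ω)) * t3
            + (φ (Z ω, S ω) * (a ω - t0) + (φ (Z ω, S ω) * Z ω) * (C ω * (b ω - t1))
              + (φ (Z ω, S ω) * (c ω - t2)) * Dbar ω
              + (φ (Z ω, S ω) * (C ω * Z ω) * (d ω - t3)) * Dbar ω)) ∂μ :=
          icongr _ _ fun ω => by ring
      _ = (∫ ω, ((φ (Z ω, S ω) * 1) * t0 + (φ (Z ω, S ω) * (C ω * Z ω)) * t1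
            + (φ (Z ω, S ω) * Dbar ω) * t2 + (φ (Z ω, S ω) * (C ω * Z ω * Dbar ω)) * t3) ∂μ)
          + ∫ ω, (φ (Z ω, S ω) * (a ω - t0) + (φ (Z ω, S ω) * Z ω) * (C ω * (b ω - t1))
              + (φ (Z ω, S ω) * (c ω - t2)) * Dbar ω
              + (φ (Z ω, S ω) * (C ω * Z ω) * (d ω - t3)) * Dbar ω) ∂μ :=
          iadd _ _ ((((IF1.mul_const t0).add (IF2.mul_const t1)).add (IF3.mul_const t2)).add
            (IF4.mul_const t3)) (((IG1.add IG2).add IG3D).add IG4D)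
      _ = (∫ ω, (φ (Z ω, S ω) * 1) * t0 ∂μ) + (∫ ω, (φ (Z ω, S ω) * (C ω * Z ω)) * t1 ∂μ)
          + (∫ ω, (φ (Z ω, S ω) * Dbar ω) * t2 ∂μ)
          + (∫ ω, (φ (Z ω, S ω) * (C ω * Z ω * Dbar ω)) * t3 ∂μ)
          + ((∫ ω, φ (Z ω, S ω) * (a ω - t0) ∂μ)
            + (∫ ω, (φ (Z ω, S ω) * Z ω) * (C ω * (b ω - t1)) ∂μ)
            + (∫ ω, (φ (Z ω, S ω) * (c ω - t2)) * Dbar ω ∂μ)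
            + (∫ ω, (φ (Z ω, S ω) * (C ω * Z ω) * (d ω - t3)) * Dbar ω ∂μ)) := by
          rw [iadd4 (fun ω => (φ (Z ω, S ω) * 1) * t0)
              (fun ω => (φ (Z ω, S ω) * (C ω * Z ω)) * t1)
              (fun ω => (φ (Z ω, S ω) * Dbar ω) * t2)
              (fun ω => (φ (Z ω, S ω) * (C ω * Z ω * Dbar ω)) * t3)
              (IF1.mul_const t0) (IF2.mul_const t1) (IF3.mul_const t2) (IF4.mul_const t3),
            iadd4 (fun ω => φ (Z ω, S ω) * (a ω - t0))
              (fun ω => (φ (Z ω, S ω) * Z ω) * (C ω * (b ω - t1)))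
              (fun ω => (φ (Z ω, S ω) * (c ω - t2)) * Dbar ω)
              (fun ω => (φ (Z ω, S ω) * (C ω * Z ω) * (d ω - t3)) * Dbar ω)
              IG1 IG2 IG3D IG4D]
      _ = (∫ ω, φ (Z ω, S ω) * 1 ∂μ) * t0 + (∫ ω, φ (Z ω, S ω) * (C ω * Z ω) ∂μ) * t1
          + (∫ ω, φ (Z ω, S ω) * Dbar ω ∂μ) * t2
          + (∫ ω, φ (Z ω, S ω) * (C ω * Z ω * Dbar ω) ∂μ) * t3 := by
          rw [EG1, EG2, EG3, EG4, integral_mul_const t0 (fun ω => φ (Z ω, S ω) * 1),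
            integral_mul_const t1 (fun ω => φ (Z ω, S ω) * (C ω * Z ω)),
            integral_mul_const t2 (fun ω => φ (Z ω, S ω) * Dbar ω),
            integral_mul_const t3 (fun ω => φ (Z ω, S ω) * (C ω * Z ω * Dbar ω))]
          ring
  -- identify the matrix entries and target vector
  have hMij : ∀ i j, M i j = ∫ ω, (![1, Z ω, S ω, Z ω * S ω] i)
      * (![1, C ω * Z ω, Dbar ω, C ω * Z ω * Dbar ω] j) ∂μ := by
    intro i j
    rw [hM]
    show (fun i j => ∫ ω, 𝒵 ω i * X ω j ∂μ) i j = _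
    exact icongr _ _ fun ω => by simp only [h𝒵, hX, hD]
  have hv : ∀ i, (∫ ω, 𝒵 ω i * Y ω ∂μ) = ∫ ω, (![1, Z ω, S ω, Z ω * S ω] i) *
      (a ω + b ω * (C ω * Z ω) + c ω * Dbar ω + d ω * (C ω * Z ω) * Dbar ω) ∂μ :=
    fun i => icongr _ _ fun ω => by simp only [h𝒵, hY, hD]
  have hMt : M *ᵥ ![t0, t1, t2, t3] = fun i => ∫ ω, 𝒵 ω i * Y ω ∂μ := by
    funext i
    have hsum : (M *ᵥ ![t0, t1, t2, t3]) i = M i 0 * t0 + M i 1 * t1 + M i 2 * t2 + M i 3 * t3 := by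
      simp [Matrix.mulVec, dotProduct, Fin.sum_univ_four]
    rw [hsum, hMij i 0, hMij i 1, hMij i 2, hMij i 3]
    show _ = ∫ ω, 𝒵 ω i * Y ω ∂μ
    rw [hv i]
    fin_cases i
    · simpa using main (fun _ => (1 : ℝ)) measurable_const (fun ω => by norm_num)
    · simpa using main (fun p => p.1) measurable_fst (fun ω => hZb ω)
    · simpa using main (fun p => p.2) measurable_snd (fun ω => hSb ω)
    · simpa using main (fun p => p.1 * p.2) (measurable_fst.mul measurable_snd)
        (fun ω => bmul Z S hZb hSb ω)
  have hϑt : ϑ = ![t0, t1, t2, t3] := by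
    rw [hϑ, ← hMt, Matrix.mulVec_mulVec,
      Matrix.nonsing_inv_mul M ((Matrix.isUnit_iff_isUnit_det M).mp hMinv), Matrix.one_mulVec]
  rw [hϑt]
  refine ⟨by simp [← ht0], ?_, ?_, ?_⟩
  · show t1 = _
    rw [ht1, hcond b hbInt]
  · show t2 = _
    rw [ht2]
    field_simp
    ring
  · show t3 = _
    rw [ht3, hcond d hdInt, hcond Cbar hCbarInt,
      hcond (fun ω => Cbar ω * d ω) (ibd Cbar d hCbarMeas hCbarb hdInt), ← hECCdef]
    field_simp
    ring
end

section
/- For every individual i ∈ {1,…,n}, the triple (S, Z_i, D̄_i) is conditionally independent of the pair (B_i, C_i) given C̄_i. -/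
open MeasureTheory ProbabilityTheory Finset

section StmtAux

variable {n : ℕ}

noncomputable def stmtPhi (w : Bool → ENNReal) (f : Bool → ℕ → ENNReal) (i : Fin n)
    (T : Finset (Fin n)) : ENNReal :=
  ∑ z : Fin n → Bool, (∏ j, w (z j)) * f (z i) (∑ j ∈ T, if z j then 1 else 0)

lemma stmtPhi_swap (w : Bool → ENNReal) (f : Bool → ℕ → ENNReal) (i : Fin n)
    {a b : Fin n} (ha : a ≠ i) (hb : b ≠ i) (T : Finset (Fin n)) :
    stmtPhi w f i T = stmtPhi w f i (T.image (Equiv.swap a b)) := by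
  classical
  set σ := Equiv.swap a b with hσ
  have hσi : σ i = i := Equiv.swap_apply_of_ne_of_ne (Ne.symm ha) (Ne.symm hb)
  have hbij : Function.Bijective (fun y : Fin n → Bool => y ∘ σ) := by
    constructor
    · intro y₁ y₂ h
      funext j
      have := congrFun h (σ.symm j)
      simpa using this
    · intro y
      exact ⟨y ∘ σ.symm, by funext j; simp⟩
  refine Fintype.sum_bijective _ hbij _ _ ?_
  intro y
  simp only [Function.comp]
  have h1 : ∏ j, w (y (σ j)) = ∏ j, w (y j) := Equiv.prod_comp σ (fun j => w (y j))
  have h2 : (∑ j ∈ T.image σ, if y (σ j) then (1:ℕ) else 0) = ∑ j ∈ T, if y j then 1 else 0 := by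
    rw [Finset.sum_image (fun x _ y _ h => σ.injective h)]
    refine Finset.sum_congr rfl fun j _ => ?_
    simp [hσ]
  rw [h1, hσi, h2]

lemma stmtPhi_card_eq (w : Bool → ENNReal) (f : Bool → ℕ → ENNReal) (i : Fin n)
    {T₁ T₂ : Finset (Fin n)} (h1 : i ∉ T₁) (h2 : i ∉ T₂) (hc : T₁.card = T₂.card) :
    stmtPhi w f i T₁ = stmtPhi w f i T₂ := by
  classical
  suffices H : ∀ m (T₁ T₂ : Finset (Fin n)), (T₁ \ T₂).card = m → i ∉ T₁ → i ∉ T₂ →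
      T₁.card = T₂.card → stmtPhi w f i T₁ = stmtPhi w f i T₂ by
    exact H _ T₁ T₂ rfl h1 h2 hc
  intro m
  induction m with
  | zero =>
    intro T₁ T₂ hd h1 h2 hc
    have hsub : T₁ ⊆ T₂ := by
      rw [← Finset.sdiff_eq_empty_iff_subset]
      exact Finset.card_eq_zero.mp hd
    rw [Finset.eq_of_subset_of_card_le hsub hc.ge]
  | succ m ih =>
    intro T₁ T₂ hd h1 h2 hc
    have hne : (T₁ \ T₂).Nonempty := Finset.card_pos.mp (by omega)
    obtain ⟨a, haa⟩ := hne
    have hne2 : (T₂ \ T₁).Nonempty := by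
      rw [← Finset.card_pos, Finset.card_sdiff_comm hc.symm]
      omega
    obtain ⟨b, hbb⟩ := hne2
    have haT₁ : a ∈ T₁ := (Finset.mem_sdiff.mp haa).1
    have haT₂ : a ∉ T₂ := (Finset.mem_sdiff.mp haa).2
    have hbT₂ : b ∈ T₂ := (Finset.mem_sdiff.mp hbb).1
    have hbT₁ : b ∉ T₁ := (Finset.mem_sdiff.mp hbb).2
    have hai : a ≠ i := fun h => h1 (h ▸ haT₁)
    have hbi : b ≠ i := fun h => h2 (h ▸ hbT₂)
    have himg : T₂.image (Equiv.swap a b) = insert a (T₂.erase b) := by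
      ext x
      simp only [Finset.mem_image, Finset.mem_insert, Finset.mem_erase]
      constructor
      · rintro ⟨y, hy, rfl⟩
        rcases eq_or_ne y a with rfl | hya
        · exact absurd hy haT₂
        rcases eq_or_ne y b with rfl | hyb
        · left; simp
        · right
          rw [Equiv.swap_apply_of_ne_of_ne hya hyb]
          exact ⟨hyb, hy⟩
      · rintro (h | ⟨hxb, hx⟩)
        · subst h; exact ⟨b, hbT₂, Equiv.swap_apply_right _ _⟩
        · rcases eq_or_ne x a with h | hxa
          · subst h; exact absurd hx haT₂
          · exact ⟨x, hx, Equiv.swap_apply_of_ne_of_ne hxa hxb⟩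
    have hswap := stmtPhi_swap w f i hai hbi T₂
    rw [himg] at hswap
    set T₂' := insert a (T₂.erase b) with hT₂'
    have hd' : (T₁ \ T₂').card = m := by
      have : T₁ \ T₂' = (T₁ \ T₂).erase a := by
        ext x
        simp only [hT₂', Finset.mem_sdiff, Finset.mem_insert, Finset.mem_erase, not_or, not_and]
        constructor
        · rintro ⟨hx1, hxa, hx2⟩
          refine ⟨hxa, hx1, fun hx2' => ?_⟩
          rcases eq_or_ne x b with rfl | hxb
          · exact hbT₁ hx1
          · exact (hx2 hxb hx2').elim
        · rintro ⟨hxa, hx1, hx2⟩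
          exact ⟨hx1, hxa, fun _ h => hx2 h⟩
      rw [this, Finset.card_erase_of_mem haa, hd]
      omega
    have hi2' : i ∉ T₂' := by
      simp only [hT₂', Finset.mem_insert, Finset.mem_erase, not_or, not_and]
      exact ⟨fun h => hai h.symm, fun _ => h2⟩
    have hc' : T₁.card = T₂'.card := by
      have he : (T₂.erase b).card = T₂.card - 1 := Finset.card_erase_of_mem hbT₂
      have hT₂pos : 0 < T₂.card := Finset.card_pos.mpr ⟨b, hbT₂⟩
      rw [hT₂', Finset.card_insert_of_notMem (by simp [Finset.mem_erase, haT₂]), he, hc]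
      omega
    rw [ih T₁ T₂' hd' h1 hi2' hc', ← hswap]

lemma condexp_comap_discrete {Ω : Type*} [mΩ : MeasurableSpace Ω] (μ : Measure Ω)
    [IsProbabilityMeasure μ] {W : Ω → ℝ} (hW : Measurable W) (V : Finset ℝ)
    (hV : ∀ ω, W ω ∈ V) {A : Set Ω} (hA : MeasurableSet A) :
    (μ[A.indicator (fun _ => (1:ℝ)) | MeasurableSpace.comap W inferInstance])
      =ᵐ[μ] fun ω => (μ (A ∩ W ⁻¹' {W ω})).toReal / (μ (W ⁻¹' {W ω})).toReal := by
  classical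
  have hle : MeasurableSpace.comap W inferInstance ≤ mΩ := hW.comap_le
  haveI : IsFiniteMeasure (μ.trim hle) := isFiniteMeasure_trim hle
  set g : Ω → ℝ := fun ω => ∑ c ∈ V,
      (W ⁻¹' {c}).indicator (fun _ => (μ (A ∩ W ⁻¹' {c})).toReal / (μ (W ⁻¹' {c})).toReal) ω
    with hg
  have hmeasc : ∀ c : ℝ, MeasurableSet (W ⁻¹' {c}) := fun c => hW (measurableSet_singleton c)
  have hgval : ∀ ω, g ω = (μ (A ∩ W ⁻¹' {W ω})).toReal / (μ (W ⁻¹' {W ω})).toReal := by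
    intro ω
    simp only [hg]
    rw [Finset.sum_eq_single_of_mem (W ω) (hV ω)]
    · rw [Set.indicator_of_mem (by simp : ω ∈ W ⁻¹' {W ω})]
    · intro c _ hne
      apply Set.indicator_of_notMem
      simp only [Set.mem_preimage, Set.mem_singleton_iff]
      exact fun h => hne h.symm
  have key : g =ᵐ[μ] μ[A.indicator (fun _ => (1:ℝ)) | MeasurableSpace.comap W inferInstance] := by
    refine ae_eq_condExp_of_forall_setIntegral_eq hle
      ((integrable_const (1:ℝ)).indicator hA) ?_ ?_ ?_
    · intro s _ _
      refine Integrable.integrableOn ?_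
      refine integrable_finset_sum _ fun c _ => ?_
      exact (integrable_const _).indicator (hmeasc c)
    · rintro s ⟨E, hE, rfl⟩ _
      have hL : ∫ x in W ⁻¹' E, g x ∂μ
          = ∑ c ∈ V, (μ (A ∩ W ⁻¹' {c})).toReal / (μ (W ⁻¹' {c})).toReal
              * (μ (W ⁻¹' {c} ∩ W ⁻¹' E)).toReal := by
        simp only [hg]
        rw [integral_finset_sum _ fun c _ => by
          exact ((integrable_const _).indicator (hmeasc c)).integrableOn]
        refine Finset.sum_congr rfl fun c _ => ?_
        rw [integral_indicator_const ((μ (A ∩ W ⁻¹' {c})).toReal / (μ (W ⁻¹' {c})).toReal)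
          (hmeasc c), measureReal_def, Measure.restrict_apply (hmeasc c), smul_eq_mul, mul_comm]
      have hR : ∫ x in W ⁻¹' E, A.indicator (fun _ => (1:ℝ)) x ∂μ
          = (μ (A ∩ W ⁻¹' E)).toReal := by
        rw [integral_indicator_const (1:ℝ) hA, measureReal_def, Measure.restrict_apply hA, smul_eq_mul, mul_one]
      rw [hL, hR]
      have hterm : ∀ c ∈ V, (μ (A ∩ W ⁻¹' {c})).toReal / (μ (W ⁻¹' {c})).toReal
          * (μ (W ⁻¹' {c} ∩ W ⁻¹' E)).toReal = (μ (A ∩ W ⁻¹' {c} ∩ W ⁻¹' E)).toReal := by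
        intro c _
        by_cases hcE : c ∈ E
        · have h1 : W ⁻¹' {c} ∩ W ⁻¹' E = W ⁻¹' {c} := by
            ext x; simp only [Set.mem_inter_iff, Set.mem_preimage, Set.mem_singleton_iff]
            exact ⟨fun h => h.1, fun h => ⟨h, h ▸ hcE⟩⟩
          rw [Set.inter_assoc, h1]
          rcases eq_or_ne (μ (W ⁻¹' {c})) 0 with h0 | h0
          · have : μ (A ∩ W ⁻¹' {c}) = 0 :=
              measure_mono_null Set.inter_subset_right h0
            simp [this, h0]
          · rw [div_mul_cancel₀]
            exact ENNReal.toReal_ne_zero.mpr ⟨h0, measure_ne_top μ _⟩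
        · have h1 : W ⁻¹' {c} ∩ W ⁻¹' E = ∅ := by
            ext x
            simp only [Set.mem_inter_iff, Set.mem_preimage, Set.mem_singleton_iff,
              Set.mem_empty_iff_false, iff_false, not_and]
            rintro rfl h
            exact hcE h
          have h2 : A ∩ W ⁻¹' {c} ∩ W ⁻¹' E = ∅ := by
            rw [Set.inter_assoc, h1, Set.inter_empty]
          simp [h1, h2]
      rw [Finset.sum_congr rfl hterm]
      have hdecomp : A ∩ W ⁻¹' E = ⋃ c ∈ V, A ∩ W ⁻¹' {c} ∩ W ⁻¹' E := by
        ext x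
        simp only [Set.mem_inter_iff, Set.mem_iUnion, Set.mem_preimage, Set.mem_singleton_iff]
        constructor
        · rintro ⟨hxA, hxE⟩
          exact ⟨W x, hV x, ⟨hxA, rfl⟩, hxE⟩
        · rintro ⟨c, _, ⟨hxA, _⟩, hxE⟩
          exact ⟨hxA, hxE⟩
      rw [hdecomp, measure_biUnion_finset ?_ ?_, ENNReal.toReal_sum fun c _ => measure_ne_top μ _]
      · intro c _ c' _ hne
        refine Set.disjoint_left.mpr ?_
        rintro x ⟨⟨_, hx⟩, _⟩ ⟨⟨_, hx'⟩, _⟩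
        simp only [Set.mem_preimage, Set.mem_singleton_iff] at hx hx'
        exact hne (hx ▸ hx')
      · exact fun c _ => (hA.inter (hmeasc c)).inter (hW hE)
    · refine StronglyMeasurable.aestronglyMeasurable ?_
      refine Measurable.stronglyMeasurable ?_
      refine Finset.measurable_sum _ fun c _ => ?_
      exact measurable_const.indicator ⟨{c}, measurableSet_singleton c, rfl⟩
  filter_upwards [key] with ω h
  rw [← h, hgval]

set_option maxHeartbeats 1000000 in
lemma stmt_core {Ω : Type*} [mΩ : MeasurableSpace Ω] (μ : Measure Ω) [IsProbabilityMeasure μ]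
    {n : ℕ} (hn : 2 ≤ n) {p : ℕ} (𝒮 : Finset ℝ) (h𝒮 : ∀ s ∈ 𝒮, s ∈ Set.Icc (0 : ℝ) 1)
    (S : Ω → ℝ) (C Z : Ω → Fin n → Bool) (B : Ω → Fin n → Fin p → ℝ)
    (hSmeas : Measurable S) (hCmeas : Measurable C)
    (hZmeas : Measurable Z) (hBmeas : Measurable B)
    (hSval : ∀ ω, S ω ∈ 𝒮)
    (hExcl : IndepFun S (fun ω => (C ω, B ω)) μ)
    (hBern : ∀ s ∈ 𝒮, 0 < μ {ω | S ω = s} →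
      ∀ z : Fin n → Bool,
        ∀ A : Set ((Fin n → Bool) × (Fin n → Fin p → ℝ)), MeasurableSet A →
          μ[|{ω | S ω = s}] ({ω | Z ω = z} ∩ {ω | (C ω, B ω) ∈ A})
            = ENNReal.ofReal (∏ j, if z j then s else 1 - s)
              * μ[|{ω | S ω = s}] {ω | (C ω, B ω) ∈ A})
    (i : Fin n)
    (Dbar Cbar : Ω → ℝ)
    (hDbar : Dbar = fun ω =>
      (∑ j ∈ Finset.univ.erase i, (if C ω j && Z ω j then (1 : ℝ) else 0)) / ((n : ℝ) - 1))
    (hCbar : Cbar = fun ω =>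
      (∑ j ∈ Finset.univ.erase i, (if C ω j then (1 : ℝ) else 0)) / ((n : ℝ) - 1))
    (ω₀ : Ω)
    (s : Set (ℝ × Bool × ℝ)) (hs : MeasurableSet s)
    (t : Set ((Fin p → ℝ) × Bool)) (ht : MeasurableSet t) :
    μ ((fun ω => (S ω, Z ω i, Dbar ω)) ⁻¹' s ∩ (fun ω => (B ω i, C ω i)) ⁻¹' t
        ∩ Cbar ⁻¹' {Cbar ω₀})
      = (∑ s' ∈ 𝒮, μ {ω | S ω = s'}
            * stmtPhi (fun b => ENNReal.ofReal (if b then s' else 1 - s'))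
                (fun b m => s.indicator (fun _ => (1:ENNReal)) (s', b, (m : ℝ) / ((n : ℝ) - 1)))
                i ((Finset.univ.erase i).filter (fun j => C ω₀ j = true)))
          * μ ((fun ω => (B ω i, C ω i)) ⁻¹' t ∩ Cbar ⁻¹' {Cbar ω₀}) := by
  classical
  subst hDbar hCbar
  have hn1 : ((n : ℝ) - 1) ≠ 0 := by
    have : (2 : ℝ) ≤ (n : ℝ) := by exact_mod_cast hn
    linarith
  -- abbreviations
  set T : (Fin n → Bool) → Finset (Fin n) :=
    fun c' => (Finset.univ.erase i).filter (fun j => c' j = true) with hT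
  set w : ℝ → Bool → ENNReal := fun s' b => ENNReal.ofReal (if b then s' else 1 - s') with hw
  set f : ℝ → Bool → ℕ → ENNReal :=
    fun s' b m => s.indicator (fun _ => (1:ENNReal)) (s', b, (m : ℝ) / ((n : ℝ) - 1)) with hf
  set Φ : ℝ → ENNReal := fun s' => stmtPhi (w s') (f s') i (T (C ω₀)) with hΦ
  set Db : Ω → ℝ := fun ω =>
      (∑ j ∈ Finset.univ.erase i, (if C ω j && Z ω j then (1 : ℝ) else 0)) / ((n : ℝ) - 1)
    with hDb
  set Cb : Ω → ℝ := fun ω =>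
      (∑ j ∈ Finset.univ.erase i, (if C ω j then (1 : ℝ) else 0)) / ((n : ℝ) - 1) with hCb
  set G : Set Ω := Cb ⁻¹' {Cb ω₀} with hG
  set Xs : Set Ω := (fun ω => (S ω, Z ω i, Db ω)) ⁻¹' s with hXs
  set Yt : Set Ω := (fun ω => (B ω i, C ω i)) ⁻¹' t with hYt
  set A : (Fin n → Bool) → ℝ → Set ((Fin n → Bool) × (Fin n → Fin p → ℝ)) :=
    fun z s' => {q | (s', z i,
        (∑ j ∈ Finset.univ.erase i, (if q.1 j && z j then (1 : ℝ) else 0)) / ((n : ℝ) - 1)) ∈ s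
      ∧ (q.2 i, q.1 i) ∈ t
      ∧ (∑ j ∈ Finset.univ.erase i, (if q.1 j then (1 : ℝ) else 0)) / ((n : ℝ) - 1) = Cb ω₀}
    with hA
  -- measurability
  have hCbMeas : Measurable Cb := by
    apply Measurable.div_const
    exact Finset.measurable_sum _ fun j _ =>
      (measurable_of_countable (fun c' : Fin n → Bool => if c' j then (1:ℝ) else 0)).comp hCmeas
  have hDbMeas : Measurable Db := by
    apply Measurable.div_const
    exact Finset.measurable_sum _ fun j _ =>
      (measurable_of_countable (fun q : (Fin n → Bool) × (Fin n → Bool) =>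
        if q.1 j && q.2 j then (1:ℝ) else 0)).comp (hCmeas.prodMk hZmeas)
  have hXmeas : Measurable (fun ω => (S ω, Z ω i, Db ω)) :=
    hSmeas.prodMk (((measurable_pi_apply i).comp hZmeas).prodMk hDbMeas)
  have hYmeas : Measurable (fun ω => (B ω i, C ω i)) :=
    ((measurable_pi_apply i).comp hBmeas).prodMk ((measurable_pi_apply i).comp hCmeas)
  have hAmeas : ∀ z s', MeasurableSet (A z s') := by
    intro z s'
    have hm1 : Measurable (fun q : (Fin n → Bool) × (Fin n → Fin p → ℝ) => (s', z i,
        (∑ j ∈ Finset.univ.erase i, (if q.1 j && z j then (1 : ℝ) else 0)) / ((n : ℝ) - 1))) :=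
      measurable_const.prodMk (measurable_const.prodMk (Measurable.div_const
        (Finset.measurable_sum _ fun j _ =>
          (measurable_of_countable (fun c' : Fin n → Bool =>
            if c' j && z j then (1:ℝ) else 0)).comp measurable_fst) _))
    have hm2 : Measurable (fun q : (Fin n → Bool) × (Fin n → Fin p → ℝ) => (q.2 i, q.1 i)) :=
      ((measurable_pi_apply i).comp measurable_snd).prodMk
        ((measurable_pi_apply i).comp measurable_fst)
    have hm3 : Measurable (fun q : (Fin n → Bool) × (Fin n → Fin p → ℝ) =>
        (∑ j ∈ Finset.univ.erase i, (if q.1 j then (1 : ℝ) else 0)) / ((n : ℝ) - 1)) :=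
      Measurable.div_const
        (Finset.measurable_sum _ fun j _ =>
          (measurable_of_countable (fun c' : Fin n → Bool =>
            if c' j then (1:ℝ) else 0)).comp measurable_fst) _
    exact (hm1 hs).inter ((hm2 ht).inter (hm3 (measurableSet_singleton _)))
  have hEmeas : ∀ s' : ℝ, MeasurableSet {ω | S ω = s'} :=
    fun s' => hSmeas (measurableSet_singleton s')
  have hGmeas : MeasurableSet G := hCbMeas (measurableSet_singleton _)
  have hYtGmeas : MeasurableSet (Yt ∩ G) := (hYmeas ht).inter hGmeas
  -- split over values of S
  have hsplit : μ (Xs ∩ Yt ∩ G) = ∑ s' ∈ 𝒮, μ ({ω | S ω = s'} ∩ (Xs ∩ Yt ∩ G)) := by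
    have hdec : Xs ∩ Yt ∩ G = ⋃ s' ∈ 𝒮, {ω | S ω = s'} ∩ (Xs ∩ Yt ∩ G) := by
      ext ω
      simp only [Set.mem_iUnion, Set.mem_inter_iff, Set.mem_setOf_eq]
      exact ⟨fun h => ⟨S ω, hSval ω, rfl, h⟩, fun ⟨_, _, h1, h2⟩ => h2⟩
    have hdisj : (↑𝒮 : Set ℝ).PairwiseDisjoint
        (fun s' => {ω | S ω = s'} ∩ (Xs ∩ Yt ∩ G)) := by
      intro s₁ _ s₂ _ hne
      refine Set.disjoint_left.mpr ?_
      rintro ω ⟨h1, _⟩ ⟨h2, _⟩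
      exact hne (h1 ▸ h2)
    have hmeas : ∀ b ∈ 𝒮, MeasurableSet ({ω | S ω = b} ∩ (Xs ∩ Yt ∩ G)) :=
      fun b _ => (hEmeas b).inter (((hXmeas hs).inter (hYmeas ht)).inter hGmeas)
    conv_lhs => rw [hdec]
    exact measure_biUnion_finset hdisj hmeas
  -- per-saturation identity
  have hkey : ∀ s' ∈ 𝒮, μ ({ω | S ω = s'} ∩ (Xs ∩ Yt ∩ G))
      = μ {ω | S ω = s'} * Φ s' * μ (Yt ∩ G) := by
    intro s' hs'
    rcases eq_or_ne (μ {ω | S ω = s'}) 0 with h0 | h0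
    · rw [h0, zero_mul, zero_mul]
      exact measure_mono_null Set.inter_subset_left h0
    have htop : μ {ω | S ω = s'} ≠ ⊤ := measure_ne_top μ _
    -- decompose over z
    have hdec : {ω | S ω = s'} ∩ (Xs ∩ Yt ∩ G)
        = ⋃ z ∈ (Finset.univ : Finset (Fin n → Bool)),
            {ω | S ω = s'} ∩ ({ω | Z ω = z} ∩ {ω | (C ω, B ω) ∈ A z s'}) := by
      ext ω
      simp only [Set.mem_iUnion, Set.mem_inter_iff, Set.mem_setOf_eq, hXs, hYt, hG, hA,
        Set.mem_preimage, Set.mem_singleton_iff, Finset.mem_univ, exists_true_left, hDb, hCb]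
      constructor
      · rintro ⟨hS, ⟨hxs, hyt⟩, hg⟩
        exact ⟨Z ω, hS, rfl, by rwa [← hS], hyt, hg⟩
      · rintro ⟨z, hS, hZ, h1, h2, h3⟩
        subst hZ
        exact ⟨hS, ⟨by rwa [hS], h2⟩, h3⟩
    have hdisj2 : (↑(Finset.univ : Finset (Fin n → Bool)) : Set (Fin n → Bool)).PairwiseDisjoint
        (fun z => {ω | S ω = s'} ∩ ({ω | Z ω = z} ∩ {ω | (C ω, B ω) ∈ A z s'})) := by
      intro z₁ _ z₂ _ hne
      refine Set.disjoint_left.mpr ?_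
      rintro ω ⟨_, h1, _⟩ ⟨_, h2, _⟩
      exact hne (h1 ▸ h2)
    have hmeas2 : ∀ z ∈ (Finset.univ : Finset (Fin n → Bool)), MeasurableSet
        ({ω | S ω = s'} ∩ ({ω | Z ω = z} ∩ {ω | (C ω, B ω) ∈ A z s'})) := fun z _ =>
      (hEmeas s').inter ((hZmeas (measurableSet_singleton z)).inter
        ((hCmeas.prodMk hBmeas) (hAmeas z s')))
    rw [hdec, measure_biUnion_finset hdisj2 hmeas2]
    -- apply the Bernoulli design
    have hterm : ∀ z : Fin n → Bool,
        μ ({ω | S ω = s'} ∩ ({ω | Z ω = z} ∩ {ω | (C ω, B ω) ∈ A z s'}))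
          = μ {ω | S ω = s'} * (ENNReal.ofReal (∏ j, if z j then s' else 1 - s')
              * μ {ω | (C ω, B ω) ∈ A z s'}) := by
      intro z
      have hcond := hBern s' hs' (pos_iff_ne_zero.mpr h0) z (A z s') (hAmeas z s')
      rw [cond_apply (hEmeas s'), cond_apply (hEmeas s')] at hcond
      have hIndep : μ ({ω | S ω = s'} ∩ {ω | (C ω, B ω) ∈ A z s'})
          = μ {ω | S ω = s'} * μ {ω | (C ω, B ω) ∈ A z s'} :=
        hExcl.measure_inter_preimage_eq_mul {s'} (A z s') (measurableSet_singleton _)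
          (hAmeas z s')
      have hh : (μ {ω | S ω = s'})⁻¹ * μ ({ω | S ω = s'} ∩ {ω | (C ω, B ω) ∈ A z s'})
          = μ {ω | (C ω, B ω) ∈ A z s'} := by
        rw [hIndep, ← mul_assoc, ENNReal.inv_mul_cancel h0 htop, one_mul]
      rw [hh] at hcond
      calc μ ({ω | S ω = s'} ∩ ({ω | Z ω = z} ∩ {ω | (C ω, B ω) ∈ A z s'}))
          = μ {ω | S ω = s'} * ((μ {ω | S ω = s'})⁻¹
              * μ ({ω | S ω = s'} ∩ ({ω | Z ω = z} ∩ {ω | (C ω, B ω) ∈ A z s'}))) := by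
            rw [← mul_assoc, ENNReal.mul_inv_cancel h0 htop, one_mul]
        _ = μ {ω | S ω = s'} * (ENNReal.ofReal (∏ j, if z j then s' else 1 - s')
              * μ {ω | (C ω, B ω) ∈ A z s'}) := by rw [hcond]
    rw [Finset.sum_congr rfl fun z _ => hterm z, ← Finset.mul_sum]
    -- the inner sum
    have hinner : ∑ z : Fin n → Bool, ENNReal.ofReal (∏ j, if z j then s' else 1 - s')
        * μ {ω | (C ω, B ω) ∈ A z s'} = Φ s' * μ (Yt ∩ G) := by
      have hmA : ∀ z : Fin n → Bool, MeasurableSet {ω | (C ω, B ω) ∈ A z s'} :=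
        fun z => (hCmeas.prodMk hBmeas) (hAmeas z s')
      have h1 : ∀ z : Fin n → Bool, μ {ω | (C ω, B ω) ∈ A z s'}
          = ∫⁻ ω, ({ω | (C ω, B ω) ∈ A z s'}).indicator 1 ω ∂μ :=
        fun z => (lintegral_indicator_one (hmA z)).symm
      have step1 : ∀ z : Fin n → Bool,
          ENNReal.ofReal (∏ j, if z j then s' else 1 - s') * μ {ω | (C ω, B ω) ∈ A z s'}
            = ∫⁻ ω, ENNReal.ofReal (∏ j, if z j then s' else 1 - s')
                * ({ω | (C ω, B ω) ∈ A z s'}).indicator 1 ω ∂μ := by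
        intro z
        rw [h1 z, ← lintegral_const_mul _ (measurable_one.indicator (hmA z))]
      rw [Finset.sum_congr rfl fun z _ => step1 z, ← lintegral_finset_sum _
        (fun z _ => (measurable_one.indicator (hmA z)).const_mul _)]
      have hpt : ∀ ω, (∑ z : Fin n → Bool, ENNReal.ofReal (∏ j, if z j then s' else 1 - s')
            * ({ω | (C ω, B ω) ∈ A z s'}).indicator 1 ω)
          = (Yt ∩ G).indicator (fun _ => Φ s') ω := by
        intro ω
        by_cases hω : ω ∈ Yt ∩ G
        · rw [Set.indicator_of_mem hω]
          obtain ⟨hωY, hωG⟩ := hω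
          have hωY' : (B ω i, C ω i) ∈ t := hωY
          have hωG' : (∑ j ∈ Finset.univ.erase i, (if C ω j then (1 : ℝ) else 0)) / ((n:ℝ)-1)
              = Cb ω₀ := hωG
          have hz : ∀ z : Fin n → Bool, ({ω | (C ω, B ω) ∈ A z s'}).indicator 1 ω
              = f s' (z i) (∑ j ∈ T (C ω), if z j then 1 else 0) := by
            intro z
            have hcast : ((∑ j ∈ T (C ω), if z j then (1:ℕ) else 0 : ℕ) : ℝ)
                = ∑ j ∈ Finset.univ.erase i, (if C ω j && z j then (1:ℝ) else 0) := by
              push_cast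
              rw [hT]
              rw [Finset.sum_filter]
              refine Finset.sum_congr rfl fun j _ => ?_
              cases hC : C ω j <;> cases hZ : z j <;> simp [hC, hZ]
            have hmem_iff : (ω ∈ {ω | (C ω, B ω) ∈ A z s'})
                ↔ (s', z i, (∑ j ∈ Finset.univ.erase i,
                    (if C ω j && z j then (1:ℝ) else 0)) / ((n:ℝ)-1)) ∈ s := by
              simp only [hA, Set.mem_setOf_eq]
              exact ⟨fun h => h.1, fun h => ⟨h, hωY', hωG'⟩⟩
            have hfz : f s' (z i) (∑ j ∈ T (C ω), if z j then 1 else 0)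
                = s.indicator (fun _ => (1:ENNReal)) (s', z i, (∑ j ∈ Finset.univ.erase i,
                    (if C ω j && z j then (1:ℝ) else 0)) / ((n:ℝ)-1)) := by
              simp only [hf]
              rw [hcast]
            rw [hfz]
            by_cases hzs : (s', z i, (∑ j ∈ Finset.univ.erase i,
                (if C ω j && z j then (1:ℝ) else 0)) / ((n:ℝ)-1)) ∈ s
            · rw [Set.indicator_of_mem hzs, Set.indicator_of_mem (hmem_iff.mpr hzs)]
              rfl
            · rw [Set.indicator_of_notMem hzs,
                Set.indicator_of_notMem (fun h => hzs (hmem_iff.mp h))]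
          rw [Finset.sum_congr rfl fun z _ => by rw [hz z]]
          have hofReal : ∀ z : Fin n → Bool,
              ENNReal.ofReal (∏ j, if z j then s' else 1 - s')
                = ∏ j, w s' (z j) := by
            intro z
            rw [hw]
            refine ENNReal.ofReal_prod_of_nonneg fun j _ => ?_
            obtain ⟨h𝒮0, h𝒮1⟩ := h𝒮 s' hs'
            by_cases hzj : z j <;> simp [hzj] <;> linarith
          rw [Finset.sum_congr rfl fun z _ => by rw [hofReal z]]
          have : stmtPhi (w s') (f s') i (T (C ω)) = Φ s' := by
            rw [hΦ]
            refine stmtPhi_card_eq (w s') (f s') i ?_ ?_ ?_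
            · simp [hT]
            · simp [hT]
            · -- equal cardinalities from hωG'
              have hsum := hωG'
              rw [hCb] at hsum
              rw [div_left_inj' hn1] at hsum
              rw [Finset.sum_boole, Finset.sum_boole] at hsum
              simp only [hT]
              exact_mod_cast hsum
          rw [← this]
          rfl
        · rw [Set.indicator_of_notMem hω]
          refine Finset.sum_eq_zero fun z _ => ?_
          have hnot : ω ∉ {ω | (C ω, B ω) ∈ A z s'} := by
            intro hmem
            exact hω ⟨hmem.2.1, hmem.2.2⟩
          rw [Set.indicator_of_notMem hnot, mul_zero]
      rw [lintegral_congr hpt, lintegral_indicator hYtGmeas, setLIntegral_const, mul_comm]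
    rw [hinner, ← mul_assoc]
  rw [hsplit, Finset.sum_congr rfl hkey, ← Finset.sum_mul]

end StmtAux

set_option maxHeartbeats 1000000 in
/-- Under the randomized saturation design (Bernoulli offers independent of `(C, B)` given `S`),
the exclusion restriction, one-sided non-compliance and IOR (`D_j = C_j Z_j`),
`(S, Z_i, D̄_i)` is conditionally independent of `(B_i, C_i)` given `C̄_i`. -/
theorem stmt5 {Ω : Type*} [MeasurableSpace Ω] [StandardBorelSpace Ω] [Nonempty Ω]
    (μ : Measure Ω) [IsProbabilityMeasure μ]
    (n : ℕ) (hn : 2 ≤ n) (p : ℕ)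
    (𝒮 : Finset ℝ) (h𝒮 : ∀ s ∈ 𝒮, s ∈ Set.Icc (0 : ℝ) 1)
    (S : Ω → ℝ) (C Z : Ω → Fin n → Bool) (B : Ω → Fin n → Fin p → ℝ)
    (hSmeas : Measurable S) (hCmeas : Measurable C)
    (hZmeas : Measurable Z) (hBmeas : Measurable B)
    (hSval : ∀ ω, S ω ∈ 𝒮)
    -- Exclusion: S independent of (C, B)
    (hExcl : IndepFun S (fun ω => (C ω, B ω)) μ)
    -- Bernoulli design with exclusion: conditionally on {S = s}, Z is product-Bernoulli(s)
    -- and independent of (C, B)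
    (hBern : ∀ s ∈ 𝒮, 0 < μ {ω | S ω = s} →
      ∀ z : Fin n → Bool,
        ∀ A : Set ((Fin n → Bool) × (Fin n → Fin p → ℝ)), MeasurableSet A →
          μ[|{ω | S ω = s}] ({ω | Z ω = z} ∩ {ω | (C ω, B ω) ∈ A})
            = ENNReal.ofReal (∏ j, if z j then s else 1 - s)
              * μ[|{ω | S ω = s}] {ω | (C ω, B ω) ∈ A})
    (i : Fin n)
    (Dbar Cbar : Ω → ℝ)
    (hDbar : Dbar = fun ω =>
      (∑ j ∈ Finset.univ.erase i, (if C ω j && Z ω j then (1 : ℝ) else 0)) / ((n : ℝ) - 1))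
    (hCbar : Cbar = fun ω =>
      (∑ j ∈ Finset.univ.erase i, (if C ω j then (1 : ℝ) else 0)) / ((n : ℝ) - 1))
    (hCbarMeas : Measurable Cbar) :
    CondIndepFun (MeasurableSpace.comap Cbar inferInstance) hCbarMeas.comap_le
      (fun ω => (S ω, Z ω i, Dbar ω)) (fun ω => (B ω i, C ω i)) μ := by
  classical
  have hDbarMeas : Measurable Dbar := by
    rw [hDbar]
    apply Measurable.div_const
    exact Finset.measurable_sum _ fun j _ =>
      (measurable_of_countable (fun q : (Fin n → Bool) × (Fin n → Bool) =>
        if q.1 j && q.2 j then (1:ℝ) else 0)).comp (hCmeas.prodMk hZmeas)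
  have hXmeas : Measurable (fun ω => (S ω, Z ω i, Dbar ω)) :=
    hSmeas.prodMk (((measurable_pi_apply i).comp hZmeas).prodMk hDbarMeas)
  have hYmeas : Measurable (fun ω => (B ω i, C ω i)) :=
    ((measurable_pi_apply i).comp hBmeas).prodMk ((measurable_pi_apply i).comp hCmeas)
  rw [condIndepFun_iff_condExp_inter_preimage_eq_mul hXmeas hYmeas]
  intro sset tset hss htt
  set V : Finset ℝ := (Finset.range n).image (fun k : ℕ => (k : ℝ) / ((n : ℝ) - 1)) with hV
  have hVmem : ∀ ω, Cbar ω ∈ V := by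
    intro ω
    rw [hCbar]
    simp only []
    rw [Finset.sum_boole]
    refine Finset.mem_image.mpr ⟨((Finset.univ.erase i).filter (fun j => C ω j = true)).card,
      Finset.mem_range.mpr ?_, rfl⟩
    calc ((Finset.univ.erase i).filter (fun j => C ω j = true)).card
        ≤ (Finset.univ.erase i).card := Finset.card_filter_le _ _
      _ = n - 1 := by rw [Finset.card_erase_of_mem (Finset.mem_univ i)]; simp
      _ < n := by omega
  have h1 := condexp_comap_discrete μ hCbarMeas V hVmem ((hXmeas hss).inter (hYmeas htt))
  have h2 := condexp_comap_discrete μ hCbarMeas V hVmem (hXmeas hss)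
  have h3 := condexp_comap_discrete μ hCbarMeas V hVmem (hYmeas htt)
  have hnull : μ (⋃ c ∈ V.filter (fun c => μ (Cbar ⁻¹' {c}) = 0), Cbar ⁻¹' {c}) = 0 :=
    le_antisymm ((measure_biUnion_finset_le _ _).trans (le_of_eq
      (Finset.sum_eq_zero fun c hc => (Finset.mem_filter.mp hc).2))) zero_le
  have hae : ∀ᵐ ω ∂μ, μ (Cbar ⁻¹' {Cbar ω}) ≠ 0 := by
    rw [ae_iff]
    refine measure_mono_null (fun ω hω => ?_) hnull
    simp only [Set.mem_setOf_eq, not_not] at hω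
    exact Set.mem_biUnion (Finset.mem_coe.mpr (Finset.mem_filter.mpr ⟨hVmem ω, hω⟩)) rfl
  filter_upwards [h1, h2, h3, hae] with ω e1 e2 e3 hω
  rw [e1, e2, e3]
  have hcore1 := stmt_core μ hn 𝒮 h𝒮 S C Z B hSmeas hCmeas hZmeas hBmeas hSval hExcl hBern
    i Dbar Cbar hDbar hCbar ω sset hss tset htt
  have hcore2 := stmt_core μ hn 𝒮 h𝒮 S C Z B hSmeas hCmeas hZmeas hBmeas hSval hExcl hBern
    i Dbar Cbar hDbar hCbar ω sset hss Set.univ MeasurableSet.univ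
  simp only [Set.preimage_univ, Set.inter_univ, Set.univ_inter] at hcore2
  have hg : (μ (Cbar ⁻¹' {Cbar ω})).toReal ≠ 0 :=
    ENNReal.toReal_ne_zero.mpr ⟨hω, measure_ne_top μ _⟩
  rw [hcore1, hcore2, ENNReal.toReal_mul, ENNReal.toReal_mul,
    mul_div_assoc, mul_div_cancel_right₀ _ hg]
end

section
/- Let 0 < s_L < s_H < 1, let c̄ ∈ (0, 1], and let n ≥ 2 be an integer. Then det Q₀(c̄, n) = (c̄²/4)·(1−s_L)(1−s_H)(s_H−s_L)² + (c̄/(4(n−1)))·[(1−s_L)+(1−s_H)]·[s_L(1−s_L)² + s_H(1−s_H)²] and det Q₁(c̄, n) = (c̄²/4)·s_L s_H (s_H−s_L)² + (c̄/(4(n−1)))·(s_L + s_H)·[s_L²(1−s_L) + s_H²(1−s_H)]. Both determinants are strictly positive, so Q₀(c̄, n) and Q₁(c̄, n) are invertible. -/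
open Matrix

/-- For a design with two equally likely interior saturations `0 < s_L < s_H < 1`,
explicit determinant formulas for `Q₀(c̄, n)` and `Q₁(c̄, n)`; both determinants are
strictly positive, hence both matrices are invertible. -/
theorem stmt12 (sL sH : ℝ) (hL0 : 0 < sL) (hLH : sL < sH) (hH1 : sH < 1)
    (cbar : ℝ) (hcbar : cbar ∈ Set.Ioc (0 : ℝ) 1) (n : ℕ) (hn : 2 ≤ n) :
    let E : (ℝ → ℝ) → ℝ := fun g => (g sL + g sH) / 2
    let Q₀ : Matrix (Fin 2) (Fin 2) ℝ :=
      !![E (fun s => 1 - s), cbar * E (fun s => s * (1 - s));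
         cbar * E (fun s => s * (1 - s)),
         cbar ^ 2 * E (fun s => s ^ 2 * (1 - s))
           + (cbar / ((n : ℝ) - 1)) * E (fun s => s * (1 - s) ^ 2)]
    let Q₁ : Matrix (Fin 2) (Fin 2) ℝ :=
      !![E (fun s => s), cbar * E (fun s => s ^ 2);
         cbar * E (fun s => s ^ 2),
         cbar ^ 2 * E (fun s => s ^ 3)
           + (cbar / ((n : ℝ) - 1)) * E (fun s => s ^ 2 * (1 - s))]
    Q₀.det = (cbar ^ 2 / 4) * (1 - sL) * (1 - sH) * (sH - sL) ^ 2
        + (cbar / (4 * ((n : ℝ) - 1))) * ((1 - sL) + (1 - sH))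
            * (sL * (1 - sL) ^ 2 + sH * (1 - sH) ^ 2) ∧
    Q₁.det = (cbar ^ 2 / 4) * sL * sH * (sH - sL) ^ 2
        + (cbar / (4 * ((n : ℝ) - 1))) * (sL + sH)
            * (sL ^ 2 * (1 - sL) + sH ^ 2 * (1 - sH)) ∧
    0 < Q₀.det ∧ 0 < Q₁.det ∧ IsUnit Q₀ ∧ IsUnit Q₁ := by
  intro E Q₀ Q₁
  obtain ⟨hc0, hc1⟩ := hcbar
  have hn1 : (0:ℝ) < (n:ℝ) - 1 := by
    have : (2:ℝ) ≤ (n:ℝ) := by exact_mod_cast hn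
    linarith
  have hn1' : ((n:ℝ) - 1) ≠ 0 := ne_of_gt hn1
  have hH0 : 0 < sH := lt_trans hL0 hLH
  have hL1 : sL < 1 := lt_trans hLH hH1
  have hdet0 : Q₀.det = (cbar ^ 2 / 4) * (1 - sL) * (1 - sH) * (sH - sL) ^ 2
        + (cbar / (4 * ((n : ℝ) - 1))) * ((1 - sL) + (1 - sH))
            * (sL * (1 - sL) ^ 2 + sH * (1 - sH) ^ 2) := by
    simp only [Q₀, E, Matrix.det_fin_two_of]
    field_simp
    ring
  have hdet1 : Q₁.det = (cbar ^ 2 / 4) * sL * sH * (sH - sL) ^ 2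
        + (cbar / (4 * ((n : ℝ) - 1))) * (sL + sH)
            * (sL ^ 2 * (1 - sL) + sH ^ 2 * (1 - sH)) := by
    simp only [Q₁, E, Matrix.det_fin_two_of]
    field_simp
    ring
  have hpos0 : 0 < Q₀.det := by
    rw [hdet0]
    have h1 : 0 < (cbar ^ 2 / 4) * (1 - sL) * (1 - sH) * (sH - sL) ^ 2 := by
      apply mul_pos
      apply mul_pos
      apply mul_pos
      · positivity
      · linarith
      · linarith
      · exact pow_pos (by linarith) 2
    have h2 : 0 < (cbar / (4 * ((n : ℝ) - 1))) * ((1 - sL) + (1 - sH))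
        * (sL * (1 - sL) ^ 2 + sH * (1 - sH) ^ 2) := by
      apply mul_pos
      apply mul_pos
      · positivity
      · linarith
      · have a1 : 0 < sL * (1 - sL) ^ 2 := mul_pos hL0 (pow_pos (by linarith) 2)
        have a2 : 0 < sH * (1 - sH) ^ 2 := mul_pos hH0 (pow_pos (by linarith) 2)
        linarith
    linarith
  have hpos1 : 0 < Q₁.det := by
    rw [hdet1]
    have h1 : 0 < (cbar ^ 2 / 4) * sL * sH * (sH - sL) ^ 2 := by
      apply mul_pos (mul_pos (mul_pos (by positivity) hL0) hH0)
      exact pow_pos (by linarith) 2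
    have h2 : 0 < (cbar / (4 * ((n : ℝ) - 1))) * (sL + sH)
        * (sL ^ 2 * (1 - sL) + sH ^ 2 * (1 - sH)) := by
      apply mul_pos (mul_pos (by positivity) (by linarith))
      have h3 : 0 < sL ^ 2 * (1 - sL) := mul_pos (pow_pos hL0 2) (by linarith)
      have h4 : 0 < sH ^ 2 * (1 - sH) := mul_pos (pow_pos hH0 2) (by linarith)
      linarith
    linarith
  refine ⟨hdet0, hdet1, hpos0, hpos1, ?_, ?_⟩
  · rw [Matrix.isUnit_iff_isUnit_det]; exact (ne_of_gt hpos0).isUnit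
  · rw [Matrix.isUnit_iff_isUnit_det]; exact (ne_of_gt hpos1).isUnit
end

section
/- If S ≥ s̲ almost surely for some s̲ ∈ (0, 1] and P(Z̄ ≥ s̲/2) > 0, then for every t > 0, P(|Ĉ − C̄| ≥ t | Z̄ ≥ s̲/2) ≤ 2·exp(−n·s̲²·t²/2). -/
open MeasureTheory ProbabilityTheory Finset
open scoped ENNReal

namespace Stmt16Aux

lemma log_mgf_le (s : ℝ) (hs0 : 0 ≤ s) (hs1 : s ≤ 1) (u : ℝ) :
    Real.log (1 - s + s * Real.exp u) ≤ s * u + u ^ 2 / 8 := by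
  have hg : ∀ v : ℝ, 0 < 1 - s + s * Real.exp v := by
    intro v
    rcases eq_or_lt_of_le hs0 with h | h
    · simp [← h]
    · have := Real.exp_pos v; nlinarith
  set f : ℝ → ℝ := fun u => s * u + u ^ 2 / 8 - Real.log (1 - s + s * Real.exp u) with hfdef
  set f1 : ℝ → ℝ := fun u => s + u / 4 - s * Real.exp u / (1 - s + s * Real.exp u) with hf1def
  have hderiv : ∀ v : ℝ, HasDerivAt f (f1 v) v := by
    intro v
    have h1 : HasDerivAt (fun u : ℝ => 1 - s + s * Real.exp u) (s * Real.exp v) v := by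
      simpa using ((Real.hasDerivAt_exp v).const_mul s).const_add (1 - s)
    have h2 : HasDerivAt (fun u : ℝ => Real.log (1 - s + s * Real.exp u))
        (s * Real.exp v / (1 - s + s * Real.exp v)) v := h1.log (hg v).ne'
    have h3 : HasDerivAt (fun u : ℝ => s * u + u ^ 2 / 8) (s + v / 4) v := by
      have ha : HasDerivAt (fun u : ℝ => s * u) s v := by
        simpa using (hasDerivAt_id v).const_mul s
      have hb : HasDerivAt (fun u : ℝ => u ^ 2 / 8) (v / 4) v := by
        have := (hasDerivAt_pow 2 v).div_const 8
        exact this.congr_deriv (by ring)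
      exact ha.add hb
    exact h3.sub h2
  have hderiv1 : ∀ v : ℝ, HasDerivAt f1
      (1 / 4 - s * (1 - s) * Real.exp v / (1 - s + s * Real.exp v) ^ 2) v := by
    intro v
    have h1 : HasDerivAt (fun u : ℝ => 1 - s + s * Real.exp u) (s * Real.exp v) v := by
      simpa using ((Real.hasDerivAt_exp v).const_mul s).const_add (1 - s)
    have h2 : HasDerivAt (fun u : ℝ => s * Real.exp u) (s * Real.exp v) v :=
      (Real.hasDerivAt_exp v).const_mul s
    have h4 : HasDerivAt (fun u : ℝ => s * Real.exp u / (1 - s + s * Real.exp u))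
        ((s * Real.exp v * (1 - s + s * Real.exp v) - s * Real.exp v * (s * Real.exp v)) /
          (1 - s + s * Real.exp v) ^ 2) v := h2.div h1 (hg v).ne'
    have h5 : HasDerivAt (fun u : ℝ => s + u / 4) (1 / 4) v := by
      simpa using ((hasDerivAt_id v).div_const 4).const_add s
    have h6 := h5.sub h4
    refine h6.congr_deriv ?_
    field_simp
    ring
  have hnonneg : ∀ v : ℝ, 0 ≤ 1 / 4 - s * (1 - s) * Real.exp v / (1 - s + s * Real.exp v) ^ 2 := by
    intro v
    rw [sub_nonneg, div_le_iff₀ (pow_pos (hg v) 2)]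
    nlinarith [sq_nonneg ((1 - s) - s * Real.exp v), Real.exp_pos v]
  have hf1mono : Monotone f1 :=
    monotone_of_deriv_nonneg (fun v => (hderiv1 v).differentiableAt)
      (fun v => by rw [(hderiv1 v).deriv]; exact hnonneg v)
  have hf10 : f1 0 = 0 := by
    simp [hf1def]
  have hf0 : f 0 = 0 := by
    simp [hfdef]
  have hkey : 0 ≤ f u := by
    rcases le_total 0 u with hu | hu
    · have hmono : MonotoneOn f (Set.Ici (0 : ℝ)) := by
        apply monotoneOn_of_deriv_nonneg (convex_Ici 0)
          (fun v _ => (hderiv v).differentiableAt.continuousAt.continuousWithinAt)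
          (fun v _ => (hderiv v).differentiableAt.differentiableWithinAt)
        intro v hv
        rw [(hderiv v).deriv]
        rw [interior_Ici] at hv
        calc (0:ℝ) = f1 0 := hf10.symm
          _ ≤ f1 v := hf1mono (le_of_lt hv)
      calc (0:ℝ) = f 0 := hf0.symm
        _ ≤ f u := hmono Set.self_mem_Ici hu hu
    · have hanti : AntitoneOn f (Set.Iic (0 : ℝ)) := by
        apply antitoneOn_of_deriv_nonpos (convex_Iic 0)
          (fun v _ => (hderiv v).differentiableAt.continuousAt.continuousWithinAt)
          (fun v _ => (hderiv v).differentiableAt.differentiableWithinAt)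
        intro v hv
        rw [(hderiv v).deriv]
        rw [interior_Iic] at hv
        calc f1 v ≤ f1 0 := hf1mono (le_of_lt hv)
          _ = 0 := hf10
      calc (0:ℝ) = f 0 := hf0.symm
        _ ≤ f u := hanti hu Set.self_mem_Iic hu
  have : Real.log (1 - s + s * Real.exp u) ≤ s * u + u ^ 2 / 8 := by
    have := hkey
    simp only [hfdef] at this
    linarith
  exact this

lemma mgf_two_point_le (s : ℝ) (hs0 : 0 ≤ s) (hs1 : s ≤ 1) (u : ℝ) :
    (1 - s) * Real.exp (-(s * u)) + s * Real.exp ((1 - s) * u) ≤ Real.exp (u ^ 2 / 8) := by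
  have hg : 0 < 1 - s + s * Real.exp u := by
    rcases eq_or_lt_of_le hs0 with h | h
    · simp [← h]
    · have := Real.exp_pos u; nlinarith
  have h1 : (1 - s) * Real.exp (-(s * u)) + s * Real.exp ((1 - s) * u)
      = (1 - s + s * Real.exp u) * Real.exp (-(s * u)) := by
    rw [add_mul]
    congr 1
    rw [mul_assoc, ← Real.exp_add]
    congr 1
    ring
  rw [h1, ← Real.exp_log hg, ← Real.exp_add]
  apply Real.exp_le_exp.mpr
  have := log_mgf_le s hs0 hs1 u
  linarith

lemma sum_weights (n : ℕ) (s : ℝ) :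
    ∑ z : Fin n → Bool, ∏ j, (if z j then s else 1 - s) = 1 := by
  have := (Fintype.prod_sum (fun (j : Fin n) (b : Bool) => if b then s else 1 - s)).symm
  rw [this]
  simp

lemma weight_nonneg (n : ℕ) (s : ℝ) (hs0 : 0 ≤ s) (hs1 : s ≤ 1) (z : Fin n → Bool) :
    0 ≤ ∏ j, (if z j then s else 1 - s) := by
  apply Finset.prod_nonneg
  intro j _
  split <;> linarith

lemma chernoff (n : ℕ) (s : ℝ) (hs0 : 0 ≤ s) (hs1 : s ≤ 1) (r : Fin n → ℝ) (a V : ℝ)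
    (ha : 0 < a) (hV : 0 < V) (hVr : ∑ j, r j ^ 2 ≤ V) :
    ∑ z ∈ univ.filter (fun z : Fin n → Bool =>
        a ≤ ∑ j, r j * ((if z j then (1 : ℝ) else 0) - s)),
      ∏ j, (if z j then s else 1 - s)
      ≤ Real.exp (-(2 * a ^ 2 / V)) := by
  set lam := 4 * a / V with hlamdef
  have hlam : 0 ≤ lam := by positivity
  set F : (Fin n → Bool) → ℝ := fun z => ∑ j, r j * ((if z j then (1 : ℝ) else 0) - s) with hF
  have step1 : ∑ z ∈ univ.filter (fun z : Fin n → Bool => a ≤ F z),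
      ∏ j, (if z j then s else 1 - s)
      ≤ ∑ z : Fin n → Bool, (∏ j, (if z j then s else 1 - s)) * Real.exp (lam * (F z - a)) := by
    apply le_trans (Finset.sum_le_sum (fun z hz => ?_))
      (Finset.sum_le_sum_of_subset_of_nonneg (Finset.filter_subset _ _) (fun z _ _ => ?_))
    · rw [Finset.mem_filter] at hz
      apply le_mul_of_one_le_right (weight_nonneg n s hs0 hs1 z)
      apply Real.one_le_exp
      have := hz.2
      nlinarith
    · have := Real.exp_pos (lam * (F z - a))
      have := weight_nonneg n s hs0 hs1 z
      positivity
  have fact : ∑ z : Fin n → Bool, (∏ j, (if z j then s else 1 - s)) * Real.exp (lam * F z)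
      = ∏ j, ((1 - s) * Real.exp (-(s * (lam * r j))) + s * Real.exp ((1 - s) * (lam * r j))) := by
    have lhs_eq : ∀ z : Fin n → Bool,
        (∏ j, (if z j then s else 1 - s)) * Real.exp (lam * F z)
        = ∏ j, ((if z j then s else 1 - s) *
            Real.exp (lam * (r j * ((if z j then (1 : ℝ) else 0) - s)))) := by
      intro z
      rw [Finset.prod_mul_distrib, ← Real.exp_sum, hF, Finset.mul_sum]
    rw [Finset.sum_congr rfl (fun z _ => lhs_eq z),
      ← Fintype.prod_sum (fun (j : Fin n) (b : Bool) => (if b then s else 1 - s) *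
          Real.exp (lam * (r j * ((if b then (1 : ℝ) else 0) - s))))]
    apply Finset.prod_congr rfl
    intro j _
    rw [Fintype.sum_bool]
    norm_num
    ring_nf
  have factor_le : ∀ j : Fin n,
      (1 - s) * Real.exp (-(s * (lam * r j))) + s * Real.exp ((1 - s) * (lam * r j))
      ≤ Real.exp ((lam * r j) ^ 2 / 8) := fun j => mgf_two_point_le s hs0 hs1 (lam * r j)
  have factor_nonneg : ∀ j : Fin n,
      0 ≤ (1 - s) * Real.exp (-(s * (lam * r j))) + s * Real.exp ((1 - s) * (lam * r j)) := by
    intro j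
    have := Real.exp_pos (-(s * (lam * r j)))
    have := Real.exp_pos ((1 - s) * (lam * r j))
    nlinarith
  have step2 : ∑ z : Fin n → Bool, (∏ j, (if z j then s else 1 - s)) * Real.exp (lam * F z)
      ≤ Real.exp (lam ^ 2 * V / 8) := by
    rw [fact]
    calc ∏ j, ((1 - s) * Real.exp (-(s * (lam * r j))) + s * Real.exp ((1 - s) * (lam * r j)))
        ≤ ∏ j, Real.exp ((lam * r j) ^ 2 / 8) :=
          Finset.prod_le_prod (fun j _ => factor_nonneg j) (fun j _ => factor_le j)
      _ = Real.exp (∑ j, (lam * r j) ^ 2 / 8) := by rw [Real.exp_sum]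
      _ ≤ Real.exp (lam ^ 2 * V / 8) := by
          apply Real.exp_le_exp.mpr
          have : ∑ j, (lam * r j) ^ 2 / 8 = lam ^ 2 * (∑ j, r j ^ 2) / 8 := by
            rw [Finset.mul_sum, Finset.sum_div]
            exact Finset.sum_congr rfl fun j _ => by ring
          rw [this]
          have h2 : lam ^ 2 * (∑ j, r j ^ 2) ≤ lam ^ 2 * V :=
            mul_le_mul_of_nonneg_left hVr (sq_nonneg lam)
          linarith
  calc ∑ z ∈ univ.filter (fun z : Fin n → Bool => a ≤ F z), ∏ j, (if z j then s else 1 - s)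
      ≤ ∑ z : Fin n → Bool, (∏ j, (if z j then s else 1 - s)) * Real.exp (lam * (F z - a)) := step1
    _ = Real.exp (-(lam * a)) *
        ∑ z : Fin n → Bool, (∏ j, (if z j then s else 1 - s)) * Real.exp (lam * F z) := by
        rw [Finset.mul_sum]
        apply Finset.sum_congr rfl
        intro z _
        rw [mul_comm (Real.exp (-(lam * a))), mul_assoc, ← Real.exp_add]
        congr 2
        ring
    _ ≤ Real.exp (-(lam * a)) * Real.exp (lam ^ 2 * V / 8) := by
        apply mul_le_mul_of_nonneg_left step2 (le_of_lt (Real.exp_pos _))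
    _ = Real.exp (-(2 * a ^ 2 / V)) := by
        rw [← Real.exp_add]
        congr 1
        rw [hlamdef]
        field_simp
        ring

end Stmt16Aux

open MeasureTheory ProbabilityTheory Finset Stmt16Aux
namespace Stmt16Aux

lemma sum_filter_le_add {n : ℕ} (s : ℝ) (hs0 : 0 ≤ s) (hs1 : s ≤ 1)
    (p q1 q2 : (Fin n → Bool) → Prop) [DecidablePred p] [DecidablePred q1] [DecidablePred q2]
    (hpq : ∀ z, p z → q1 z ∨ q2 z) :
    ∑ z ∈ univ.filter p, ∏ j, (if z j then s else 1 - s)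
    ≤ (∑ z ∈ univ.filter q1, ∏ j, (if z j then s else 1 - s))
      + ∑ z ∈ univ.filter q2, ∏ j, (if z j then s else 1 - s) := by
  have hsub : univ.filter p ⊆ univ.filter q1 ∪ univ.filter q2 := by
    intro z hz
    rw [Finset.mem_filter] at hz
    rcases hpq z hz.2 with h | h <;> simp [Finset.mem_union, Finset.mem_filter, h]
  calc ∑ z ∈ univ.filter p, ∏ j, (if z j then s else 1 - s)
      ≤ ∑ z ∈ univ.filter q1 ∪ univ.filter q2, ∏ j, (if z j then s else 1 - s) :=
        Finset.sum_le_sum_of_subset_of_nonneg hsub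
          (fun z _ _ => weight_nonneg n s hs0 hs1 z)
    _ ≤ _ := by
        rw [← Finset.sum_union_inter]
        have : 0 ≤ ∑ z ∈ univ.filter q1 ∩ univ.filter q2, ∏ j, (if z j then s else 1 - s) :=
          Finset.sum_nonneg (fun z _ => weight_nonneg n s hs0 hs1 z)
        linarith

lemma tail_AB (n : ℕ) (hn : 0 < n) (s slb t : ℝ) (hs1 : s ≤ 1) (hslb0 : 0 < slb)
    (hslbs : slb ≤ s) (ht : 0 < t) (c : Fin n → Bool) :
    ∑ z ∈ univ.filter (fun z : Fin n → Bool =>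
        slb / 2 ≤ (∑ j, if z j then (1:ℝ) else 0) / (n : ℝ) ∧
        t ≤ |(if 0 < (∑ j, if z j then (1:ℕ) else 0) then
            (∑ j, if c j && z j then (1:ℝ) else 0) / (∑ j, if z j then (1:ℝ) else 0)
          else 0) - (∑ j, if c j then (1:ℝ) else 0) / (n : ℝ)|),
      ∏ j, (if z j then s else 1 - s)
    ≤ 2 * Real.exp (-(2 * (n : ℝ) * slb ^ 2 * t ^ 2)) := by
  have hs0 : 0 ≤ s := le_trans (le_of_lt hslb0) hslbs
  have hn0 : (0 : ℝ) < (n : ℝ) := by exact_mod_cast hn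
  set m : ℝ := (∑ j, if c j then (1:ℝ) else 0) / (n : ℝ) with hm
  set r : Fin n → ℝ := fun j => (if c j then (1:ℝ) else 0) - m with hr
  set a : ℝ := t * ((n : ℝ) * slb) / 2 with ha
  have ha0 : 0 < a := by positivity
  have hT : ∑ j, (if c j then (1:ℝ) else 0) = m * (n : ℝ) := by
    rw [hm]; field_simp
  have hV : ∑ j, r j ^ 2 ≤ (n : ℝ) / 4 := by
    have hexp : ∀ j, r j ^ 2 = (if c j then (1:ℝ) else 0)
        - 2 * m * (if c j then (1:ℝ) else 0) + m ^ 2 := by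
      intro j
      by_cases h : c j <;> simp [hr, h] <;> ring
    rw [Finset.sum_congr rfl (fun j _ => hexp j)]
    rw [Finset.sum_add_distrib, Finset.sum_sub_distrib, hT, ← Finset.mul_sum, hT]
    simp only [Finset.sum_const, Finset.card_univ, Fintype.card_fin, nsmul_eq_mul]
    nlinarith [sq_nonneg (1 - 2 * m), hn0]
  have hV' : ∑ j, (- r j) ^ 2 ≤ (n : ℝ) / 4 := by
    simpa using hV
  have hFval : ∀ z : Fin n → Bool,
      ∑ j, r j * ((if z j then (1:ℝ) else 0) - s)
      = (∑ j, if c j && z j then (1:ℝ) else 0)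
        - m * (∑ j, if z j then (1:ℝ) else 0) := by
    intro z
    have h1 : ∀ j, r j * ((if z j then (1:ℝ) else 0) - s)
        = (if c j && z j then (1:ℝ) else 0) - m * (if z j then (1:ℝ) else 0)
          - s * (if c j then (1:ℝ) else 0) + s * m := by
      intro j
      by_cases h : c j <;> by_cases h' : z j <;> simp [hr, h, h'] <;> ring
    rw [Finset.sum_congr rfl (fun j _ => h1 j)]
    rw [Finset.sum_add_distrib, Finset.sum_sub_distrib, Finset.sum_sub_distrib,
      ← Finset.mul_sum, ← Finset.mul_sum, hT]
    simp only [Finset.sum_const, Finset.card_univ, Fintype.card_fin, nsmul_eq_mul]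
    ring
  have hincl : ∀ z : Fin n → Bool,
      (slb / 2 ≤ (∑ j, if z j then (1:ℝ) else 0) / (n : ℝ) ∧
        t ≤ |(if 0 < (∑ j, if z j then (1:ℕ) else 0) then
            (∑ j, if c j && z j then (1:ℝ) else 0) / (∑ j, if z j then (1:ℝ) else 0)
          else 0) - m|) →
      (a ≤ ∑ j, r j * ((if z j then (1:ℝ) else 0) - s)) ∨
      (a ≤ ∑ j, (- r j) * ((if z j then (1:ℝ) else 0) - s)) := by
    intro z hz
    obtain ⟨hA, hB⟩ := hz
    set Nz : ℝ := ∑ j, if z j then (1:ℝ) else 0 with hNz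
    set Ncz : ℝ := ∑ j, if c j && z j then (1:ℝ) else 0 with hNcz
    have hNzlb : (n : ℝ) * slb / 2 ≤ Nz := by
      rw [div_le_div_iff₀ (by norm_num) hn0] at hA
      nlinarith
    have hNzpos : 0 < Nz := lt_of_lt_of_le (by positivity) hNzlb
    have hcast : Nz = ((∑ j, if z j then (1:ℕ) else 0 : ℕ) : ℝ) := by
      rw [hNz]
      push_cast
      exact Finset.sum_congr rfl fun j _ => by split <;> simp
    have hnat : 0 < (∑ j, if z j then (1:ℕ) else 0) := by
      have : (0:ℝ) < ((∑ j, if z j then (1:ℕ) else 0 : ℕ) : ℝ) := hcast ▸ hNzpos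
      exact_mod_cast this
    rw [if_pos hnat] at hB
    have hkey : a ≤ |Ncz - m * Nz| := by
      have heq : Ncz - m * Nz = (Ncz / Nz - m) * Nz := by
        rw [sub_mul, div_mul_cancel₀ _ hNzpos.ne']
      rw [heq, abs_mul, abs_of_pos hNzpos]
      calc a = t * ((n:ℝ) * slb / 2) := by rw [ha]; ring
        _ ≤ |Ncz / Nz - m| * ((n:ℝ) * slb / 2) :=
            mul_le_mul_of_nonneg_right hB (by positivity)
        _ ≤ |Ncz / Nz - m| * Nz :=
            mul_le_mul_of_nonneg_left hNzlb (abs_nonneg _)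
    have hneg : ∑ j, (- r j) * ((if z j then (1:ℝ) else 0) - s)
        = - ∑ j, r j * ((if z j then (1:ℝ) else 0) - s) := by
      rw [← Finset.sum_neg_distrib]
      exact Finset.sum_congr rfl fun j _ => by ring
    rcases le_abs.mp hkey with h | h
    · left; rw [hFval z]; exact h
    · right; rw [hneg, hFval z]; linarith
  refine le_trans (sum_filter_le_add s hs0 hs1 _ _ _ hincl) ?_
  have hb1 := chernoff n s hs0 hs1 r a ((n:ℝ)/4) ha0 (by positivity) hV
  have hb2 := chernoff n s hs0 hs1 (fun j => - r j) a ((n:ℝ)/4) ha0 (by positivity) hV'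
  have hexpeq : -(2 * a ^ 2 / ((n:ℝ)/4)) = -(2 * (n : ℝ) * slb ^ 2 * t ^ 2) := by
    rw [ha]
    field_simp
    ring
  rw [hexpeq] at hb1 hb2
  linarith

lemma tail_A (n : ℕ) (hn : 0 < n) (s slb : ℝ) (hs1 : s ≤ 1) (hslb0 : 0 < slb)
    (hslbs : slb ≤ s) :
    1 - Real.exp (-((n : ℝ) * slb ^ 2 / 2))
    ≤ ∑ z ∈ univ.filter (fun z : Fin n → Bool =>
        slb / 2 ≤ (∑ j, if z j then (1:ℝ) else 0) / (n : ℝ)),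
        ∏ j, (if z j then s else 1 - s) := by
  have hs0 : 0 ≤ s := le_trans (le_of_lt hslb0) hslbs
  have hn0 : (0 : ℝ) < (n : ℝ) := by exact_mod_cast hn
  set a : ℝ := (n : ℝ) * slb / 2 with ha
  have ha0 : 0 < a := by positivity
  have hsplit := Finset.sum_filter_add_sum_filter_not univ
    (fun z : Fin n → Bool => slb / 2 ≤ (∑ j, if z j then (1:ℝ) else 0) / (n : ℝ))
    (fun z => ∏ j, (if z j then s else 1 - s))
  rw [sum_weights n s] at hsplit
  have hincl : ∀ z : Fin n → Bool,
      (¬ slb / 2 ≤ (∑ j, if z j then (1:ℝ) else 0) / (n : ℝ)) →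
      a ≤ ∑ j, (fun _ : Fin n => (-1 : ℝ)) j * ((if z j then (1:ℝ) else 0) - s) := by
    intro z hz
    push_neg at hz
    rw [div_lt_div_iff₀ hn0 (by norm_num)] at hz
    have hFeq : ∑ j, (fun _ : Fin n => (-1 : ℝ)) j * ((if z j then (1:ℝ) else 0) - s)
        = (n : ℝ) * s - ∑ j, (if z j then (1:ℝ) else 0) := by
      rw [Finset.sum_congr rfl (fun j (_ : j ∈ univ) =>
        (by ring : (fun _ : Fin n => (-1 : ℝ)) j * ((if z j then (1:ℝ) else 0) - s)
          = s - (if z j then (1:ℝ) else 0)))]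
      rw [Finset.sum_sub_distrib]
      try simp only [Finset.sum_const, Finset.card_univ, Fintype.card_fin, nsmul_eq_mul]
      try ring
    rw [hFeq, ha]
    nlinarith
  have hsub : univ.filter (fun z : Fin n → Bool =>
      ¬ slb / 2 ≤ (∑ j, if z j then (1:ℝ) else 0) / (n : ℝ))
      ⊆ univ.filter (fun z : Fin n → Bool =>
        a ≤ ∑ j, (fun _ : Fin n => (-1 : ℝ)) j * ((if z j then (1:ℝ) else 0) - s)) := by
    intro z hz
    rw [Finset.mem_filter] at hz ⊢
    exact ⟨hz.1, hincl z hz.2⟩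
  have hsumr : ∑ j : Fin n, ((fun _ : Fin n => (-1 : ℝ)) j) ^ 2 ≤ (n : ℝ) := by
    simp
  have hcher := chernoff n s hs0 hs1 (fun _ => (-1 : ℝ)) a (n : ℝ) ha0 hn0 hsumr
  have hbound : ∑ z ∈ univ.filter (fun z : Fin n → Bool =>
      ¬ slb / 2 ≤ (∑ j, if z j then (1:ℝ) else 0) / (n : ℝ)),
      ∏ j, (if z j then s else 1 - s) ≤ Real.exp (-((n : ℝ) * slb ^ 2 / 2)) := by
    refine le_trans (Finset.sum_le_sum_of_subset_of_nonneg hsub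
      (fun z _ _ => weight_nonneg n s hs0 hs1 z)) ?_
    have hexpeq : -(2 * a ^ 2 / (n : ℝ)) = -((n : ℝ) * slb ^ 2 / 2) := by
      rw [ha]; field_simp
    rw [← hexpeq]
    exact hcher
  linarith

end Stmt16Aux

namespace Stmt16Aux

lemma cond_cell {Ω : Type*} [MeasurableSpace Ω] (μ : Measure Ω) [IsProbabilityMeasure μ]
    {n : ℕ} (S : Ω → ℝ) (C Z : Ω → Fin n → Bool) (hZmeas : Measurable Z)
    (s : ℝ) (c : Fin n → Bool) (hPm : MeasurableSet {ω | S ω = s ∧ C ω = c})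
    (hμP : μ {ω | S ω = s ∧ C ω = c} ≠ 0)
    (hBernc : ∀ z : Fin n → Bool,
      (μ[|{ω | S ω = s ∧ C ω = c}] {ω | Z ω = z}).toReal
        = ∏ j, (if z j then s else 1 - s))
    (q : (Fin n → Bool) → (Fin n → Bool) → Prop) [∀ c z, Decidable (q c z)] :
    (μ ({ω | q (C ω) (Z ω)} ∩ {ω | S ω = s ∧ C ω = c})).toReal
      = (μ {ω | S ω = s ∧ C ω = c}).toReal *
        ∑ z ∈ univ.filter (fun z => q c z), ∏ j, (if z j then s else 1 - s) := by
  have hXP : {ω | q (C ω) (Z ω)} ∩ {ω | S ω = s ∧ C ω = c}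
      = {ω | q c (Z ω)} ∩ {ω | S ω = s ∧ C ω = c} := by
    ext ω
    constructor
    · rintro ⟨h1, h2⟩
      rw [Set.mem_setOf_eq] at h1
      rw [h2.2] at h1
      exact ⟨h1, h2⟩
    · rintro ⟨h1, h2⟩
      rw [Set.mem_setOf_eq] at h1
      refine ⟨?_, h2⟩
      rw [Set.mem_setOf_eq, h2.2]
      exact h1
  have hfin : μ {ω | S ω = s ∧ C ω = c} ≠ ∞ := measure_ne_top μ _
  have hmul : μ ({ω | S ω = s ∧ C ω = c} ∩ {ω | q c (Z ω)})
      = μ {ω | S ω = s ∧ C ω = c} * μ[|{ω | S ω = s ∧ C ω = c}] {ω | q c (Z ω)} := by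
    rw [cond_apply hPm μ {ω | q c (Z ω)}, ← mul_assoc,
      ENNReal.mul_inv_cancel hμP hfin, one_mul]
  have hsplit : {ω | q c (Z ω)}
      = ⋃ z ∈ univ.filter (fun z => q c z), {ω | Z ω = z} := by
    ext ω
    simp only [Set.mem_iUnion, Set.mem_setOf_eq, Finset.mem_filter, Finset.mem_univ,
      true_and, exists_prop]
    constructor
    · intro h; exact ⟨Z ω, h, rfl⟩
    · rintro ⟨z, hz, hzz⟩; exact hzz ▸ hz
  have hcondsum : μ[|{ω | S ω = s ∧ C ω = c}] {ω | q c (Z ω)}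
      = ∑ z ∈ univ.filter (fun z => q c z),
          μ[|{ω | S ω = s ∧ C ω = c}] {ω | Z ω = z} := by
    rw [hsplit]
    apply measure_biUnion_finset
    · intro z _ z' _ hzz'
      apply Set.disjoint_left.mpr
      rintro ω h1 h2
      rw [Set.mem_setOf_eq] at h1 h2
      exact hzz' (h1.symm.trans h2)
    · intro z _
      exact hZmeas (measurableSet_singleton z)
  have hIsProb : IsProbabilityMeasure (μ[|{ω | S ω = s ∧ C ω = c}]) :=
    cond_isProbabilityMeasure hμP
  calc (μ ({ω | q (C ω) (Z ω)} ∩ {ω | S ω = s ∧ C ω = c})).toReal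
      = (μ ({ω | S ω = s ∧ C ω = c} ∩ {ω | q c (Z ω)})).toReal := by
        rw [hXP, Set.inter_comm]
    _ = (μ {ω | S ω = s ∧ C ω = c} *
          μ[|{ω | S ω = s ∧ C ω = c}] {ω | q c (Z ω)}).toReal := by rw [hmul]
    _ = (μ {ω | S ω = s ∧ C ω = c}).toReal *
          (μ[|{ω | S ω = s ∧ C ω = c}] {ω | q c (Z ω)}).toReal := ENNReal.toReal_mul
    _ = _ := by
        rw [hcondsum, ENNReal.toReal_sum (fun z _ => measure_ne_top _ _)]
        congr 1
        exact Finset.sum_congr rfl (fun z _ => hBernc z)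

end Stmt16Aux

namespace Stmt16Aux
open MeasureTheory ProbabilityTheory Finset
open scoped ENNReal

lemma chat_abs_le_one (n : ℕ) (hn : 0 < n) (c z : Fin n → Bool) :
    |(if 0 < (∑ j, if z j then (1:ℕ) else 0) then
        (∑ j, if c j && z j then (1:ℝ) else 0) / (∑ j, if z j then (1:ℝ) else 0)
      else 0) - (∑ j, if c j then (1:ℝ) else 0) / (n : ℝ)| ≤ 1 := by
  have hn0 : (0:ℝ) < (n:ℝ) := by exact_mod_cast hn
  have hcb0 : (0:ℝ) ≤ (∑ j, if c j then (1:ℝ) else 0) / (n : ℝ) := by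
    apply div_nonneg _ (le_of_lt hn0)
    exact Finset.sum_nonneg fun j _ => by split <;> norm_num
  have hcb1 : (∑ j, if c j then (1:ℝ) else 0) / (n : ℝ) ≤ 1 := by
    rw [div_le_one hn0]
    calc (∑ j, if c j then (1:ℝ) else 0) ≤ ∑ _j : Fin n, (1:ℝ) :=
        Finset.sum_le_sum fun j _ => by split <;> norm_num
      _ = n := by simp
  have hch0 : (0:ℝ) ≤ (if 0 < (∑ j, if z j then (1:ℕ) else 0) then
      (∑ j, if c j && z j then (1:ℝ) else 0) / (∑ j, if z j then (1:ℝ) else 0) else 0) := by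
    split
    · apply div_nonneg
      · exact Finset.sum_nonneg fun j _ => by split <;> norm_num
      · exact Finset.sum_nonneg fun j _ => by split <;> norm_num
    · exact le_refl 0
  have hch1 : (if 0 < (∑ j, if z j then (1:ℕ) else 0) then
      (∑ j, if c j && z j then (1:ℝ) else 0) / (∑ j, if z j then (1:ℝ) else 0) else 0) ≤ 1 := by
    split
    · rename_i hposn
      have hNzpos : (0:ℝ) < ∑ j, if z j then (1:ℝ) else 0 := by
        have hcast : (∑ j, if z j then (1:ℝ) else 0)
            = ((∑ j, if z j then (1:ℕ) else 0 : ℕ) : ℝ) := by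
          push_cast
          exact Finset.sum_congr rfl fun j _ => by split <;> simp
        rw [hcast]
        exact_mod_cast hposn
      rw [div_le_one hNzpos]
      apply Finset.sum_le_sum
      intro j _
      by_cases h : z j <;> by_cases h' : c j <;> simp [h, h']
    · norm_num
  rw [abs_sub_le_iff]
  constructor <;> linarith

end Stmt16Aux


open Stmt16Aux in
/-- Hoeffding bound for the estimated complier share: conditionally on the offer rate
being at least `s̲/2`, `P(|Ĉ − C̄| ≥ t | Z̄ ≥ s̲/2) ≤ 2 exp(−n s̲² t²/2)`. -/
theorem stmt16 {Ω : Type*} [MeasurableSpace Ω] (μ : Measure Ω) [IsProbabilityMeasure μ]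
    (n : ℕ) (hn : 2 ≤ n) (𝒮 : Finset ℝ) (h𝒮 : ∀ s ∈ 𝒮, s ∈ Set.Icc (0 : ℝ) 1)
    (S : Ω → ℝ) (hSmeas : Measurable S) (hSval : ∀ ω, S ω ∈ 𝒮)
    (C Z : Ω → Fin n → Bool) (hCmeas : Measurable C) (hZmeas : Measurable Z)
    (hBern : ∀ s ∈ 𝒮, ∀ c : Fin n → Bool,
      0 < μ {ω | S ω = s ∧ C ω = c} →
      ∀ z : Fin n → Bool,
        (μ[|{ω | S ω = s ∧ C ω = c}] {ω | Z ω = z}).toReal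
          = ∏ j, (if z j then s else 1 - s))
    (slb : ℝ) (hslb0 : 0 < slb) (hslb1 : slb ≤ 1)
    (hSlb : ∀ᵐ ω ∂μ, slb ≤ S ω)
    (Zbar Cbar Chat : Ω → ℝ)
    (hZbar : Zbar = fun ω => (∑ j, if Z ω j then (1 : ℝ) else 0) / (n : ℝ))
    (hCbar : Cbar = fun ω => (∑ j, if C ω j then (1 : ℝ) else 0) / (n : ℝ))
    (hChat : Chat = fun ω =>
      if 0 < (∑ j, if Z ω j then (1 : ℕ) else 0) then
        (∑ j, if C ω j && Z ω j then (1 : ℝ) else 0)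
          / (∑ j, if Z ω j then (1 : ℝ) else 0)
      else 0)
    (hpos : 0 < μ {ω | slb / 2 ≤ Zbar ω}) :
    ∀ t : ℝ, 0 < t →
      μ[|{ω | slb / 2 ≤ Zbar ω}] {ω | t ≤ |Chat ω - Cbar ω|}
        ≤ ENNReal.ofReal (2 * Real.exp (-((n : ℝ) * slb ^ 2 * t ^ 2) / 2)) := by
  intro t ht
  classical
  have hn1 : 0 < n := by omega
  have hn0 : (0:ℝ) < (n:ℝ) := by exact_mod_cast hn1
  set A : Set Ω := {ω | slb / 2 ≤ Zbar ω} with hA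
  set B : Set Ω := {ω | t ≤ |Chat ω - Cbar ω|} with hB
  have hmeasCZ : ∀ p : (Fin n → Bool) → (Fin n → Bool) → Prop,
      MeasurableSet {ω | p (C ω) (Z ω)} := by
    intro p
    have h1 : {ω | p (C ω) (Z ω)}
        = (fun ω => (C ω, Z ω)) ⁻¹' {q : (Fin n → Bool) × (Fin n → Bool) | p q.1 q.2} := rfl
    rw [h1]
    exact (hCmeas.prodMk hZmeas) (Set.Finite.measurableSet (Set.toFinite _))
  have hAeq : A = {ω | (fun (_ : Fin n → Bool) (z : Fin n → Bool) =>
      slb / 2 ≤ (∑ j, if z j then (1:ℝ) else 0) / (n : ℝ)) (C ω) (Z ω)} := by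
    ext ω; simp only [hA, hZbar, Set.mem_setOf_eq]
  have hBeq : B = {ω | (fun (c : Fin n → Bool) (z : Fin n → Bool) =>
      t ≤ |(if 0 < (∑ j, if z j then (1:ℕ) else 0) then
        (∑ j, if c j && z j then (1:ℝ) else 0) / (∑ j, if z j then (1:ℝ) else 0)
        else 0) - (∑ j, if c j then (1:ℝ) else 0) / (n : ℝ)|) (C ω) (Z ω)} := by
    ext ω; simp only [hB, hChat, hCbar, Set.mem_setOf_eq]
  have hAmeas : MeasurableSet A := by
    rw [hAeq]
    exact hmeasCZ (fun (_ : Fin n → Bool) (z : Fin n → Bool) =>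
      slb / 2 ≤ (∑ j, if z j then (1:ℝ) else 0) / (n : ℝ))
  have hBmeas : MeasurableSet B := by
    rw [hBeq]
    exact hmeasCZ (fun (c : Fin n → Bool) (z : Fin n → Bool) =>
      t ≤ |(if 0 < (∑ j, if z j then (1:ℕ) else 0) then
        (∑ j, if c j && z j then (1:ℝ) else 0) / (∑ j, if z j then (1:ℝ) else 0)
        else 0) - (∑ j, if c j then (1:ℝ) else 0) / (n : ℝ)|)
  have hApos : μ A ≠ 0 := ne_of_gt hpos
  -- trivial case t > 1
  rcases le_or_gt t 1 with ht1 | ht1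
  swap
  · have hBempty : B = ∅ := by
      ext ω
      simp only [hB, Set.mem_setOf_eq, Set.mem_empty_iff_false, iff_false, not_le]
      calc |Chat ω - Cbar ω| ≤ 1 := by
            rw [hChat, hCbar]
            exact chat_abs_le_one n hn1 (C ω) (Z ω)
        _ < t := ht1
    rw [hBempty]
    simp
  -- trivial case bound ≥ 1
  rcases le_or_gt 1 (2 * Real.exp (-((n : ℝ) * slb ^ 2 * t ^ 2) / 2)) with hbig | hsmall
  · have : IsProbabilityMeasure (μ[|A]) := cond_isProbabilityMeasure hApos
    calc μ[|A] B ≤ 1 := prob_le_one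
      _ ≤ ENNReal.ofReal (2 * Real.exp (-((n : ℝ) * slb ^ 2 * t ^ 2) / 2)) := by
          rw [ENNReal.one_le_ofReal]; exact hbig
  -- main case
  have hargE : -((n : ℝ) * slb ^ 2 * t ^ 2) / 2 = -((n : ℝ) * slb ^ 2 * t ^ 2 / 2) := by ring
  rw [hargE] at hsmall ⊢
  set x : ℝ := Real.exp (-((n : ℝ) * slb ^ 2 * t ^ 2 / 2)) with hx
  have hxpos : 0 < x := Real.exp_pos _
  have hxhalf : x < 1/2 := by linarith
  -- the partition
  have hPmeas : ∀ (s : ℝ) (c : Fin n → Bool), MeasurableSet {ω | S ω = s ∧ C ω = c} := by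
    intro s c
    have h1 : {ω | S ω = s ∧ C ω = c} = S ⁻¹' {s} ∩ C ⁻¹' {c} := by
      ext ω; simp [Set.mem_preimage]
    rw [h1]
    exact (hSmeas (measurableSet_singleton _)).inter (hCmeas (measurableSet_singleton _))
  have hpart : ∀ E : Set Ω, MeasurableSet E →
      μ E = ∑ s ∈ 𝒮, ∑ c : Fin n → Bool, μ (E ∩ {ω | S ω = s ∧ C ω = c}) := by
    intro E hE
    have h1 : E = ⋃ s ∈ 𝒮, (E ∩ {ω | S ω = s}) := by
      ext ω
      simp only [Set.mem_iUnion, Set.mem_inter_iff, Set.mem_setOf_eq, exists_prop]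
      constructor
      · intro hω; exact ⟨S ω, hSval ω, hω, rfl⟩
      · rintro ⟨s, _, hω, _⟩; exact hω
    have h2 : μ E = ∑ s ∈ 𝒮, μ (E ∩ {ω | S ω = s}) := by
      conv_lhs => rw [h1]
      apply measure_biUnion_finset
      · intro s _ s' _ hss'
        apply Set.disjoint_left.mpr
        rintro ω ⟨_, h1'⟩ ⟨_, h2'⟩
        exact hss' (h1'.symm.trans h2')
      · exact fun s _ => hE.inter (hSmeas (measurableSet_singleton s))
    rw [h2]
    apply Finset.sum_congr rfl
    intro s _
    have h3 : E ∩ {ω | S ω = s} = ⋃ c ∈ (univ : Finset (Fin n → Bool)),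
        (E ∩ {ω | S ω = s ∧ C ω = c}) := by
      ext ω
      simp only [Set.mem_iUnion, Set.mem_inter_iff, Set.mem_setOf_eq, mem_univ,
        exists_prop, true_and]
      constructor
      · rintro ⟨hω, hs⟩; exact ⟨C ω, hω, hs, rfl⟩
      · rintro ⟨c, hω, hs, _⟩; exact ⟨hω, hs⟩
    rw [h3]
    apply measure_biUnion_finset
    · intro c _ c' _ hcc'
      apply Set.disjoint_left.mpr
      rintro ω ⟨_, _, h1'⟩ ⟨_, _, h2'⟩
      exact hcc' (h1'.symm.trans h2')
    · exact fun c _ => hE.inter (hPmeas s c)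
  have hpartR : ∀ E : Set Ω, MeasurableSet E →
      (μ E).toReal = ∑ s ∈ 𝒮, ∑ c : Fin n → Bool,
        (μ (E ∩ {ω | S ω = s ∧ C ω = c})).toReal := by
    intro E hE
    rw [hpart E hE, ENNReal.toReal_sum (fun s _ =>
      (ENNReal.sum_lt_top.mpr (fun c _ => measure_lt_top μ _)).ne)]
    exact Finset.sum_congr rfl fun s _ =>
      ENNReal.toReal_sum (fun c _ => measure_ne_top μ _)
  have htotal : ∑ s ∈ 𝒮, ∑ c : Fin n → Bool,
      (μ {ω | S ω = s ∧ C ω = c}).toReal = 1 := by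
    have h0 := hpartR Set.univ MeasurableSet.univ
    simp only [Set.univ_inter, measure_univ, ENNReal.toReal_one] at h0
    exact h0.symm
  -- slb ≤ s on cells of positive measure
  have hslbs : ∀ (s : ℝ) (c : Fin n → Bool), μ {ω | S ω = s ∧ C ω = c} ≠ 0 → slb ≤ s := by
    intro s c hμP
    by_contra hcon
    push_neg at hcon
    have hsub : {ω | S ω = s ∧ C ω = c} ⊆ {ω | ¬ slb ≤ S ω} := by
      rintro ω ⟨h1, _⟩
      simp only [Set.mem_setOf_eq, not_le]
      rw [h1]
      exact hcon
    exact hμP (measure_mono_null hsub (ae_iff.mp hSlb))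
  -- per-cell upper bound for A ∩ B
  have hABcell : ∀ s ∈ 𝒮, ∀ c : Fin n → Bool,
      (μ ((A ∩ B) ∩ {ω | S ω = s ∧ C ω = c})).toReal
      ≤ (μ {ω | S ω = s ∧ C ω = c}).toReal
        * (2 * Real.exp (-(2 * (n : ℝ) * slb ^ 2 * t ^ 2))) := by
    intro s hs c
    by_cases hμP : μ {ω | S ω = s ∧ C ω = c} = 0
    · have h0 : μ ((A ∩ B) ∩ {ω | S ω = s ∧ C ω = c}) = 0 :=
        measure_mono_null Set.inter_subset_right hμP
      rw [h0, hμP]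
      simp
    · have hsIcc := h𝒮 s hs
      have hABset : A ∩ B = {ω | (fun (c : Fin n → Bool) (z : Fin n → Bool) =>
          (slb / 2 ≤ (∑ j, if z j then (1:ℝ) else 0) / (n : ℝ)) ∧
          t ≤ |(if 0 < (∑ j, if z j then (1:ℕ) else 0) then
            (∑ j, if c j && z j then (1:ℝ) else 0) / (∑ j, if z j then (1:ℝ) else 0)
            else 0) - (∑ j, if c j then (1:ℝ) else 0) / (n : ℝ)|) (C ω) (Z ω)} := by
        rw [hAeq, hBeq]
        ext ω
        simp only [Set.mem_inter_iff, Set.mem_setOf_eq]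
      rw [hABset, cond_cell μ S C Z hZmeas s c (hPmeas s c) hμP
        (hBern s hs c (pos_iff_ne_zero.mpr hμP))
        (fun (c : Fin n → Bool) (z : Fin n → Bool) =>
          (slb / 2 ≤ (∑ j, if z j then (1:ℝ) else 0) / (n : ℝ)) ∧
          t ≤ |(if 0 < (∑ j, if z j then (1:ℕ) else 0) then
            (∑ j, if c j && z j then (1:ℝ) else 0) / (∑ j, if z j then (1:ℝ) else 0)
            else 0) - (∑ j, if c j then (1:ℝ) else 0) / (n : ℝ)|)]
      exact mul_le_mul_of_nonneg_left
        (tail_AB n hn1 s slb t (h𝒮 s hs).2 hslb0 (hslbs s c hμP) ht c)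
        ENNReal.toReal_nonneg
  -- per-cell lower bound for A
  have hAcell : ∀ s ∈ 𝒮, ∀ c : Fin n → Bool,
      (μ {ω | S ω = s ∧ C ω = c}).toReal * (1 - Real.exp (-((n : ℝ) * slb ^ 2 / 2)))
      ≤ (μ (A ∩ {ω | S ω = s ∧ C ω = c})).toReal := by
    intro s hs c
    by_cases hμP : μ {ω | S ω = s ∧ C ω = c} = 0
    · have h0 : μ (A ∩ {ω | S ω = s ∧ C ω = c}) = 0 :=
        measure_mono_null Set.inter_subset_right hμP
      rw [h0, hμP]
      simp
    · rw [hAeq, cond_cell μ S C Z hZmeas s c (hPmeas s c) hμP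
        (hBern s hs c (pos_iff_ne_zero.mpr hμP))
        (fun (_ : Fin n → Bool) (z : Fin n → Bool) =>
          slb / 2 ≤ (∑ j, if z j then (1:ℝ) else 0) / (n : ℝ))]
      exact mul_le_mul_of_nonneg_left
        (tail_A n hn1 s slb (h𝒮 s hs).2 hslb0 (hslbs s c hμP))
        ENNReal.toReal_nonneg
  -- totals
  have hABtotal : (μ (A ∩ B)).toReal ≤ 2 * Real.exp (-(2 * (n : ℝ) * slb ^ 2 * t ^ 2)) := by
    rw [hpartR (A ∩ B) (hAmeas.inter hBmeas)]
    calc ∑ s ∈ 𝒮, ∑ c : Fin n → Bool, (μ ((A ∩ B) ∩ {ω | S ω = s ∧ C ω = c})).toReal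
        ≤ ∑ s ∈ 𝒮, ∑ c : Fin n → Bool, (μ {ω | S ω = s ∧ C ω = c}).toReal
            * (2 * Real.exp (-(2 * (n : ℝ) * slb ^ 2 * t ^ 2))) :=
          Finset.sum_le_sum fun s hs => Finset.sum_le_sum fun c _ => hABcell s hs c
      _ = (∑ s ∈ 𝒮, ∑ c : Fin n → Bool, (μ {ω | S ω = s ∧ C ω = c}).toReal)
            * (2 * Real.exp (-(2 * (n : ℝ) * slb ^ 2 * t ^ 2))) := by
          rw [Finset.sum_mul]
          exact Finset.sum_congr rfl fun s _ => by rw [Finset.sum_mul]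
      _ = 2 * Real.exp (-(2 * (n : ℝ) * slb ^ 2 * t ^ 2)) := by rw [htotal, one_mul]
  have hAtotal : 1 - Real.exp (-((n : ℝ) * slb ^ 2 / 2)) ≤ (μ A).toReal := by
    rw [hpartR A hAmeas]
    calc 1 - Real.exp (-((n : ℝ) * slb ^ 2 / 2))
        = (∑ s ∈ 𝒮, ∑ c : Fin n → Bool, (μ {ω | S ω = s ∧ C ω = c}).toReal)
            * (1 - Real.exp (-((n : ℝ) * slb ^ 2 / 2))) := by rw [htotal, one_mul]
      _ = ∑ s ∈ 𝒮, ∑ c : Fin n → Bool, (μ {ω | S ω = s ∧ C ω = c}).toReal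
            * (1 - Real.exp (-((n : ℝ) * slb ^ 2 / 2))) := by
          rw [Finset.sum_mul]
          exact Finset.sum_congr rfl fun s _ => by rw [Finset.sum_mul]
      _ ≤ _ := Finset.sum_le_sum fun s hs => Finset.sum_le_sum fun c _ => hAcell s hs c
  -- final arithmetic
  have hAfin : μ A ≠ ⊤ := measure_ne_top μ A
  have hAtR : 0 < (μ A).toReal := ENNReal.toReal_pos hApos hAfin
  rw [cond_apply hAmeas μ B,
    ENNReal.le_ofReal_iff_toReal_le
      (ENNReal.mul_ne_top (ENNReal.inv_ne_top.mpr hApos) (measure_ne_top μ _))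
      (by positivity),
    ENNReal.toReal_mul, ENNReal.toReal_inv, ← div_eq_inv_mul,
    div_le_iff₀ hAtR]
  have hx4 : Real.exp (-(2 * (n : ℝ) * slb ^ 2 * t ^ 2)) = x ^ 4 := by
    rw [hx, ← Real.exp_nat_mul]
    congr 1
    push_cast
    ring
  have hexpL : Real.exp (-((n : ℝ) * slb ^ 2 / 2)) ≤ x := by
    rw [hx]
    apply Real.exp_le_exp.mpr
    have ht2 : t ^ 2 ≤ 1 := by nlinarith
    have hk : (0:ℝ) ≤ (n : ℝ) * slb ^ 2 := by positivity
    nlinarith [mul_le_mul_of_nonneg_left ht2 hk]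
  have hAx : 1 - x ≤ (μ A).toReal := by linarith
  calc (μ (A ∩ B)).toReal ≤ 2 * Real.exp (-(2 * (n : ℝ) * slb ^ 2 * t ^ 2)) := hABtotal
    _ = 2 * x ^ 4 := by rw [hx4]
    _ = (2 * x) * x ^ 3 := by ring
    _ ≤ (2 * x) * (1/8) := by
        have hx3 : x ^ 3 < 1/8 := by nlinarith [sq_nonneg x, mul_pos hxpos hxpos]
        exact mul_le_mul_of_nonneg_left hx3.le (by positivity)
    _ ≤ (2 * x) * (1 - x) := mul_le_mul_of_nonneg_left (by linarith) (by positivity)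
    _ = 2 * x * (1 - x) := by ring
    _ ≤ 2 * x * (μ A).toReal := by
        apply mul_le_mul_of_nonneg_left hAx (by positivity)
end

section
/- Let n ≥ 2 be an integer, let z, c ∈ {0,1}^n, and set d_j := c_j·z_j for each j. Let s̲ ∈ (0, 1] satisfy s̲·n > 2 and suppose z̄ := (1/n)·Σ_{j=1}^n z_j ≥ s̲/2 (so that Σ_j z_j ≥ 2 and, for every i, Σ_{j≠i} z_j > 0). Define Ĉ := (Σ_j d_j)/(Σ_j z_j), C̄ := (1/n)·Σ_j c_j, and for each i ∈ {1,…,n}: Ĉ_i := (Σ_{j≠i} d_j)/(Σ_{j≠i} z_j) and C̄_i := (1/(n−1))·Σ_{j≠i} c_j. Then max_{1≤i≤n} |Ĉ_i − C̄_i| ≤ (s̲n/(s̲n−2))²·|Ĉ − C̄| + [(s̲n/(s̲n−2))² + 1]·4/(s̲n − 2). -/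
open Finset

/-- Auxiliary: a uniform bound on the perturbation of a ratio when numerator is
perturbed by `d ∈ [0,1]` and denominator by `1`. -/
lemma ratio_pert (X Y d s : ℝ) (hs : 0 < s - 2) (hY : s / 2 ≤ Y) (hY1 : 1 < Y)
    (hX0 : 0 ≤ X) (hXY : X ≤ Y) (hd0 : 0 ≤ d) (hd1 : d ≤ 1) :
    |(X - d) / (Y - 1) - X / Y| ≤ 2 / (s - 2) := by
  have hY0 : (0:ℝ) < Y := by linarith
  have hY1' : (0:ℝ) < Y - 1 := by linarith
  have hid : (X - d) / (Y - 1) - X / Y = (X - Y * d) / ((Y - 1) * Y) := by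
    field_simp
    ring
  rw [hid, abs_div, abs_of_pos (mul_pos hY1' hY0), div_le_div_iff₀ (mul_pos hY1' hY0) hs]
  have habs : |X - Y * d| ≤ Y := by
    rw [abs_le]
    constructor <;> nlinarith
  have h2 : s - 2 ≤ 2 * (Y - 1) := by linarith
  nlinarith [mul_le_mul habs h2 hs.le hY0.le]

/-- Deterministic bound: the leave-one-out estimated complier shares are uniformly close to
the leave-one-out complier shares in terms of the full-group quantities. -/
theorem stmt17 (n : ℕ) (hn : 2 ≤ n) (z c : Fin n → Bool)
    (slb : ℝ) (hslb0 : 0 < slb) (hslb1 : slb ≤ 1) (hsn : 2 < slb * n)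
    (hzbar : slb / 2 ≤ (∑ j, if z j then (1 : ℝ) else 0) / (n : ℝ)) :
    ∀ i : Fin n,
      |(∑ j ∈ Finset.univ.erase i, if c j && z j then (1 : ℝ) else 0)
            / (∑ j ∈ Finset.univ.erase i, if z j then (1 : ℝ) else 0)
          - (∑ j ∈ Finset.univ.erase i, if c j then (1 : ℝ) else 0) / ((n : ℝ) - 1)|
        ≤ (slb * n / (slb * n - 2)) ^ 2 *
            |(∑ j, if c j && z j then (1 : ℝ) else 0) / (∑ j, if z j then (1 : ℝ) else 0)
              - (∑ j, if c j then (1 : ℝ) else 0) / (n : ℝ)|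
          + ((slb * n / (slb * n - 2)) ^ 2 + 1) * (4 / (slb * n - 2)) := by
  intro i
  have hn2 : (2:ℝ) ≤ (n:ℝ) := by exact_mod_cast hn
  have hn0 : (0:ℝ) < n := by linarith
  set Z : ℝ := ∑ j, if z j then (1:ℝ) else 0 with hZdef
  set D : ℝ := ∑ j, if c j && z j then (1:ℝ) else 0 with hDdef
  set C : ℝ := ∑ j, if c j then (1:ℝ) else 0 with hCdef
  have hs2 : (0:ℝ) < slb * n - 2 := by linarith
  have hZlb : slb * n / 2 ≤ Z := by
    rw [div_le_div_iff₀ (by norm_num) hn0] at hzbar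
    linarith
  have hZ1 : 1 < Z := by nlinarith
  have hZ0 : (0:ℝ) < Z := by linarith
  have hDnn : 0 ≤ D := Finset.sum_nonneg fun j _ => by positivity
  have hDZ : D ≤ Z :=
    Finset.sum_le_sum fun j _ => by cases c j <;> cases z j <;> simp
  have hCnn : 0 ≤ C := Finset.sum_nonneg fun j _ => by positivity
  have hCn : C ≤ n := by
    calc C ≤ ∑ _j : Fin n, (1:ℝ) := Finset.sum_le_sum fun j _ => by split <;> norm_num
    _ = n := by simp
  have hns : slb * n ≤ n := by nlinarith
  have hEz : ∑ j ∈ univ.erase i, (if z j then (1:ℝ) else 0) = Z - (if z i then (1:ℝ) else 0) :=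
    Finset.sum_erase_eq_sub (mem_univ i)
  have hEd : ∑ j ∈ univ.erase i, (if c j && z j then (1:ℝ) else 0)
      = D - (if c i && z i then (1:ℝ) else 0) :=
    Finset.sum_erase_eq_sub (mem_univ i)
  have hEc : ∑ j ∈ univ.erase i, (if c j then (1:ℝ) else 0) = C - (if c i then (1:ℝ) else 0) :=
    Finset.sum_erase_eq_sub (mem_univ i)
  rw [hEz, hEd, hEc]
  set K : ℝ := slb * n / (slb * n - 2) with hKdef
  have hK1 : 1 ≤ K := by rw [hKdef, le_div_iff₀ hs2]; linarith
  have hK2 : 1 ≤ K ^ 2 := by nlinarith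
  -- the two perturbation bounds
  have hA : |(D - (if c i && z i then (1:ℝ) else 0)) / (Z - (if z i then (1:ℝ) else 0)) - D / Z|
      ≤ 2 / (slb * n - 2) := by
    cases hzi : z i with
    | false =>
        simp only [hzi, Bool.and_false, Bool.false_eq_true, if_false, sub_zero, sub_self, abs_zero]
        exact div_nonneg (by norm_num : (0:ℝ) ≤ 2) hs2.le
    | true =>
        simp only [hzi, if_true]
        exact ratio_pert D Z _ _ hs2 hZlb hZ1 hDnn hDZ (by split <;> norm_num)
          (by split <;> norm_num)
  have hB : |(C - (if c i then (1:ℝ) else 0)) / ((n:ℝ) - 1) - C / n| ≤ 2 / (slb * n - 2) := by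
    exact ratio_pert C n _ _ hs2 (by linarith) (by linarith) hCnn hCn
      (by split <;> norm_num) (by split <;> norm_num)
  -- triangle inequality
  have htri : |(D - (if c i && z i then (1:ℝ) else 0)) / (Z - (if z i then (1:ℝ) else 0))
        - (C - (if c i then (1:ℝ) else 0)) / ((n:ℝ) - 1)|
      ≤ |(D - (if c i && z i then (1:ℝ) else 0)) / (Z - (if z i then (1:ℝ) else 0)) - D / Z|
        + |D / Z - C / n|
        + |(C - (if c i then (1:ℝ) else 0)) / ((n:ℝ) - 1) - C / n| := by
    have h1 := abs_sub_le
      ((D - (if c i && z i then (1:ℝ) else 0)) / (Z - (if z i then (1:ℝ) else 0)))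
      (D / Z) ((C - (if c i then (1:ℝ) else 0)) / ((n:ℝ) - 1))
    have h2 := abs_sub_le (D / Z) (C / n)
      ((C - (if c i then (1:ℝ) else 0)) / ((n:ℝ) - 1))
    have h3 : |C / n - (C - (if c i then (1:ℝ) else 0)) / ((n:ℝ) - 1)|
        = |(C - (if c i then (1:ℝ) else 0)) / ((n:ℝ) - 1) - C / n| := abs_sub_comm _ _
    linarith
  have h4 : (0:ℝ) ≤ 4 / (slb * n - 2) := by positivity
  have h5 : (0:ℝ) ≤ |D / Z - C / n| := abs_nonneg _
  have e1 : |D / Z - C / n| ≤ K ^ 2 * |D / Z - C / n| := le_mul_of_one_le_left h5 hK2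
  have e2 : 4 / (slb * n - 2) ≤ (K ^ 2 + 1) * (4 / (slb * n - 2)) :=
    le_mul_of_one_le_left h4 (by linarith)
  have h6 : 2 / (slb * (n:ℝ) - 2) + 2 / (slb * (n:ℝ) - 2) = 4 / (slb * (n:ℝ) - 2) := by ring
  linarith
end

section
/- Suppose every group saturation satisfies S_g ≥ s̲ almost surely, where s̲ ∈ (0, 1] and s̲·n̲ > 2 with n̲ ≤ n_g for all g. Define h*(x, t) := ((x−2)/x)⁴·t² − 16·t/(x−2). Then for every t with 0 < t < 1, P(max_{1≤g≤G} max_{1≤i≤n_g} |Ĉ_{ig} − C̄_{ig}| > t) ≤ 3·G·exp(−n̲·s̲²·h*(s̲n̲, t)/2). -/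
open MeasureTheory ProbabilityTheory Finset

section stmt19aux
open Real

lemma hoeff_pt (s : ℝ) (h0 : 0 ≤ s) (h1 : s ≤ 1) (y : ℝ) :
    1 - s + s * Real.exp y ≤ Real.exp (s * y + y ^ 2 / 8) := by
  set D : ℝ → ℝ := fun u => 1 - s + s * Real.exp u with hDdef
  have hD : ∀ u, 0 < D u := by
    intro u
    have := Real.exp_pos u
    rcases eq_or_lt_of_le h0 with h | h
    · simp [hDdef, ← h]
    · have : 0 < s * Real.exp u := by positivity
      simp only [hDdef]; nlinarith
  have hDd : ∀ u, HasDerivAt D (s * Real.exp u) u := by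
    intro u
    exact ((hasDerivAt_const u (1 - s)).add ((Real.hasDerivAt_exp u).const_mul s)).congr_deriv (by ring)
  set f : ℝ → ℝ := fun u => s * u + u ^ 2 / 8 - Real.log (D u) with hfdef
  set f1 : ℝ → ℝ := fun u => s + u / 4 - s * Real.exp u / D u with hf1def
  have hfd : ∀ u, HasDerivAt f (f1 u) u := by
    intro u
    have h1' : HasDerivAt (fun u : ℝ => s * u + u ^ 2 / 8) (s + 2 * u / 8) u := by
      exact (((hasDerivAt_id u).const_mul s).add ((hasDerivAt_pow 2 u).div_const 8)).congr_deriv (by norm_num)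
    have h2' : HasDerivAt (fun u => Real.log (D u)) (s * Real.exp u / D u) u :=
      (hDd u).log (hD u).ne'
    have := h1'.sub h2'
    refine this.congr_deriv ?_
    simp only [hf1def]
    ring
  have hf1d : ∀ u, HasDerivAt f1 ((s * Real.exp u / D u - 1 / 2) ^ 2) u := by
    intro u
    have hq : HasDerivAt (fun u => s * Real.exp u / D u)
        ((s * Real.exp u * D u - s * Real.exp u * (s * Real.exp u)) / (D u) ^ 2) u :=
      ((Real.hasDerivAt_exp u).const_mul s).div (hDd u) (hD u).ne'
    have h1' : HasDerivAt (fun u : ℝ => s + u / 4) (1 / 4) u := by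
      exact ((hasDerivAt_const u s).add ((hasDerivAt_id u).div_const 4)).congr_deriv (by norm_num)
    have := h1'.sub hq
    refine this.congr_deriv ?_
    have hDu := (hD u).ne'
    field_simp
    ring
  have hf1nonneg : ∀ u, 0 ≤ ((s * Real.exp u / D u - 1 / 2) ^ 2) := by
    intro u; positivity
  have hf1mono : Monotone f1 :=
    monotone_of_deriv_nonneg (fun u => (hf1d u).differentiableAt)
      (fun u => by rw [(hf1d u).deriv]; positivity)
  have hf10 : f1 0 = 0 := by simp [hf1def, hDdef]
  have hf0 : f 0 = 0 := by simp [hfdef, hDdef]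
  have hfnonneg : ∀ u, 0 ≤ f u := by
    intro u
    rcases le_total 0 u with h | h
    · have hmono : MonotoneOn f (Set.Ici 0) := by
        apply monotoneOn_of_deriv_nonneg (convex_Ici 0)
          ((Differentiable.continuous (fun x => (hfd x).differentiableAt)).continuousOn)
          (fun x hx => (hfd x).differentiableAt.differentiableWithinAt)
        intro x hx
        rw [(hfd x).deriv]
        have : (0:ℝ) ≤ x := by
          simpa using (interior_subset (s := Set.Ici (0:ℝ)) hx)
        calc (0:ℝ) = f1 0 := hf10.symm
        _ ≤ f1 x := hf1mono this
      have := hmono (Set.self_mem_Ici) (Set.mem_Ici.2 h) h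
      rwa [hf0] at this
    · have hmono : AntitoneOn f (Set.Iic 0) := by
        apply antitoneOn_of_deriv_nonpos (convex_Iic 0)
          ((Differentiable.continuous (fun x => (hfd x).differentiableAt)).continuousOn)
          (fun x hx => (hfd x).differentiableAt.differentiableWithinAt)
        intro x hx
        rw [(hfd x).deriv]
        have : x ≤ (0:ℝ) := by
          simpa using (interior_subset (s := Set.Iic (0:ℝ)) hx)
        calc f1 x ≤ f1 0 := hf1mono this
        _ = 0 := hf10
      have := hmono (Set.mem_Iic.2 h) (Set.self_mem_Iic) h
      rwa [hf0] at this
  have := hfnonneg y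
  have hlog : Real.log (D y) ≤ s * y + y ^ 2 / 8 := by
    simp only [hfdef] at this; linarith
  have := (Real.log_le_iff_le_exp (hD y)).1 hlog
  simpa [hDdef] using this

lemma finHoeffding (n : ℕ) (s : ℝ) (h0 : 0 ≤ s) (h1 : s ≤ 1) (d : Fin n → ℝ)
    (u : ℝ) (hu : 0 ≤ u) (hd : 0 < ∑ j, d j ^ 2) :
    ∑ z ∈ Finset.univ.filter (fun z : Fin n → Bool =>
        u ≤ ∑ j, d j * (if z j then (1:ℝ) else 0) - s * ∑ j, d j),
      ∏ j, (if z j then s else 1 - s)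
      ≤ Real.exp (-(2 * u ^ 2 / ∑ j, d j ^ 2)) := by
  set V := ∑ j, d j ^ 2 with hV
  set lam := 4 * u / V with hlam
  have hlam0 : 0 ≤ lam := by positivity
  have hw : ∀ (z : Fin n → Bool) (j : Fin n), (0:ℝ) ≤ (if z j then s else 1 - s) := by
    intro z j; split <;> linarith
  -- step 2: bound by full sum with exp weights
  have step1 : ∑ z ∈ Finset.univ.filter (fun z : Fin n → Bool =>
        u ≤ ∑ j, d j * (if z j then (1:ℝ) else 0) - s * ∑ j, d j),
      ∏ j, (if z j then s else 1 - s)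
      ≤ ∑ z : Fin n → Bool,
        Real.exp (lam * ((∑ j, d j * (if z j then (1:ℝ) else 0)) - s * ∑ j, d j - u)) *
          ∏ j, (if z j then s else 1 - s) := by
    rw [← Finset.sum_filter_add_sum_filter_not Finset.univ (fun z : Fin n → Bool =>
        u ≤ ∑ j, d j * (if z j then (1:ℝ) else 0) - s * ∑ j, d j)]
    have hA : ∀ z ∈ Finset.univ.filter (fun z : Fin n → Bool =>
        u ≤ ∑ j, d j * (if z j then (1:ℝ) else 0) - s * ∑ j, d j),
        ∏ j, (if z j then s else 1 - s) ≤
        Real.exp (lam * ((∑ j, d j * (if z j then (1:ℝ) else 0)) - s * ∑ j, d j - u)) *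
          ∏ j, (if z j then s else 1 - s) := by
      intro z hz
      rw [Finset.mem_filter] at hz
      have h1' : (1:ℝ) ≤ Real.exp (lam * ((∑ j, d j * (if z j then (1:ℝ) else 0)) - s * ∑ j, d j - u)) := by
        rw [Real.one_le_exp_iff]
        have := hz.2
        exact mul_nonneg hlam0 (by linarith)
      nlinarith [Finset.prod_nonneg (s := Finset.univ) (fun j (_ : j ∈ Finset.univ) => hw z j), h1']
    have hB : ∀ z ∈ Finset.univ.filter (fun z : Fin n → Bool =>
        ¬ (u ≤ ∑ j, d j * (if z j then (1:ℝ) else 0) - s * ∑ j, d j)), (0:ℝ) ≤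
        Real.exp (lam * ((∑ j, d j * (if z j then (1:ℝ) else 0)) - s * ∑ j, d j - u)) *
          ∏ j, (if z j then s else 1 - s) := by
      intro z _
      exact mul_nonneg (Real.exp_pos _).le (Finset.prod_nonneg (fun j _ => hw z j))
    calc _ ≤ ∑ z ∈ Finset.univ.filter (fun z : Fin n → Bool =>
        u ≤ ∑ j, d j * (if z j then (1:ℝ) else 0) - s * ∑ j, d j),
        Real.exp (lam * ((∑ j, d j * (if z j then (1:ℝ) else 0)) - s * ∑ j, d j - u)) *
          ∏ j, (if z j then s else 1 - s) := Finset.sum_le_sum hA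
    _ ≤ _ := le_add_of_nonneg_right (Finset.sum_nonneg hB)
  have hVne : V ≠ 0 := ne_of_gt hd
  set f : Fin n → Bool → ℝ := fun j b =>
    (if b then s else 1 - s) * Real.exp (lam * (d j * (if b then (1:ℝ) else 0) - s * d j)) with hf
  have step2 : ∀ z : Fin n → Bool,
      Real.exp (lam * ((∑ j, d j * (if z j then (1:ℝ) else 0)) - s * ∑ j, d j - u)) *
          ∏ j, (if z j then s else 1 - s)
        = Real.exp (-(lam * u)) * ∏ j, f j (z j) := by
    intro z
    simp only [hf]
    rw [Finset.prod_mul_distrib, ← Real.exp_sum]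
    have hsum : (∑ j, lam * (d j * (if z j then (1:ℝ) else 0) - s * d j))
        = lam * ((∑ j, d j * (if z j then (1:ℝ) else 0)) - s * ∑ j, d j) := by
      simp only [mul_sub, Finset.sum_sub_distrib, ← Finset.mul_sum]
    rw [hsum, show lam * ((∑ j, d j * (if z j then (1:ℝ) else 0)) - s * ∑ j, d j - u)
        = lam * ((∑ j, d j * (if z j then (1:ℝ) else 0)) - s * ∑ j, d j) + (-(lam * u)) by ring,
      Real.exp_add]
    ring
  have step3 : (∑ z : Fin n → Bool, ∏ j, f j (z j)) = ∏ j, (f j true + f j false) := by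
    have h := Finset.prod_univ_sum (fun _ : Fin n => (Finset.univ : Finset Bool)) f
    rw [Fintype.piFinset_univ] at h
    rw [← h]
    exact Finset.prod_congr rfl (fun j _ => by simp)
  have step4 : ∀ j, f j true + f j false ≤ Real.exp (lam ^ 2 * d j ^ 2 / 8) := by
    intro j
    have key := hoeff_pt s h0 h1 (lam * d j)
    have e1 : f j true + f j false
        = Real.exp (-(lam * s * d j)) * (1 - s + s * Real.exp (lam * d j)) := by
      simp only [hf, Bool.false_eq_true, if_true, if_false, mul_one, mul_zero, zero_sub]
      rw [show lam * (d j - s * d j) = lam * d j + -(lam * s * d j) by ring,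
        show lam * -(s * d j) = -(lam * s * d j) by ring, Real.exp_add]
      ring
    rw [e1]
    calc Real.exp (-(lam * s * d j)) * (1 - s + s * Real.exp (lam * d j))
        ≤ Real.exp (-(lam * s * d j)) * Real.exp (s * (lam * d j) + (lam * d j) ^ 2 / 8) :=
          mul_le_mul_of_nonneg_left key (Real.exp_pos _).le
      _ = Real.exp (lam ^ 2 * d j ^ 2 / 8) := by
          rw [← Real.exp_add]; congr 1; ring
  have hfnn : ∀ j, (0:ℝ) ≤ f j true + f j false := by
    intro j
    simp only [hf, Bool.false_eq_true, if_true, if_false, mul_one, mul_zero, zero_sub]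
    have h1' := (Real.exp_pos (lam * (d j - s * d j))).le
    have h2' := (Real.exp_pos (lam * -(s * d j))).le
    have h3 : (0:ℝ) ≤ 1 - s := by linarith
    exact add_nonneg (mul_nonneg h0 h1') (mul_nonneg h3 h2')
  calc ∑ z ∈ Finset.univ.filter (fun z : Fin n → Bool =>
        u ≤ ∑ j, d j * (if z j then (1:ℝ) else 0) - s * ∑ j, d j),
      ∏ j, (if z j then s else 1 - s)
      ≤ ∑ z : Fin n → Bool,
        Real.exp (lam * ((∑ j, d j * (if z j then (1:ℝ) else 0)) - s * ∑ j, d j - u)) *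
          ∏ j, (if z j then s else 1 - s) := step1
    _ = ∑ z : Fin n → Bool, Real.exp (-(lam * u)) * ∏ j, f j (z j) :=
        Finset.sum_congr rfl (fun z _ => step2 z)
    _ = Real.exp (-(lam * u)) * ∑ z : Fin n → Bool, ∏ j, f j (z j) := by
        rw [Finset.mul_sum]
    _ = Real.exp (-(lam * u)) * ∏ j, (f j true + f j false) := by rw [step3]
    _ ≤ Real.exp (-(lam * u)) * ∏ j, Real.exp (lam ^ 2 * d j ^ 2 / 8) := by
        apply mul_le_mul_of_nonneg_left _ (Real.exp_pos _).le
        exact Finset.prod_le_prod (fun j _ => hfnn j) (fun j _ => step4 j)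
    _ = Real.exp (-(lam * u) + lam ^ 2 * V / 8) := by
        rw [← Real.exp_sum, ← Real.exp_add]
        congr 1
        rw [hV, Finset.mul_sum]
        rw [← Finset.sum_div]
    _ = Real.exp (-(2 * u ^ 2 / V)) := by
        congr 1
        rw [hlam]
        field_simp
        ring

noncomputable def chatF (n : ℕ) (c z : Fin n → Bool) (i : Fin n) : ℝ :=
  if 0 < (∑ j ∈ Finset.univ.erase i, if z j then (1 : ℕ) else 0) then
    (∑ j ∈ Finset.univ.erase i, if c j && z j then (1 : ℝ) else 0)
      / (∑ j ∈ Finset.univ.erase i, if z j then (1 : ℝ) else 0)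
  else 0

noncomputable def cbarF (n : ℕ) (c : Fin n → Bool) (i : Fin n) : ℝ :=
  (∑ j ∈ Finset.univ.erase i, if c j then (1 : ℝ) else 0) / ((n : ℝ) - 1)

set_option maxHeartbeats 1000000 in
lemma detBound (n : ℕ) (hn : 2 ≤ n) (c z : Fin n → Bool) (i : Fin n) (t : ℝ)
    (hM8 : (36/5:ℝ) < ∑ j, (if z j then (1:ℝ) else 0))
    (hW : |∑ j, ((if c j then (1:ℝ) else 0) - (∑ k, if c k then (1:ℝ) else 0)/(n:ℝ))
            * (if z j then (1:ℝ) else 0)|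
        ≤ (t - 1/(∑ j, (if z j then (1:ℝ) else 0)) - 1/((n:ℝ)-1))
            * (∑ j, (if z j then (1:ℝ) else 0))) :
    |chatF n c z i - cbarF n c i| ≤ t := by
  classical
  set M : ℝ := ∑ j, (if z j then (1:ℝ) else 0) with hMdef
  set K : ℝ := ∑ j, (if c j && z j then (1:ℝ) else 0) with hKdef
  set Nc : ℝ := ∑ j, (if c j then (1:ℝ) else 0) with hNcdef
  have hMpos : (0:ℝ) < M := by linarith
  have hn1 : (1:ℝ) ≤ (n:ℝ) - 1 := by
    have : (2:ℝ) ≤ (n:ℝ) := by exact_mod_cast hn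
    linarith
  -- erase sums
  have hMi : (∑ j ∈ Finset.univ.erase i, if z j then (1:ℝ) else 0)
      = M - (if z i then (1:ℝ) else 0) := by
    rw [hMdef, ← Finset.sum_erase_add Finset.univ _ (Finset.mem_univ i)]; ring
  have hKi : (∑ j ∈ Finset.univ.erase i, if c j && z j then (1:ℝ) else 0)
      = K - (if c i && z i then (1:ℝ) else 0) := by
    rw [hKdef, ← Finset.sum_erase_add Finset.univ _ (Finset.mem_univ i)]; ring
  have hNci : (∑ j ∈ Finset.univ.erase i, if c j then (1:ℝ) else 0)
      = Nc - (if c i then (1:ℝ) else 0) := by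
    rw [hNcdef, ← Finset.sum_erase_add Finset.univ _ (Finset.mem_univ i)]; ring
  -- natural vs real count
  have hcast : ((∑ j ∈ Finset.univ.erase i, if z j then (1:ℕ) else 0 : ℕ) : ℝ)
      = ∑ j ∈ Finset.univ.erase i, if z j then (1:ℝ) else 0 := by
    push_cast
    exact Finset.sum_congr rfl (fun j _ => by split <;> simp)
  have hzi01 : (if z i then (1:ℝ) else 0) = 0 ∨ (if z i then (1:ℝ) else 0) = 1 := by
    split <;> simp
  have hMiR7 : (31/5:ℝ) ≤ ∑ j ∈ Finset.univ.erase i, if z j then (1:ℝ) else 0 := by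
    rw [hMi]; rcases hzi01 with h | h <;> rw [h] <;> linarith
  have hbranch : 0 < (∑ j ∈ Finset.univ.erase i, if z j then (1:ℕ) else 0) := by
    rcases Nat.eq_zero_or_pos (∑ j ∈ Finset.univ.erase i, if z j then (1:ℕ) else 0) with h | h
    · rw [h] at hcast
      simp only [Nat.cast_zero] at hcast
      rw [← hcast] at hMiR7
      norm_num at hMiR7
    · exact h
  have hchat : chatF n c z i
      = (K - (if c i && z i then (1:ℝ) else 0)) / (M - (if z i then (1:ℝ) else 0)) := by
    rw [chatF, if_pos hbranch, hKi, hMi]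
  have hcbar : cbarF n c i = (Nc - (if c i then (1:ℝ) else 0)) / ((n:ℝ) - 1) := by
    rw [cbarF, hNci]
  set W := ∑ j, ((if c j then (1:ℝ) else 0) - Nc/(n:ℝ)) * (if z j then (1:ℝ) else 0) with hWdef
  have hnR : (2:ℝ) ≤ (n:ℝ) := by exact_mod_cast hn
  have hnne : (n:ℝ) ≠ 0 := by linarith
  have hn1ne : (n:ℝ) - 1 ≠ 0 := by linarith
  have hKW : K = W + (Nc/(n:ℝ)) * M := by
    rw [hWdef, hKdef, hMdef, Finset.mul_sum, ← Finset.sum_add_distrib]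
    apply Finset.sum_congr rfl
    intro j _
    by_cases hc : c j <;> by_cases hz : z j <;> simp [hc, hz]
  have hKiles : K - (if c i && z i then (1:ℝ) else 0) ≤ M - (if z i then (1:ℝ) else 0) := by
    rw [← hKi, ← hMi]
    apply Finset.sum_le_sum
    intro j _
    by_cases hc : c j <;> by_cases hz : z j <;> simp [hc, hz]
  have hKinn : 0 ≤ K - (if c i && z i then (1:ℝ) else 0) := by
    rw [← hKi]
    apply Finset.sum_nonneg
    intro j _
    split <;> norm_num
  have hNc0 : 0 ≤ Nc := by
    rw [hNcdef]
    apply Finset.sum_nonneg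
    intro j _
    split <;> norm_num
  have hNcn : Nc ≤ (n:ℝ) := by
    rw [hNcdef]
    calc ∑ j, (if c j then (1:ℝ) else 0) ≤ ∑ _j : Fin n, (1:ℝ) := by
          apply Finset.sum_le_sum
          intro j _
          split <;> norm_num
    _ = (n:ℝ) := by simp
  clear_value M K Nc W
  -- claim A
  have claimA : |(K - (if c i && z i then (1:ℝ) else 0)) / (M - (if z i then (1:ℝ) else 0))
      - K/M| ≤ 1/M := by
    by_cases hz : z i
    · have hzi : (if z i then (1:ℝ) else 0) = 1 := if_pos hz
      have hczi : (if c i && z i then (1:ℝ) else 0) = (if c i then (1:ℝ) else 0) := by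
        simp [hz]
      set e := (if c i then (1:ℝ) else 0) with hedef
      have he01 : e = 0 ∨ e = 1 := by rw [hedef]; split <;> simp
      clear_value e
      rw [hczi] at hKiles hKinn
      rw [hzi] at hKiles
      rw [hzi, hczi]
      have hM7 : (26/5:ℝ) ≤ M - 1 := by
        have h7 := hMiR7
        rw [hMi, hzi] at h7
        linarith
      have hM1ne : M - 1 ≠ 0 := by linarith
      have hMne : M ≠ 0 := by linarith
      have heq : (K - e)/(M - 1) - K/M = (K - e*M)/((M-1)*M) := by
        field_simp
        ring
      rw [heq, abs_div, abs_of_pos (by nlinarith : (0:ℝ) < (M-1)*M)]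
      rw [div_le_div_iff₀ (by nlinarith) hMpos]
      have habs : |K - e*M| ≤ M - 1 := by
        rcases he01 with h | h <;> rw [h] <;> rw [abs_le] <;> constructor <;> nlinarith
      nlinarith
    · have hzi : (if z i then (1:ℝ) else 0) = 0 := if_neg hz
      have hczi : (if c i && z i then (1:ℝ) else 0) = 0 := by simp [hz]
      rw [hzi, hczi]
      simp only [sub_zero, sub_self, abs_zero]
      positivity
  -- claim B
  have claimB : |K/M - Nc/(n:ℝ)| ≤ t - 1/M - 1/((n:ℝ)-1) := by
    have hMne : M ≠ 0 := by linarith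
    have heq : K/M - Nc/(n:ℝ) = W/M := by
      rw [hKW]
      field_simp
      ring
    rw [heq, abs_div, abs_of_pos hMpos, div_le_iff₀ hMpos]
    exact hW
  -- claim C
  have claimC : |Nc/(n:ℝ) - (Nc - (if c i then (1:ℝ) else 0))/((n:ℝ)-1)| ≤ 1/((n:ℝ)-1) := by
    set e := (if c i then (1:ℝ) else 0) with hedef
    have he01 : e = 0 ∨ e = 1 := by rw [hedef]; split <;> simp
    clear_value e
    have heq : Nc/(n:ℝ) - (Nc - e)/((n:ℝ)-1) = ((n:ℝ)*e - Nc)/((n:ℝ)*((n:ℝ)-1)) := by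
      field_simp
      ring
    rw [heq, abs_div, abs_of_pos (by nlinarith : (0:ℝ) < (n:ℝ)*((n:ℝ)-1))]
    rw [div_le_div_iff₀ (by nlinarith) (by linarith : (0:ℝ) < (n:ℝ)-1)]
    have habs : |(n:ℝ)*e - Nc| ≤ (n:ℝ) := by
      rcases he01 with h | h <;> rw [h] <;> rw [abs_le] <;> constructor <;> nlinarith
    nlinarith
  -- combine
  rw [hchat, hcbar]
  have htri := abs_add_three
    ((K - (if c i && z i then (1:ℝ) else 0)) / (M - (if z i then (1:ℝ) else 0)) - K/M)
    (K/M - Nc/(n:ℝ))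
    (Nc/(n:ℝ) - (Nc - (if c i then (1:ℝ) else 0))/((n:ℝ)-1))
  have hsum : ((K - (if c i && z i then (1:ℝ) else 0)) / (M - (if z i then (1:ℝ) else 0)) - K/M)
      + (K/M - Nc/(n:ℝ))
      + (Nc/(n:ℝ) - (Nc - (if c i then (1:ℝ) else 0))/((n:ℝ)-1))
      = (K - (if c i && z i then (1:ℝ) else 0)) / (M - (if z i then (1:ℝ) else 0))
        - (Nc - (if c i then (1:ℝ) else 0))/((n:ℝ)-1) := by ring
  rw [hsum] at htri
  have h1M : 1/M + (t - 1/M - 1/((n:ℝ)-1)) + 1/((n:ℝ)-1) = t := by ring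
  linarith



-- sum over a union of three finsets is at most the sum of sums, for nonneg f
lemma sum_union3_le {α : Type*} [DecidableEq α]
    (A B C : Finset α) (f : α → ℝ) (hf : ∀ a, 0 ≤ f a) :
    ∑ a ∈ A ∪ B ∪ C, f a ≤ (∑ a ∈ A, f a) + (∑ a ∈ B, f a) + (∑ a ∈ C, f a) := by
  have h2 : ∀ (P Q : Finset α), ∑ a ∈ P ∪ Q, f a ≤ (∑ a ∈ P, f a) + (∑ a ∈ Q, f a) := by
    intro P Q
    have := Finset.sum_union_inter (s₁ := P) (s₂ := Q) (f := f)
    have hnn : 0 ≤ ∑ a ∈ P ∩ Q, f a := Finset.sum_nonneg (fun a _ => hf a)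
    linarith
  calc ∑ a ∈ A ∪ B ∪ C, f a ≤ (∑ a ∈ A ∪ B, f a) + (∑ a ∈ C, f a) := h2 _ _
    _ ≤ (∑ a ∈ A, f a) + (∑ a ∈ B, f a) + (∑ a ∈ C, f a) := by
        have := h2 A B; linarith

set_option maxHeartbeats 1000000 in
lemma groupCore (n nlb : ℕ) (hnlb : 2 ≤ nlb) (hn : nlb ≤ n)
    (slb s t : ℝ) (hslb0 : 0 < slb) (hslb1 : slb ≤ 1) (hsn : 2 < slb * nlb)
    (ht0 : 0 < t) (ht1 : t < 1)
    (hpos : 0 < ((slb * nlb - 2) / (slb * nlb)) ^ 4 * t ^ 2 - 16 * t / (slb * nlb - 2))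
    (hs1 : slb ≤ s) (hs2 : s ≤ 1) (c : Fin n → Bool) :
    ∑ z ∈ Finset.univ.filter (fun z : Fin n → Bool =>
        ∃ i, t < |chatF n c z i - cbarF n c i|),
      ∏ j, (if z j then s else 1 - s)
    ≤ 3 * Real.exp (-((nlb : ℝ) * slb ^ 2 *
        (((slb * nlb - 2) / (slb * nlb)) ^ 4 * t ^ 2 - 16 * t / (slb * nlb - 2))) / 2) := by
  classical
  set x : ℝ := slb * (nlb : ℝ) with hxdef
  set a : ℝ := (x - 2) / x with hadef
  set h : ℝ := a ^ 4 * t ^ 2 - 16 * t / (x - 2) with hhdef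
  set B : ℝ := ((nlb : ℝ) * slb ^ 2 * h) / 2 with hBdef
  have hx2 : 2 < x := hsn
  have hx0 : 0 < x := by linarith
  have hs0 : 0 < s := lt_of_lt_of_le hslb0 hs1
  have hnn : (nlb : ℝ) ≤ (n : ℝ) := by exact_mod_cast hn
  have hn2 : 2 ≤ n := le_trans hnlb hn
  have hnR : (2:ℝ) ≤ (n:ℝ) := by exact_mod_cast hn2
  have hxn : x ≤ (n : ℝ) := by nlinarith
  set y : ℝ := (n : ℝ) * s with hydef
  have hyx : x ≤ y := by nlinarith
  have hy0 : 0 < y := by nlinarith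
  have ha0 : 0 < a := by rw [hadef]; exact div_pos (by linarith) hx0
  have ha1 : a < 1 := by
    rw [hadef, div_lt_one hx0]; linarith
  -- 18 < x and 16 < t * x
  have hkey : 16 * t < a ^ 4 * t ^ 2 * (x - 2) := by
    have h2 : 16 * t / (x - 2) < a ^ 4 * t ^ 2 := by rw [hhdef] at hpos; linarith
    have := (div_lt_iff₀ (by linarith : (0:ℝ) < x - 2)).1 h2
    linarith
  have ha4 : a ^ 4 ≤ 1 := by nlinarith [pow_lt_one₀ ha0.le ha1 (by norm_num : 4 ≠ 0)]
  have htx2 : 16 < t * (x - 2) := by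
    have h1 : a ^ 4 * t ^ 2 * (x - 2) ≤ t ^ 2 * (x - 2) := by nlinarith [mul_nonneg (mul_nonneg (sub_nonneg.2 ha4) (sq_nonneg t)) (le_of_lt (show (0:ℝ) < x - 2 by linarith))]
    have h2 : 16 * t < t ^ 2 * (x - 2) := lt_of_lt_of_le hkey h1
    nlinarith [ht0]
  have h18 : 18 < x := by nlinarith
  have htx : 16 < t * x := by nlinarith
  -- Delta
  set Δ : ℝ := 5 / (2 * y) + 1 / ((n:ℝ) - 1) with hΔdef
  have hn1R : (17:ℝ) < (n:ℝ) - 1 := by linarith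
  have hΔ6x : Δ ≤ 6 / x := by
    have h1 : 5 / (2 * y) ≤ 5 / (2 * x) := by
      apply div_le_div_of_nonneg_left (by norm_num) (by linarith) (by linarith)
    have h2 : 1 / ((n:ℝ) - 1) ≤ 1 / (x - 1) := by
      apply div_le_div_of_nonneg_left (by norm_num) (by linarith) (by linarith)
    have h3 : 5 / (2 * x) + 1 / (x - 1) ≤ 6 / x := by
      rw [div_add_div _ _ (by linarith : (2*x) ≠ 0) (by linarith : (x-1) ≠ 0),
        div_le_div_iff₀ (by nlinarith [mul_pos hx0 (show (0:ℝ) < x - 1 by linarith)]) (by linarith)]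
      nlinarith [mul_pos hx0 (show (0:ℝ) < 5 * x - 7 by linarith)]
    rw [hΔdef]; linarith
  have hΔ38 : Δ ≤ 3 * t / 8 := by
    have : 6 / x ≤ 3 * t / 8 := by
      rw [div_le_div_iff₀ (by linarith) (by norm_num)]
      linarith [htx]
    linarith
  have hΔ0 : 0 < Δ := by
    rw [hΔdef]; positivity
  set τ : ℝ := (t - Δ) * ((2/5) * y) with hτdef
  clear_value x a h B y Δ τ
  have htΔ : 0 < t - Δ := by linarith
  have hτ0 : 0 < τ := by rw [hτdef]; positivity
  -- B bounds
  have hh : h ≤ t ^ 2 := by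
    have h16 : 0 < 16 * t / (x - 2) := by
      apply div_pos (by linarith) (by linarith)
    rw [hhdef]
    nlinarith [mul_nonneg (sub_nonneg.2 ha4) (sq_nonneg t)]
  have hh0 : 0 ≤ h := by rw [hhdef]; linarith [hpos]
  have hsq : slb ^ 2 ≤ s ^ 2 := by nlinarith
  have h1 : (nlb:ℝ) * slb ^ 2 ≤ (n:ℝ) * s ^ 2 :=
    mul_le_mul hnn hsq (by positivity) (by linarith)
  have hBle : B ≤ (n:ℝ) * s ^ 2 * t ^ 2 / 2 := by
    rw [hBdef]
    have h2 : (nlb:ℝ) * slb ^ 2 * h ≤ (n:ℝ) * s ^ 2 * t ^ 2 :=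
      mul_le_mul h1 hh hh0 (by positivity)
    linarith
  -- weights nonneg
  have hwnn : ∀ z : Fin n → Bool, 0 ≤ ∏ j, (if z j then s else 1 - s) := by
    intro z
    apply Finset.prod_nonneg
    intro j _
    split <;> linarith
  have hnne : (n:ℝ) ≠ 0 := by linarith
  set Nc : ℝ := ∑ k, (if c k then (1:ℝ) else 0) with hNcdef
  set dW : Fin n → ℝ := fun j => (if c j then (1:ℝ) else 0) - Nc/(n:ℝ) with hdWdef
  have hdWsum : ∑ j, dW j = 0 := by
    rw [hdWdef]
    rw [Finset.sum_sub_distrib, Finset.sum_const, Finset.card_univ, Fintype.card_fin, ← hNcdef]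
    rw [nsmul_eq_mul]
    field_simp
    ring
  -- the three exceptional events
  set E1 : Finset (Fin n → Bool) := Finset.univ.filter (fun z : Fin n → Bool =>
      (3/5) * y ≤ ∑ j, (fun _ : Fin n => (-1:ℝ)) j * (if z j then (1:ℝ) else 0)
        - s * ∑ j, (fun _ : Fin n => (-1:ℝ)) j) with hE1def
  set E2 : Finset (Fin n → Bool) := Finset.univ.filter (fun z : Fin n → Bool =>
      τ ≤ ∑ j, dW j * (if z j then (1:ℝ) else 0) - s * ∑ j, dW j) with hE2def
  set E3 : Finset (Fin n → Bool) := Finset.univ.filter (fun z : Fin n → Bool =>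
      τ ≤ ∑ j, (fun k => -dW k) j * (if z j then (1:ℝ) else 0)
        - s * ∑ j, (fun k => -dW k) j) with hE3def
  -- inclusion of the bad event
  have hsub : Finset.univ.filter (fun z : Fin n → Bool =>
      ∃ i, t < |chatF n c z i - cbarF n c i|) ⊆ E1 ∪ E2 ∪ E3 := by
    intro z hz
    rw [Finset.mem_filter] at hz
    obtain ⟨-, i, hi⟩ := hz
    by_contra hcon
    simp only [Finset.mem_union, hE1def, hE2def, hE3def, Finset.mem_filter, Finset.mem_univ,
      true_and, not_or, not_le] at hcon
    obtain ⟨⟨h1, h2⟩, h3⟩ := hcon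
    set Mz : ℝ := ∑ j, (if z j then (1:ℝ) else 0) with hMzdef
    set Wz : ℝ := ∑ j, dW j * (if z j then (1:ℝ) else 0) with hWzdef
    have hsneg : ∑ j, (fun _ : Fin n => (-1:ℝ)) j * (if z j then (1:ℝ) else 0) = -Mz := by
      rw [hMzdef, ← Finset.sum_neg_distrib]
      exact Finset.sum_congr rfl (fun j _ => by ring)
    have hsone : ∑ j, (fun _ : Fin n => (-1:ℝ)) j = -(n:ℝ) := by simp
    rw [hsneg, hsone] at h1
    have hWneg : ∑ j, (fun k => -dW k) j * (if z j then (1:ℝ) else 0) = -Wz := by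
      rw [hWzdef, ← Finset.sum_neg_distrib]
      exact Finset.sum_congr rfl (fun j _ => by ring)
    have hWnegsum : ∑ j, (fun k => -dW k) j = 0 := by
      have e1 : ∑ j, (fun k => -dW k) j = -∑ j, dW j := by
        rw [← Finset.sum_neg_distrib]
      rw [e1, hdWsum, neg_zero]
    rw [hdWsum] at h2
    rw [hWneg, hWnegsum] at h3
    simp only [mul_zero, sub_zero] at h2 h3
    clear_value Mz Wz
    have hMzy : (2/5) * y < Mz := by
      have h1' : y - Mz < (3/5) * y := by
        rw [hydef] at h1 ⊢
        linarith only [h1]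
      linarith only [h1']
    have habs : |Wz| < τ := by
      rw [abs_lt]
      constructor
      · linarith only [h3]
      · linarith only [h2]
    have hM8 : (36/5:ℝ) < Mz := by linarith only [hMzy, hyx, h18]
    have hMz0 : 0 < Mz := by linarith only [hM8]
    have hinvM : 1/Mz ≤ 5/(2*y) := by
      rw [div_le_div_iff₀ hMz0 (by linarith only [hy0] : (0:ℝ) < 2*y)]
      linarith only [hMzy, hy0]
    have h5 : t - Δ ≤ t - 1/Mz - 1/((n:ℝ)-1) := by
      rw [hΔdef]
      linarith only [hinvM]
    have h6 : τ ≤ (t - 1/Mz - 1/((n:ℝ)-1)) * Mz := by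
      rw [hτdef]
      calc (t - Δ) * ((2/5) * y) ≤ (t - Δ) * Mz :=
            mul_le_mul_of_nonneg_left (le_of_lt hMzy) (le_of_lt htΔ)
        _ ≤ (t - 1/Mz - 1/((n:ℝ)-1)) * Mz :=
            mul_le_mul_of_nonneg_right h5 (le_of_lt hMz0)
    have hWle : |Wz| ≤ (t - 1/Mz - 1/((n:ℝ)-1)) * Mz := by
      linarith only [le_of_lt habs, h6]
    have hdb := detBound n hn2 c z i t (by rw [← hMzdef]; exact hM8) (by
      have e1 : ∑ j, ((if c j then (1:ℝ) else 0)
            - (∑ k, if c k then (1:ℝ) else 0)/(n:ℝ)) * (if z j then (1:ℝ) else 0) = Wz := by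
        rw [hWzdef, ← hNcdef]
      rw [e1, ← hMzdef]
      exact hWle)
    linarith only [hdb, hi]
  -- bound the sum by the three sums
  have hstep : ∑ z ∈ Finset.univ.filter (fun z : Fin n → Bool =>
        ∃ i, t < |chatF n c z i - cbarF n c i|),
      ∏ j, (if z j then s else 1 - s)
      ≤ (∑ z ∈ E1, ∏ j, (if z j then s else 1 - s))
        + (∑ z ∈ E2, ∏ j, (if z j then s else 1 - s))
        + (∑ z ∈ E3, ∏ j, (if z j then s else 1 - s)) := by
    calc ∑ z ∈ Finset.univ.filter (fun z : Fin n → Bool =>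
        ∃ i, t < |chatF n c z i - cbarF n c i|),
      ∏ j, (if z j then s else 1 - s)
        ≤ ∑ z ∈ E1 ∪ E2 ∪ E3, ∏ j, (if z j then s else 1 - s) :=
          Finset.sum_le_sum_of_subset_of_nonneg hsub (fun z _ _ => hwnn z)
      _ ≤ _ := sum_union3_le E1 E2 E3 _ hwnn
  -- individual bounds
  have hy2 : y^2 = (n:ℝ)^2*s^2 := by rw [hydef]; ring
  have hns0 : 0 ≤ (n:ℝ)*s^2 := by positivity
  have ht2 : t^2 ≤ 1 := by
    have : t * t ≤ 1 := mul_le_one₀ ht1.le ht0.le ht1.le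
    calc t^2 = t*t := sq t
      _ ≤ 1 := this
  have hB2 : B ≤ 18/25*((n:ℝ)*s^2) := by
    have h7 : (n:ℝ)*s^2*t^2 ≤ (n:ℝ)*s^2 := by
      have := mul_le_mul_of_nonneg_left ht2 hns0
      rw [mul_one] at this
      calc (n:ℝ)*s^2*t^2 = (n:ℝ)*s^2*t^2 := rfl
        _ ≤ (n:ℝ)*s^2 := by linarith only [this]
    linarith only [hBle, h7, hns0]
  have hP1 : (∑ z ∈ E1, ∏ j, (if z j then s else 1 - s)) ≤ Real.exp (-B) := by
    have hd1 : (0:ℝ) < ∑ _j : Fin n, ((fun _ : Fin n => (-1:ℝ)) _j) ^ 2 := by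
      simp only [neg_one_sq, Finset.sum_const, Finset.card_univ, Fintype.card_fin,
        nsmul_eq_mul, mul_one]
      linarith only [hnR]
    have hfh := finHoeffding n s hs0.le hs2 (fun _ => (-1:ℝ)) ((3/5)*y)
      (by positivity) hd1
    rw [hE1def]
    refine le_trans hfh (Real.exp_le_exp.2 ?_)
    have hsq1 : ∑ _j : Fin n, ((fun _ : Fin n => (-1:ℝ)) _j) ^ 2 = (n:ℝ) := by simp
    rw [hsq1, neg_le_neg_iff]
    -- B ≤ 2*((3/5)*y)^2/n = 18/25 * n * s^2
    have he : 2*((3/5)*y)^2/(n:ℝ) = 18/25*((n:ℝ)*s^2) := by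
      rw [hydef]
      field_simp
      ring
    rw [he]
    exact hB2
  -- variance bound for the complier deviations
  set V : ℝ := ∑ j, dW j ^ 2 with hVdef
  have hV0 : 0 ≤ V := Finset.sum_nonneg (fun j _ => sq_nonneg _)
  have hNc0 : 0 ≤ Nc := Finset.sum_nonneg (fun j _ => by split <;> norm_num)
  have hVeq : V = Nc - Nc^2/(n:ℝ) := by
    rw [hVdef]
    have e1 : ∀ j : Fin n, dW j ^ 2
        = (if c j then (1:ℝ) else 0) - 2*(Nc/(n:ℝ))*(if c j then (1:ℝ) else 0) + (Nc/(n:ℝ))^2 := by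
      intro j
      rw [hdWdef]
      by_cases hc : c j <;> simp [hc] <;> ring
    rw [Finset.sum_congr rfl (fun j _ => e1 j)]
    rw [Finset.sum_add_distrib, Finset.sum_sub_distrib, ← Finset.mul_sum, ← hNcdef,
      Finset.sum_const, Finset.card_univ, Fintype.card_fin, nsmul_eq_mul]
    field_simp
    ring
  have hVle : V ≤ (n:ℝ)/4 := by
    rw [hVeq, ← sub_nonneg]
    have e : (n:ℝ)/4 - (Nc - Nc^2/(n:ℝ)) = ((n:ℝ) - 2*Nc)^2/(4*(n:ℝ)) := by
      field_simp
      ring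
    rw [e]
    positivity
  have hn0R : (0:ℝ) < (n:ℝ) := by linarith only [hnR]
  have hτge : t*y/4 ≤ τ := by
    have h9 : 0 ≤ 8*(t-Δ) - 5*t := by linarith only [hΔ38]
    have h10 := mul_nonneg hy0.le h9
    rw [hτdef]
    linarith only [h10]
  have hτ2 : (t*y/4)^2 ≤ τ^2 := by
    have h11 := mul_le_mul hτge hτge (by positivity) (le_of_lt hτ0)
    calc (t*y/4)^2 = (t*y/4)*(t*y/4) := sq (t*y/4)
      _ ≤ τ*τ := h11
      _ = τ^2 := (sq τ).symm
  have h8n : B ≤ 2*τ^2/((n:ℝ)/4) := by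
    rw [le_div_iff₀ (by positivity : (0:ℝ) < (n:ℝ)/4)]
    have h10 : B*((n:ℝ)/4) ≤ ((n:ℝ)*s^2*t^2/2)*((n:ℝ)/4) :=
      mul_le_mul_of_nonneg_right hBle (by positivity)
    have h11 : ((n:ℝ)*s^2*t^2/2)*((n:ℝ)/4) = 2*(t*y/4)^2 := by
      rw [hydef]; ring
    linarith only [h10, h11, hτ2]
  have hP2 : (∑ z ∈ E2, ∏ j, (if z j then s else 1 - s)) ≤ Real.exp (-B) := by
    by_cases hVpos : 0 < V
    · have hfh := finHoeffding n s hs0.le hs2 dW τ hτ0.le (by rw [← hVdef]; exact hVpos)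
      rw [hE2def]
      refine le_trans hfh (Real.exp_le_exp.2 ?_)
      rw [neg_le_neg_iff, ← hVdef]
      calc B ≤ 2*τ^2/((n:ℝ)/4) := h8n
        _ ≤ 2*τ^2/V := div_le_div_of_nonneg_left (by positivity) hVpos hVle
    · have hVz : V = 0 := le_antisymm (not_lt.1 hVpos) hV0
      have hdz : ∀ j, dW j = 0 := by
        intro j
        have h12 := (Finset.sum_eq_zero_iff_of_nonneg
          (fun j (_ : j ∈ Finset.univ) => sq_nonneg (dW j))).1 (hVdef ▸ hVz) j (Finset.mem_univ j)
        exact pow_eq_zero_iff (by norm_num : (2:ℕ) ≠ 0) |>.1 h12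
      have hE2empty : E2 = ∅ := by
        rw [hE2def]
        apply Finset.filter_false_of_mem
        intro z _
        simp only [hdz, zero_mul, Finset.sum_const_zero, mul_zero, sub_zero, not_le]
        exact hτ0
      rw [hE2empty, Finset.sum_empty]
      positivity
  have hP3 : (∑ z ∈ E3, ∏ j, (if z j then s else 1 - s)) ≤ Real.exp (-B) := by
    have hd3V : ∑ j, ((fun k => -dW k) j) ^ 2 = V := by
      rw [hVdef]
      exact Finset.sum_congr rfl (fun j _ => by simp)
    by_cases hVpos : 0 < V
    · have hfh := finHoeffding n s hs0.le hs2 (fun k => -dW k) τ hτ0.le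
        (by rw [hd3V]; exact hVpos)
      rw [hE3def]
      refine le_trans hfh (Real.exp_le_exp.2 ?_)
      rw [neg_le_neg_iff, hd3V]
      calc B ≤ 2*τ^2/((n:ℝ)/4) := h8n
        _ ≤ 2*τ^2/V := div_le_div_of_nonneg_left (by positivity) hVpos hVle
    · have hVz : V = 0 := le_antisymm (not_lt.1 hVpos) hV0
      have hdz : ∀ j, dW j = 0 := by
        intro j
        have h12 := (Finset.sum_eq_zero_iff_of_nonneg
          (fun j (_ : j ∈ Finset.univ) => sq_nonneg (dW j))).1 (hVdef ▸ hVz) j (Finset.mem_univ j)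
        exact pow_eq_zero_iff (by norm_num : (2:ℕ) ≠ 0) |>.1 h12
      have hE3empty : E3 = ∅ := by
        rw [hE3def]
        apply Finset.filter_false_of_mem
        intro z _
        simp only [hdz, neg_zero, zero_mul, Finset.sum_const_zero, mul_zero, sub_zero, not_le]
        exact hτ0
      rw [hE3empty, Finset.sum_empty]
      positivity
  calc ∑ z ∈ Finset.univ.filter (fun z : Fin n → Bool =>
        ∃ i, t < |chatF n c z i - cbarF n c i|),
      ∏ j, (if z j then s else 1 - s)
      ≤ (∑ z ∈ E1, ∏ j, (if z j then s else 1 - s))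
        + (∑ z ∈ E2, ∏ j, (if z j then s else 1 - s))
        + (∑ z ∈ E3, ∏ j, (if z j then s else 1 - s)) := hstep
    _ ≤ 3 * Real.exp (-B) := by linarith only [hP1, hP2, hP3]
    _ = _ := by
        congr 1
        congr 1
        rw [hBdef, hhdef, hadef, hxdef]
        ring


-- measurability of singletons in `Fin n → Bool`
lemma measSingleton {n : ℕ} (z : Fin n → Bool) :
    MeasurableSet {z} := by
  have : ({z} : Set (Fin n → Bool)) = ⋂ j, (fun f : Fin n → Bool => f j) ⁻¹' {z j} := by
    ext f
    simp [funext_iff]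
  rw [this]
  exact MeasurableSet.iInter (fun j => (measurable_pi_apply j) (by trivial))

set_option maxHeartbeats 1000000 in
lemma perGroup {Ω : Type*} [MeasurableSpace Ω] (μ : Measure Ω) [IsProbabilityMeasure μ]
    (n nlb : ℕ) (hnlb : 2 ≤ nlb) (hn : nlb ≤ n)
    (𝒮 : Finset ℝ) (h𝒮 : ∀ s ∈ 𝒮, s ∈ Set.Icc (0 : ℝ) 1)
    (S : Ω → ℝ) (hSmeas : Measurable S) (hSval : ∀ ω, S ω ∈ 𝒮)
    (C Z : Ω → Fin n → Bool) (hCmeas : Measurable C) (hZmeas : Measurable Z)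
    (hBern : ∀ s ∈ 𝒮, ∀ c : Fin n → Bool,
      0 < μ {ω | S ω = s ∧ C ω = c} →
      ∀ z : Fin n → Bool,
        (μ[|{ω | S ω = s ∧ C ω = c}] {ω | Z ω = z}).toReal
          = ∏ j, (if z j then s else 1 - s))
    (slb : ℝ) (hslb0 : 0 < slb) (hslb1 : slb ≤ 1) (hsn : 2 < slb * nlb)
    (hSlb : ∀ᵐ ω ∂μ, slb ≤ S ω)
    (t : ℝ) (ht0 : 0 < t) (ht1 : t < 1)
    (hpos : 0 < ((slb * nlb - 2) / (slb * nlb)) ^ 4 * t ^ 2 - 16 * t / (slb * nlb - 2)) :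
    μ {ω | ∃ i, t < |chatF n (C ω) (Z ω) i - cbarF n (C ω) i|}
      ≤ ENNReal.ofReal (3 * Real.exp (-((nlb : ℝ) * slb ^ 2 *
          (((slb * nlb - 2) / (slb * nlb)) ^ 4 * t ^ 2 - 16 * t / (slb * nlb - 2))) / 2)) := by
  classical
  set bd : ℝ := 3 * Real.exp (-((nlb : ℝ) * slb ^ 2 *
      (((slb * nlb - 2) / (slb * nlb)) ^ 4 * t ^ 2 - 16 * t / (slb * nlb - 2))) / 2) with hbddef
  set A : Set Ω := {ω | ∃ i, t < |chatF n (C ω) (Z ω) i - cbarF n (C ω) i|} with hAdef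
  set B : ℝ → (Fin n → Bool) → Set Ω := fun s c => {ω | S ω = s ∧ C ω = c} with hBdef
  have hBmeas : ∀ s c, MeasurableSet (B s c) := by
    intro s c
    have h1 : B s c = S ⁻¹' {s} ∩ C ⁻¹' {c} := by
      ext ω; simp [hBdef, Set.mem_preimage]
    rw [h1]
    exact (hSmeas (measurableSet_singleton s)).inter (hCmeas (measSingleton c))
  -- covering
  have hcover : A ⊆ ⋃ s ∈ 𝒮, ⋃ c : Fin n → Bool, (A ∩ B s c) := by
    intro ω hω
    simp only [Set.mem_iUnion]
    exact ⟨S ω, hSval ω, C ω, hω, rfl, rfl⟩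
  have hstep1 : μ A ≤ ∑ s ∈ 𝒮, ∑ c : Fin n → Bool, μ (A ∩ B s c) := by
    calc μ A ≤ μ (⋃ s ∈ 𝒮, ⋃ c : Fin n → Bool, (A ∩ B s c)) := measure_mono hcover
      _ ≤ ∑ s ∈ 𝒮, μ (⋃ c : Fin n → Bool, (A ∩ B s c)) := measure_biUnion_finset_le _ _
      _ ≤ ∑ s ∈ 𝒮, ∑ c : Fin n → Bool, μ (A ∩ B s c) := by
          apply Finset.sum_le_sum
          intro s _
          calc μ (⋃ c : Fin n → Bool, (A ∩ B s c)) ≤ ∑' c, μ (A ∩ B s c) :=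
                measure_iUnion_le _
            _ = ∑ c : Fin n → Bool, μ (A ∩ B s c) := tsum_fintype _
  -- per-block bound
  have hblock : ∀ s ∈ 𝒮, ∀ c : Fin n → Bool,
      μ (A ∩ B s c) ≤ ENNReal.ofReal bd * μ (B s c) := by
    intro s hs c
    by_cases hμ0 : μ (B s c) = 0
    · calc μ (A ∩ B s c) ≤ μ (B s c) := measure_mono Set.inter_subset_right
        _ = 0 := hμ0
        _ ≤ _ := zero_le
    by_cases hslbs : slb ≤ s
    swap
    · -- s < slb, block is null
      have hnull : μ {ω | ¬ slb ≤ S ω} = 0 := by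
        rw [← ae_iff] at *
        exact hSlb
      have : μ (B s c) = 0 := by
        apply measure_mono_null _ hnull
        intro ω hω
        rw [hBdef] at hω
        simp only [Set.mem_setOf_eq] at *
        rw [hω.1]
        exact hslbs
      exact absurd this hμ0
    · -- main case
      have hpos0 : 0 < μ (B s c) := pos_iff_ne_zero.2 hμ0
      have hs2 : s ≤ 1 := (h𝒮 s hs).2
      set Bad : Finset (Fin n → Bool) := Finset.univ.filter (fun z : Fin n → Bool =>
        ∃ i, t < |chatF n c z i - cbarF n c i|) with hBaddef
      have hAB : A ∩ B s c ⊆ B s c ∩ (Z ⁻¹' ↑Bad) := by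
        intro ω hω
        obtain ⟨hωA, hωB⟩ := hω
        refine ⟨hωB, ?_⟩
        rw [hBdef] at hωB
        obtain ⟨-, hC⟩ := hωB
        rw [hAdef] at hωA
        simp only [Set.mem_setOf_eq] at hωA
        simp only [Set.mem_preimage, Finset.coe_filter, hBaddef, Set.mem_setOf_eq,
          Finset.mem_filter, Finset.mem_univ, true_and, Finset.mem_coe]
        rw [← hC]
        exact hωA
      have hcond : μ (B s c ∩ (Z ⁻¹' ↑Bad)) = μ[|B s c] (Z ⁻¹' ↑Bad) * μ (B s c) :=
        (cond_mul_eq_inter (hBmeas s c) (Z ⁻¹' ↑Bad) μ).symm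
      have : IsProbabilityMeasure (μ[|B s c]) := cond_isProbabilityMeasure hμ0
      -- decompose the conditional probability
      have hdecomp : μ[|B s c] (Z ⁻¹' ↑Bad) = ∑ z ∈ Bad, μ[|B s c] {ω | Z ω = z} := by
        have h1 : (Z ⁻¹' ↑Bad) = ⋃ z ∈ Bad, {ω | Z ω = z} := by
          ext ω
          simp [Set.mem_iUnion]
        rw [h1]
        apply measure_biUnion_finset
        · intro z1 _ z2 _ hne
          simp only [Function.onFun]
          apply Set.disjoint_left.2
          intro ω h1 h2
          simp only [Set.mem_setOf_eq] at h1 h2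
          exact hne (h1 ▸ h2)
        · intro z _
          exact hZmeas (measSingleton z)
      have hcore : (μ[|B s c] (Z ⁻¹' ↑Bad)).toReal ≤ bd := by
        rw [hdecomp, ENNReal.toReal_sum (fun z _ => measure_ne_top _ _)]
        have heq : ∀ z ∈ Bad, (μ[|B s c] {ω | Z ω = z}).toReal
            = ∏ j, (if z j then s else 1 - s) := fun z _ => hBern s hs c hpos0 z
        rw [Finset.sum_congr rfl heq, hbddef]
        exact groupCore n nlb hnlb hn slb s t hslb0 hslb1 hsn ht0 ht1 hpos hslbs hs2 c
      have hfin : μ[|B s c] (Z ⁻¹' ↑Bad) ≤ ENNReal.ofReal bd := by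
        rw [← ENNReal.ofReal_toReal (measure_ne_top (μ[|B s c]) _)]
        exact ENNReal.ofReal_le_ofReal hcore
      calc μ (A ∩ B s c) ≤ μ (B s c ∩ (Z ⁻¹' ↑Bad)) := measure_mono hAB
        _ = μ[|B s c] (Z ⁻¹' ↑Bad) * μ (B s c) := hcond
        _ ≤ ENNReal.ofReal bd * μ (B s c) := mul_le_mul_left hfin _
  -- total mass of blocks
  have hmass : ∑ s ∈ 𝒮, ∑ c : Fin n → Bool, μ (B s c) ≤ 1 := by
    have hinner : ∀ s, ∑ c : Fin n → Bool, μ (B s c) = μ (S ⁻¹' {s}) := by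
      intro s
      rw [← tsum_fintype (L := SummationFilter.unconditional _)]
      rw [← measure_iUnion]
      · congr 1
        ext ω
        simp [hBdef, Set.mem_iUnion]
      · intro c1 c2 hne
        apply Set.disjoint_left.2
        intro ω h1 h2
        rw [hBdef] at h1 h2
        exact hne (h1.2 ▸ h2.2)
      · exact fun c => hBmeas s c
    rw [Finset.sum_congr rfl (fun s _ => hinner s)]
    calc ∑ s ∈ 𝒮, μ (S ⁻¹' {s}) = μ (⋃ s ∈ 𝒮, S ⁻¹' {s}) := by
          rw [measure_biUnion_finset]
          · intro s1 _ s2 _ hne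
            apply Set.disjoint_left.2
            intro ω h1 h2
            simp only [Set.mem_preimage, Set.mem_singleton_iff] at h1 h2
            exact hne (h1 ▸ h2)
          · exact fun s _ => hSmeas (measurableSet_singleton s)
      _ ≤ 1 := prob_le_one
  -- put it together
  calc μ A ≤ ∑ s ∈ 𝒮, ∑ c : Fin n → Bool, μ (A ∩ B s c) := hstep1
    _ ≤ ∑ s ∈ 𝒮, ∑ c : Fin n → Bool, ENNReal.ofReal bd * μ (B s c) := by
        apply Finset.sum_le_sum
        intro s hs
        apply Finset.sum_le_sum
        intro c _
        exact hblock s hs c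
    _ = ENNReal.ofReal bd * ∑ s ∈ 𝒮, ∑ c : Fin n → Bool, μ (B s c) := by
        rw [Finset.mul_sum]
        apply Finset.sum_congr rfl
        intro s _
        rw [Finset.mul_sum]
    _ ≤ ENNReal.ofReal bd * 1 := mul_le_mul_right hmass _
    _ = ENNReal.ofReal bd := mul_one _

end stmt19aux


/-- Union bound over `G` groups: uniform tail bound for the maximal error of the estimated
complier share, `P(max_g max_i |Ĉ_{ig} − C̄_{ig}| > t) ≤ 3 G exp(−n̲ s̲² h*(s̲n̲, t)/2)`
with `h*(x, t) = ((x−2)/x)⁴ t² − 16 t/(x−2)`. -/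
theorem stmt19 {Ω : Type*} [MeasurableSpace Ω] (μ : Measure Ω) [IsProbabilityMeasure μ]
    (G : ℕ) (hG : 1 ≤ G) (nlb : ℕ) (hnlb : 2 ≤ nlb)
    (n : Fin G → ℕ) (hn : ∀ g, nlb ≤ n g)
    (𝒮 : Finset ℝ) (h𝒮 : ∀ s ∈ 𝒮, s ∈ Set.Icc (0 : ℝ) 1)
    (S : Fin G → Ω → ℝ) (hSmeas : ∀ g, Measurable (S g)) (hSval : ∀ g ω, S g ω ∈ 𝒮)
    (C Z : ∀ g : Fin G, Ω → Fin (n g) → Bool)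
    (hCmeas : ∀ g, Measurable (C g)) (hZmeas : ∀ g, Measurable (Z g))
    (hBern : ∀ g, ∀ s ∈ 𝒮, ∀ c : Fin (n g) → Bool,
      0 < μ {ω | S g ω = s ∧ C g ω = c} →
      ∀ z : Fin (n g) → Bool,
        (μ[|{ω | S g ω = s ∧ C g ω = c}] {ω | Z g ω = z}).toReal
          = ∏ j, (if z j then s else 1 - s))
    (slb : ℝ) (hslb0 : 0 < slb) (hslb1 : slb ≤ 1) (hsn : 2 < slb * nlb)
    (hSlb : ∀ g, ∀ᵐ ω ∂μ, slb ≤ S g ω)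
    (Cbar Chat : ∀ g : Fin G, Fin (n g) → Ω → ℝ)
    (hCbar : ∀ g i, Cbar g i = fun ω =>
      (∑ j ∈ Finset.univ.erase i, if C g ω j then (1 : ℝ) else 0) / ((n g : ℝ) - 1))
    (hChat : ∀ g i, Chat g i = fun ω =>
      if 0 < (∑ j ∈ Finset.univ.erase i, if Z g ω j then (1 : ℕ) else 0) then
        (∑ j ∈ Finset.univ.erase i, if C g ω j && Z g ω j then (1 : ℝ) else 0)
          / (∑ j ∈ Finset.univ.erase i, if Z g ω j then (1 : ℝ) else 0)
      else 0) :
    ∀ t : ℝ, 0 < t → t < 1 →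
      μ {ω | ∃ g, ∃ i, t < |Chat g i ω - Cbar g i ω|}
        ≤ ENNReal.ofReal (3 * (G : ℝ) * Real.exp (-((nlb : ℝ) * slb ^ 2 *
            (((slb * nlb - 2) / (slb * nlb)) ^ 4 * t ^ 2 - 16 * t / (slb * nlb - 2))) / 2)) := by
  intro t ht0 ht1
  by_cases hpos : 0 < ((slb * nlb - 2) / (slb * nlb)) ^ 4 * t ^ 2 - 16 * t / (slb * nlb - 2)
  · -- nontrivial case
    have hchat' : ∀ g i ω, Chat g i ω = chatF (n g) (C g ω) (Z g ω) i := by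
      intro g i ω
      rw [hChat g i]
      rfl
    have hcbar' : ∀ g i ω, Cbar g i ω = cbarF (n g) (C g ω) i := by
      intro g i ω
      rw [hCbar g i]
      rfl
    calc μ {ω | ∃ g, ∃ i, t < |Chat g i ω - Cbar g i ω|}
        = μ (⋃ g, {ω | ∃ i, t < |chatF (n g) (C g ω) (Z g ω) i - cbarF (n g) (C g ω) i|}) := by
          congr 1
          ext ω
          simp only [Set.mem_iUnion, Set.mem_setOf_eq, hchat', hcbar']
      _ ≤ ∑' g, μ {ω | ∃ i, t < |chatF (n g) (C g ω) (Z g ω) i - cbarF (n g) (C g ω) i|} :=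
          measure_iUnion_le _
      _ = ∑ g, μ {ω | ∃ i, t < |chatF (n g) (C g ω) (Z g ω) i - cbarF (n g) (C g ω) i|} :=
          tsum_fintype _
      _ ≤ ∑ _g : Fin G, ENNReal.ofReal (3 * Real.exp (-((nlb : ℝ) * slb ^ 2 *
            (((slb * nlb - 2) / (slb * nlb)) ^ 4 * t ^ 2 - 16 * t / (slb * nlb - 2))) / 2)) := by
          apply Finset.sum_le_sum
          intro g _
          exact perGroup μ (n g) nlb hnlb (hn g) 𝒮 h𝒮 (S g) (hSmeas g) (hSval g)
            (C g) (Z g) (hCmeas g) (hZmeas g) (hBern g) slb hslb0 hslb1 hsn (hSlb g)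
            t ht0 ht1 hpos
      _ = (G : ENNReal) * ENNReal.ofReal (3 * Real.exp (-((nlb : ℝ) * slb ^ 2 *
            (((slb * nlb - 2) / (slb * nlb)) ^ 4 * t ^ 2 - 16 * t / (slb * nlb - 2))) / 2)) := by
          rw [Finset.sum_const, Finset.card_univ, Fintype.card_fin, nsmul_eq_mul]
      _ = ENNReal.ofReal (3 * (G : ℝ) * Real.exp (-((nlb : ℝ) * slb ^ 2 *
            (((slb * nlb - 2) / (slb * nlb)) ^ 4 * t ^ 2 - 16 * t / (slb * nlb - 2))) / 2)) := by
          rw [← ENNReal.ofReal_natCast G, ← ENNReal.ofReal_mul (by positivity)]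
          congr 1
          ring
  · -- trivial case: the bound is at least one
    have hG1 : (1:ℝ) ≤ (G:ℝ) := by exact_mod_cast hG
    have harg : 0 ≤ -((nlb : ℝ) * slb ^ 2 *
        (((slb * nlb - 2) / (slb * nlb)) ^ 4 * t ^ 2 - 16 * t / (slb * nlb - 2))) / 2 := by
      have h1 : (nlb : ℝ) * slb ^ 2 *
          (((slb * nlb - 2) / (slb * nlb)) ^ 4 * t ^ 2 - 16 * t / (slb * nlb - 2)) ≤ 0 :=
        mul_nonpos_of_nonneg_of_nonpos (by positivity) (not_lt.1 hpos)
      linarith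
    have hexp : (1:ℝ) ≤ Real.exp (-((nlb : ℝ) * slb ^ 2 *
        (((slb * nlb - 2) / (slb * nlb)) ^ 4 * t ^ 2 - 16 * t / (slb * nlb - 2))) / 2) :=
      Real.one_le_exp harg
    calc μ {ω | ∃ g, ∃ i, t < |Chat g i ω - Cbar g i ω|} ≤ 1 := prob_le_one
      _ ≤ ENNReal.ofReal (3 * (G : ℝ) * Real.exp (-((nlb : ℝ) * slb ^ 2 *
            (((slb * nlb - 2) / (slb * nlb)) ^ 4 * t ^ 2 - 16 * t / (slb * nlb - 2))) / 2)) := by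
          rw [← ENNReal.ofReal_one]
          apply ENNReal.ofReal_le_ofReal
          have h2 := mul_le_mul hG1 hexp zero_le_one (by linarith : (0:ℝ) ≤ (G:ℝ))
          nlinarith [h2]
end
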